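/- arXiv:1709.03888 — 6 statements merged into one kernel-verified Lean document; each statement's English description precedes it below -/
import Mathlib

section
/- Let X be a quasi-median graph, J a hyperplane, and C1, C2 two cliques contained in J. Then either C1 = C2 or C1 ∩ C2 = ∅. -/
variable {V : Type*}

namespace QM

/-- `y` is a gate for `x` in the vertex set `Y`. -/
def IsGate (G : SimpleGraph V) (Y : Set V) (x y : V) : Prop :=
  y ∈ Y ∧ ∀ z ∈ Y, G.dist x z = G.dist x y + G.dist y z

/-- `Y` is gated: every vertex admits a gate in `Y`. -/
def Gated (G : SimpleGraph V) (Y : Set V) : Prop :=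
  ∀ x : V, ∃ y : V, IsGate G Y x y

/-- Triangle condition of weak modularity. -/
def TriangleCondition (G : SimpleGraph V) : Prop :=
  ∀ u v w : V, G.Adj v w → G.dist u v = G.dist u w →
    ∃ x : V, G.Adj v x ∧ G.Adj w x ∧ G.dist u x + 1 = G.dist u v

/-- Quadrangle condition of weak modularity. -/
def QuadrangleCondition (G : SimpleGraph V) : Prop :=
  ∀ u z v w : V, G.Adj z v → G.Adj z w → v ≠ w →
    G.dist u v + 1 = G.dist u z → G.dist u w + 1 = G.dist u z →
      ∃ x : V, G.Adj v x ∧ G.Adj w x ∧ G.dist u x + 2 = G.dist u z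

/-- No induced `K₄` minus an edge. -/
def NoK4Minus (G : SimpleGraph V) : Prop :=
  ¬ ∃ a b c d : V, a ≠ b ∧ G.Adj c d ∧ G.Adj a c ∧ G.Adj a d ∧ G.Adj b c ∧ G.Adj b d ∧
    ¬ G.Adj a b

/-- No induced `K_{3,2}`. -/
def NoK32 (G : SimpleGraph V) : Prop :=
  ¬ ∃ a b c d e : V, a ≠ b ∧ a ≠ c ∧ b ≠ c ∧ d ≠ e ∧
    G.Adj a d ∧ G.Adj a e ∧ G.Adj b d ∧ G.Adj b e ∧ G.Adj c d ∧ G.Adj c e ∧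
    ¬ G.Adj a b ∧ ¬ G.Adj a c ∧ ¬ G.Adj b c ∧ ¬ G.Adj d e

/-- Quasi-median graph: weakly modular, no induced `K₄⁻`, no induced `K_{3,2}`. -/
def QuasiMedian (G : SimpleGraph V) : Prop :=
  TriangleCondition G ∧ QuadrangleCondition G ∧ NoK4Minus G ∧ NoK32 G

/-- A clique: a maximal complete subgraph, given by its (nonempty) vertex set. -/
def IsMaxClique (G : SimpleGraph V) (C : Set V) : Prop :=
  G.IsClique C ∧ ∀ D : Set V, G.IsClique D → C ⊆ D → C = D

/-- All endpoints of the edge `e` lie in `C`. -/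
def EdgeOf (C : Set V) (e : Sym2 V) : Prop := ∀ v ∈ e, v ∈ C

/-- Two edges lie in a common (maximal) clique. -/
def SameClique (G : SimpleGraph V) (e f : Sym2 V) : Prop :=
  ∃ C : Set V, IsMaxClique G C ∧ EdgeOf C e ∧ EdgeOf C f

/-- Two edges are opposite sides of an induced square. -/
def OppSquare (G : SimpleGraph V) (e f : Sym2 V) : Prop :=
  ∃ a b c d : V, e = s(a, b) ∧ f = s(c, d) ∧ G.Adj a b ∧ G.Adj c d ∧
    G.Adj a c ∧ G.Adj b d ∧ ¬ G.Adj a d ∧ ¬ G.Adj b c ∧ a ≠ d ∧ b ≠ c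

/-- The equivalence relation on edges generated by "being in a common clique or
opposite sides of a square"; its classes are the hyperplanes. -/
def HypRel (G : SimpleGraph V) : Sym2 V → Sym2 V → Prop :=
  Relation.EqvGen fun e f =>
    e ∈ G.edgeSet ∧ f ∈ G.edgeSet ∧ (SameClique G e f ∨ OppSquare G e f)

/-- `J` is a hyperplane of `G`: the class of some edge under `HypRel`. -/
def IsHyperplane (G : SimpleGraph V) (J : Set (Sym2 V)) : Prop :=
  ∃ e ∈ G.edgeSet, J = {f | f ∈ G.edgeSet ∧ HypRel G e f}

/-- The clique `C` is contained in the hyperplane `J` (all of its edges belong to `J`;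
such a clique carries at least one edge). -/
def CliqueIn (G : SimpleGraph V) (J : Set (Sym2 V)) (C : Set V) : Prop :=
  IsMaxClique G C ∧ (∃ a b : V, a ∈ C ∧ b ∈ C ∧ a ≠ b) ∧
    ∀ a ∈ C, ∀ b ∈ C, a ≠ b → s(a, b) ∈ J

/-- The hyperplane `J` separates `a` from `b`: every walk from `a` to `b` uses an edge
of `J`. -/
def Separates (G : SimpleGraph V) (J : Set (Sym2 V)) (a b : V) : Prop :=
  ∀ p : G.Walk a b, ∃ e ∈ p.edges, e ∈ J

end QM

section Aux

open QM

variable {G : SimpleGraph V}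

private lemma dadj (hconn : G.Connected) {x y : V} (h : G.Adj x y) : G.dist x y = 1 :=
  SimpleGraph.dist_eq_one_iff_adj.mpr h

private lemma dtri (hconn : G.Connected) (x y z : V) :
    G.dist x z ≤ G.dist x y + G.dist y z :=
  hconn.dist_triangle

private lemma dle (hconn : G.Connected) (x : V) {y z : V} (h : G.Adj y z) :
    G.dist x z ≤ G.dist x y + 1 := by
  have := dtri hconn x y z
  rwa [dadj hconn h] at this

private lemma dzero (hconn : G.Connected) {x y : V} (h : G.dist x y = 0) : x = y :=
  (hconn.dist_eq_zero_iff).mp h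

private lemma dcomm (x y : V) : G.dist x y = G.dist y x := SimpleGraph.dist_comm

variable {C : Set V} {p : V → V}

private lemma gate_self (hconn : G.Connected) (hC : IsMaxClique G C)
    (hpC : ∀ x, p x ∈ C) (hpd : ∀ x, ∀ z ∈ C, G.dist x z = G.dist x (p x) + G.dist (p x) z)
    {x : V} (hx : x ∈ C) : p x = x := by
  have h := hpd x x hx
  rw [SimpleGraph.dist_self] at h
  exact (dzero hconn (show G.dist x (p x) = 0 by omega)).symm

private lemma gate_dist (hconn : G.Connected) (hC : IsMaxClique G C) (hpC : ∀ x, p x ∈ C)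
    {x y : V} (h : p x ≠ p y) : G.dist (p x) (p y) = 1 :=
  dadj hconn (hC.1 (hpC x) (hpC y) h)

private lemma adj_gate_eq (hconn : G.Connected) (hC : IsMaxClique G C)
    (hpC : ∀ x, p x ∈ C) (hpd : ∀ x, ∀ z ∈ C, G.dist x z = G.dist x (p x) + G.dist (p x) z)
    {x y : V} (hxy : G.Adj x y) (h : p x ≠ p y) :
    G.dist x (p x) = G.dist y (p y) := by
  have h1 : G.dist x (p y) = G.dist x (p x) + 1 := by
    rw [hpd x (p y) (hpC y), gate_dist hconn hC hpC h]
  have h2 : G.dist x (p y) ≤ G.dist x y + G.dist y (p y) := dtri hconn _ _ _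
  have h3 : G.dist y (p x) = G.dist y (p y) + 1 := by
    rw [hpd y (p x) (hpC x), gate_dist hconn hC hpC h.symm]
  have h4 : G.dist y (p x) ≤ G.dist y x + G.dist x (p x) := dtri hconn _ _ _
  rw [dadj hconn hxy] at h2
  rw [dadj hconn hxy.symm] at h4
  omega

/-- Triangle lemma: in a triangle, if two vertices have distinct gates then the third
vertex has a gate distinct from each of them. -/
private lemma tri (hqm : QuasiMedian G) (hconn : G.Connected) (hC : IsMaxClique G C)
    (hpC : ∀ x, p x ∈ C) (hpd : ∀ x, ∀ z ∈ C, G.dist x z = G.dist x (p x) + G.dist (p x) z)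
    {x y u : V} (hxy : G.Adj x y) (hxu : G.Adj x u) (hyu : G.Adj y u)
    (hne : p x ≠ p y) : p u ≠ p x := by
  intro hux
  set k := G.dist x (p x) with hk
  have hky : G.dist y (p y) = k := (adj_gate_eq hconn hC hpC hpd hxy hne).symm
  have hypx : G.dist y (p x) = k + 1 := by
    rw [hpd y (p x) (hpC x), gate_dist hconn hC hpC hne.symm, hky]
  have hupx : G.dist u (p x) = G.dist u (p u) := by rw [← hux]
  have hm1 : G.dist y (p x) ≤ G.dist y u + G.dist u (p x) := dtri hconn _ _ _
  rw [dadj hconn hyu] at hm1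
  have hupy : G.dist u (p y) = G.dist u (p u) + 1 := by
    rw [hpd u (p y) (hpC y), hux, gate_dist hconn hC hpC hne]
  have hm2 : G.dist u (p y) ≤ G.dist u y + G.dist y (p y) := dtri hconn _ _ _
  rw [dadj hconn hyu.symm, hky] at hm2
  have hmk : G.dist u (p u) = k := by omega
  have hk1 : 1 ≤ k := by
    by_contra hk0
    have hxx : x = p x := dzero hconn (by omega)
    have hux' : u = p u := dzero hconn (by omega)
    exact hxu.ne (by rw [hxx, hux', hux])
  obtain ⟨t, hyt, hzt, ht⟩ := hqm.1 (p x) x u hxu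
    (by rw [dcomm (p x) x, dcomm (p x) u, ← hk, hupx, hmk])
  rw [dcomm (p x) x, ← hk] at ht
  have hpxy : G.dist (p x) y = k + 1 := by rw [dcomm (p x) y]; exact hypx
  have hynt : ¬ G.Adj y t := by
    intro h
    have := dle hconn (p x) h.symm
    omega
  have hyne : y ≠ t := by
    intro h
    rw [← h] at ht
    omega
  exact hqm.2.2.1 ⟨y, t, x, u, hyne, hxu, hxy.symm, hyu, hyt.symm, hzt.symm, hynt⟩

/-- Square lemma, special case: the common gate of `c, d` equals the gate of `a`. -/
private lemma sqII (hqm : QuasiMedian G) (hconn : G.Connected) (hC : IsMaxClique G C)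
    (hpC : ∀ x, p x ∈ C) (hpd : ∀ x, ∀ z ∈ C, G.dist x z = G.dist x (p x) + G.dist (p x) z)
    {a b c d : V}
    (hab : G.Adj a b) (hcd : G.Adj c d) (hac : G.Adj a c) (hbd : G.Adj b d)
    (had : ¬ G.Adj a d) (hbc : ¬ G.Adj b c) (hadne : a ≠ d) (hbcne : b ≠ c)
    (hpab : p a ≠ p b) (hc : p c = p a) (hd : p d = p a) : False := by
  set k := G.dist a (p a) with hk
  have hkb : G.dist b (p b) = k := (adj_gate_eq hconn hC hpC hpd hab hpab).symm
  have dqa : G.dist (p a) a = k := by rw [dcomm (p a) a]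
  have dqb : G.dist (p a) b = k + 1 := by
    rw [dcomm (p a) b, hpd b (p a) (hpC a), gate_dist hconn hC hpC hpab.symm, hkb]
  have ddpd : G.dist d (p d) = G.dist (p a) d := by rw [hd, dcomm d (p a)]
  have hdup : G.dist d (p b) = G.dist (p a) d + 1 := by
    rw [hpd d (p b) (hpC b), hd, gate_dist hconn hC hpC hpab, ← ddpd, hd]
  have hdup2 : G.dist d (p b) ≤ 1 + k := by
    have := dtri hconn d b (p b)
    rw [dadj hconn hbd.symm, hkb] at this
    omega
  have hdlow : G.dist (p a) b ≤ G.dist (p a) d + 1 := dle hconn (p a) hbd.symm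
  have dqd : G.dist (p a) d = k := by omega
  obtain ⟨x, hax, hdx, hx⟩ := hqm.2.1 (p a) b a d hab.symm hbd hadne (by omega) (by omega)
  rw [dqb] at hx
  have hk1 : 1 ≤ k := by omega
  have hxk : G.dist (p a) x + 1 = k := by omega
  by_cases hcx : G.Adj c x
  · exact hqm.2.2.1 ⟨a, d, c, x, hadne, hcx, hac, hax, hcd.symm, hdx, had⟩
  by_cases hcxe : c = x
  · -- c = x : use the quadrangle condition based at p b and find a K_{3,2}
    subst hcxe
    have dpbc : G.dist (p b) c = k := by
      rw [dcomm (p b) c, hpd c (p b) (hpC b), hc, gate_dist hconn hC hpC hpab,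
        dcomm c (p a)]
      omega
    have dpba : G.dist (p b) a = k + 1 := by
      rw [dcomm (p b) a, hpd a (p b) (hpC b), gate_dist hconn hC hpC hpab, ← hk]
    have dpbb : G.dist (p b) b = k := by rw [dcomm (p b) b, hkb]
    have dpbd : G.dist (p b) d = k + 1 := by
      rw [dcomm (p b) d]
      omega
    obtain ⟨y, hby, hcy, hy⟩ := hqm.2.1 (p b) a b c hab hac hbcne (by omega) (by omega)
    rw [dpba] at hy
    have hay : ¬ G.Adj a y := by
      intro h
      have := dle hconn (p b) h.symm
      omega
    have hayne : a ≠ y := by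
      intro h; rw [← h] at hy; omega
    have hdy : ¬ G.Adj d y := by
      intro h
      have := dle hconn (p b) h.symm
      omega
    have hdyne : d ≠ y := by
      intro h; rw [← h] at hy; omega
    exact hqm.2.2.2 ⟨a, d, y, b, c, hadne, hayne, hdyne, hbcne,
      hab, hac, hbd.symm, hcd.symm, hby.symm, hcy.symm, had, hay, hdy, hbc⟩
  · -- c ≠ x, ¬ Adj c x : K_{3,2} on b, c, x / a, d
    have hbx : ¬ G.Adj b x := by
      intro h
      have := dle hconn (p a) h.symm
      omega
    have hbxne : b ≠ x := by
      intro h; rw [← h] at hxk; omega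
    exact hqm.2.2.2 ⟨b, c, x, a, d, hbcne, hbxne, hcxe, hadne,
      hab.symm, hbd, hac.symm, hcd, hax.symm, hdx.symm, hbc, hbx, hcx, had⟩

/-- Square lemma: if the gates of `a, b` are distinct, the gates of the opposite
edge `c, d` are distinct as well. -/
private lemma sqLem (hqm : QuasiMedian G) (hconn : G.Connected) (hC : IsMaxClique G C)
    (hpC : ∀ x, p x ∈ C) (hpd : ∀ x, ∀ z ∈ C, G.dist x z = G.dist x (p x) + G.dist (p x) z)
    {a b c d : V}
    (hab : G.Adj a b) (hcd : G.Adj c d) (hac : G.Adj a c) (hbd : G.Adj b d)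
    (had : ¬ G.Adj a d) (hbc : ¬ G.Adj b c) (hadne : a ≠ d) (hbcne : b ≠ c)
    (hpab : p a ≠ p b) (hcdq : p c = p d) : False := by
  by_cases h1 : p c = p a
  · exact sqII hqm hconn hC hpC hpd hab hcd hac hbd had hbc hadne hbcne hpab h1
      (hcdq.symm.trans h1)
  by_cases h2 : p c = p b
  · exact sqII hqm hconn hC hpC hpd hab.symm hcd.symm hbd hac hbc had hbcne hadne
      hpab.symm (hcdq.symm.trans h2) h2
  · -- p c ∉ {p a, p b} : build an auxiliary square closer to C and use `sqII`
    set k := G.dist a (p a) with hk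
    have hkb : G.dist b (p b) = k := (adj_gate_eq hconn hC hpC hpd hab hpab).symm
    have dqa : G.dist (p c) a = k + 1 := by
      rw [dcomm (p c) a, hpd a (p c) (hpC c), ← hk,
        gate_dist hconn hC hpC (fun h => h1 h.symm)]
    have dqb : G.dist (p c) b = k + 1 := by
      rw [dcomm (p c) b, hpd b (p c) (hpC c), hkb,
        gate_dist hconn hC hpC (fun h => h2 h.symm)]
    obtain ⟨t, hat, hbt, htd⟩ := hqm.1 (p c) a b hab (dqa.trans dqb.symm)
    rw [dqa] at htd
    have dqt : G.dist (p c) t = k := by omega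
    have hta : p t ≠ p a := tri hqm hconn hC hpC hpd hab hat hbt hpab
    have htb : p t ≠ p b := tri hqm hconn hC hpC hpd hab.symm hbt hat hpab.symm
    have htk : G.dist t (p t) = k := (adj_gate_eq hconn hC hpC hpd hat hta.symm).symm
    have hptq : p t = p c := by
      have h := hpd t (p c) (hpC c)
      rw [dcomm t (p c), dqt, htk] at h
      exact dzero hconn (by omega)
    have hga : G.dist (p c) a ≤ G.dist (p c) c + 1 := dle hconn (p c) hac.symm
    have hgc : G.dist (p c) c ≤ k := by
      have h := hpd c (p a) (hpC a)
      rw [gate_dist hconn hC hpC h1] at h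
      have h2' := dtri hconn c a (p a)
      rw [dadj hconn hac.symm, ← hk] at h2'
      rw [dcomm (p c) c]
      omega
    have dqc : G.dist (p c) c = k := by omega
    have hct : c ≠ t := by
      intro h; apply hbc; rw [h]; exact hbt
    obtain ⟨x, hcx, htx, hx⟩ := hqm.2.1 (p c) a c t hac hat hct (by omega) (by omega)
    rw [dqa] at hx
    have hk1 : 1 ≤ k := by omega
    have hxk : G.dist (p c) x + 1 = k := by omega
    have hax : ¬ G.Adj a x := by
      intro h
      have := dle hconn (p c) h.symm
      omega
    have haxne : a ≠ x := by
      intro h; rw [← h] at hxk; omega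
    have hcnt : ¬ G.Adj c t := by
      intro h
      exact (tri hqm hconn hC hpC hpd hat.symm h.symm hac hta) hptq.symm
    have hpx : p x = p c := by
      by_contra hne'
      have h' : p t ≠ p x := fun h => hne' (h ▸ hptq)
      have := (adj_gate_eq hconn hC hpC hpd htx h').symm
      rw [htk] at this
      have h2' := hpd x (p c) (hpC c)
      rw [dcomm x (p c), this] at h2'
      omega
    exact sqII hqm hconn hC hpC hpd hac.symm htx.symm hcx hat hcnt hax hct haxne
      h1 hpx hptq

/-- The invariant predicate: the two endpoints of `e` have distinct gates in `C`. -/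
private def Phi (p : V → V) (e : Sym2 V) : Prop := ∃ x y, e = s(x, y) ∧ p x ≠ p y

private lemma phi_mk {p : V → V} {x y : V} : Phi p s(x, y) ↔ p x ≠ p y := by
  constructor
  · rintro ⟨u, w, he, hne⟩
    rw [Sym2.eq_iff] at he
    rcases he with ⟨rfl, rfl⟩ | ⟨rfl, rfl⟩
    · exact hne
    · exact hne.symm
  · intro h; exact ⟨x, y, rfl, h⟩

/-- Gates of distinct vertices of a common clique are pairwise distinct, provided one
pair is. -/
private lemma cliquePair (hqm : QuasiMedian G) (hconn : G.Connected) (hC : IsMaxClique G C)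
    (hpC : ∀ x, p x ∈ C) (hpd : ∀ x, ∀ z ∈ C, G.dist x z = G.dist x (p x) + G.dist (p x) z)
    {D : Set V} (hD : IsMaxClique G D) {x y u w : V}
    (hx : x ∈ D) (hy : y ∈ D) (hu : u ∈ D) (hw : w ∈ D)
    (hxy : x ≠ y) (huw : u ≠ w) (h : p x ≠ p y) : p u ≠ p w := by
  have adjD : ∀ {s t : V}, s ∈ D → t ∈ D → s ≠ t → G.Adj s t := fun hs ht hne =>
    hD.1 hs ht hne
  have H : ∀ s t r : V, s ∈ D → t ∈ D → r ∈ D → s ≠ t → r ≠ s → r ≠ t →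
      p s ≠ p t → p r ≠ p s := fun s t r hs ht hr hst hrs hrt hne =>
    tri hqm hconn hC hpC hpd (adjD hs ht hst) (adjD hs hr hrs.symm) (adjD ht hr hrt.symm) hne
  by_cases hux : u = x
  · by_cases hwy : w = y
    · rw [hux, hwy]; exact h
    · have hwx : w ≠ x := fun h' => huw (hux.trans h'.symm)
      rw [hux]
      exact (H x y w hx hy hw hxy hwx hwy h).symm
  by_cases huy : u = y
  · by_cases hwx : w = x
    · rw [huy, hwx]; exact h.symm
    · have hwy : w ≠ y := fun h' => huw (huy.trans h'.symm)
      rw [huy]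
      exact (H y x w hy hx hw hxy.symm hwy hwx h.symm).symm
  · have hu1 : p u ≠ p x := H x y u hx hy hu hxy hux huy h
    by_cases hwx : w = x
    · rw [hwx]; exact hu1
    by_cases hwy : w = y
    · rw [hwy]; exact H y x u hy hx hu hxy.symm huy hux h.symm
    · have hwu : w ≠ u := fun h' => huw h'.symm
      exact (H u x w hu hx hw hux hwu hwx hu1).symm

private lemma step (hqm : QuasiMedian G) (hconn : G.Connected) (hC : IsMaxClique G C)
    (hpC : ∀ x, p x ∈ C) (hpd : ∀ x, ∀ z ∈ C, G.dist x z = G.dist x (p x) + G.dist (p x) z)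
    {e f : Sym2 V} (he : e ∈ G.edgeSet) (hf : f ∈ G.edgeSet)
    (h : SameClique G e f ∨ OppSquare G e f) : Phi p e ↔ Phi p f := by
  rcases h with ⟨D, hD, heD, hfD⟩ | ⟨a, b, c, d, rfl, rfl, hab, hcd, hac, hbd, had, hbc,
      hadne, hbcne⟩
  · obtain ⟨x, y, rfl⟩ : ∃ x y, e = s(x, y) := Sym2.ind (fun x y => ⟨x, y, rfl⟩) e
    obtain ⟨u, w, rfl⟩ : ∃ u w, f = s(u, w) := Sym2.ind (fun u w => ⟨u, w, rfl⟩) f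
    have hxy : G.Adj x y := he
    have huw : G.Adj u w := hf
    have hx : x ∈ D := heD x (Sym2.mem_iff.mpr (Or.inl rfl))
    have hy : y ∈ D := heD y (Sym2.mem_iff.mpr (Or.inr rfl))
    have hu : u ∈ D := hfD u (Sym2.mem_iff.mpr (Or.inl rfl))
    have hw : w ∈ D := hfD w (Sym2.mem_iff.mpr (Or.inr rfl))
    rw [phi_mk, phi_mk]
    constructor
    · exact fun h => cliquePair hqm hconn hC hpC hpd hD hx hy hu hw hxy.ne huw.ne h
    · exact fun h => cliquePair hqm hconn hC hpC hpd hD hu hw hx hy huw.ne hxy.ne h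
  · rw [phi_mk, phi_mk]
    constructor
    · intro h
      intro hcd'
      exact sqLem hqm hconn hC hpC hpd hab hcd hac hbd had hbc hadne hbcne h hcd'
    · intro h
      intro hab'
      exact sqLem hqm hconn hC hpC hpd hcd hab hac.symm hbd.symm
        (fun h' => hbc h'.symm) (fun h' => had h'.symm)
        (fun h' => hbcne h'.symm) (fun h' => hadne h'.symm) h hab'

private lemma hyprel_phi (hqm : QuasiMedian G) (hconn : G.Connected) (hC : IsMaxClique G C)
    (hpC : ∀ x, p x ∈ C) (hpd : ∀ x, ∀ z ∈ C, G.dist x z = G.dist x (p x) + G.dist (p x) z)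
    {e f : Sym2 V} (h : HypRel G e f) : Phi p e ↔ Phi p f := by
  induction h with
  | rel x y h => exact step hqm hconn hC hpC hpd h.1 h.2.1 h.2.2
  | refl x => exact Iff.rfl
  | symm x y _ ih => exact ih.symm
  | trans x y z _ _ ih1 ih2 => exact ih1.trans ih2

/-- Maximal cliques are gated. -/
private lemma clique_gated (hqm : QuasiMedian G) (hconn : G.Connected)
    {C : Set V} (hC : IsMaxClique G C) (hne : C.Nonempty) : Gated G C := by
  intro x
  have hS : {n | ∃ y ∈ C, G.dist x y = n}.Nonempty := by
    obtain ⟨y₀, hy₀⟩ := hne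
    exact ⟨G.dist x y₀, y₀, hy₀, rfl⟩
  obtain ⟨y, hyC, hy⟩ := Nat.sInf_mem hS
  have hmin : ∀ z ∈ C, G.dist x y ≤ G.dist x z := fun z hz => by
    rw [hy]; exact Nat.sInf_le ⟨z, hz, rfl⟩
  refine ⟨y, hyC, fun z hz => ?_⟩
  by_cases hzy : z = y
  · subst hzy; simp [SimpleGraph.dist_self]
  have hadj : G.Adj y z := hC.1 hyC hz (fun h => hzy h.symm)
  have h1 : G.dist x z ≤ G.dist x y + 1 := dle hconn x hadj
  have h2 : G.dist x y ≤ G.dist x z := hmin z hz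
  rw [dadj hconn hadj]
  by_cases heq : G.dist x z = G.dist x y
  · exfalso
    obtain ⟨t, hyt, hzt, ht⟩ := hqm.1 x y z hadj heq.symm
    have htC : t ∉ C := by
      intro hmem
      have := hmin t hmem
      omega
    have key : ∀ v ∈ C, v ≠ t → G.Adj t v := by
      intro v hv hvt
      by_cases hvy : v = y
      · subst hvy; exact hyt.symm
      by_cases hvz : v = z
      · subst hvz; exact hzt.symm
      by_contra hnadj
      exact hqm.2.2.1 ⟨t, v, y, z, fun h => htC (h ▸ hv), hadj, hyt.symm, hzt.symm,
        hC.1 hv hyC hvy, hC.1 hv hz hvz, hnadj⟩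
    have hclique : G.IsClique (insert t C) := by
      intro u hu v hv huv
      rcases hu with rfl | hu <;> rcases hv with rfl | hv
      · exact absurd rfl huv
      · exact key v hv (fun h => huv h.symm)
      · exact (key u hu (fun h => huv h)).symm
      · exact hC.1 hu hv huv
    have := hC.2 (insert t C) hclique (Set.subset_insert t C)
    exact htC (this ▸ Set.mem_insert t C)
  · omega

end Aux

open QM in
/-- two cliques contained in the same hyperplane of a quasi-median graph
are either equal or disjoint. -/
theorem cliques_in_hyperplane_eq_or_disjoint
    (G : SimpleGraph V) (hqm : QuasiMedian G) (hconn : G.Connected)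
    (J : Set (Sym2 V)) (hJ : IsHyperplane G J)
    (C₁ C₂ : Set V) (h₁ : CliqueIn G J C₁) (h₂ : CliqueIn G J C₂) :
    C₁ = C₂ ∨ C₁ ∩ C₂ = ∅ := by
  by_cases hdisj : C₁ ∩ C₂ = ∅
  · exact Or.inr hdisj
  left
  obtain ⟨v, hv₁, hv₂⟩ := Set.nonempty_iff_ne_empty.mpr hdisj
  obtain ⟨a₁, b₁, ha₁, hb₁, hne₁⟩ := h₁.2.1
  -- gate map onto C₁
  obtain ⟨p, hp⟩ := Classical.axiomOfChoice (clique_gated hqm hconn h₁.1 ⟨a₁, ha₁⟩)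
  have hpC : ∀ x, p x ∈ C₁ := fun x => (hp x).1
  have hpd : ∀ x, ∀ z ∈ C₁, G.dist x z = G.dist x (p x) + G.dist (p x) z :=
    fun x z hz => (hp x).2 z hz
  obtain ⟨e₀, he₀, rfl⟩ := hJ
  have hJe1 := h₁.2.2 a₁ ha₁ b₁ hb₁ hne₁
  -- every vertex of C₂ lies in C₁
  have hsub : C₂ ⊆ C₁ := by
    intro b hb
    by_cases hbv : b = v
    · exact hbv ▸ hv₁
    have hJf := h₂.2.2 v hv₂ b hb (fun h => hbv h.symm)
    have hchain : HypRel G s(a₁, b₁) s(v, b) :=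
      Relation.EqvGen.trans _ _ _ (Relation.EqvGen.symm _ _ hJe1.2) hJf.2
    have hphi1 : Phi p s(a₁, b₁) := phi_mk.mpr (by
      rw [gate_self hconn h₁.1 hpC hpd ha₁, gate_self hconn h₁.1 hpC hpd hb₁]
      exact hne₁)
    have hphi2 : p v ≠ p b :=
      phi_mk.mp ((hyprel_phi hqm hconn h₁.1 hpC hpd hchain).mp hphi1)
    rw [gate_self hconn h₁.1 hpC hpd hv₁] at hphi2
    have hadj : G.Adj b v := h₂.1.1 hb hv₂ hbv
    have hgate := hpd b v hv₁
    rw [dadj hconn hadj] at hgate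
    have hne0 : G.dist (p b) v ≠ 0 := fun h => hphi2 (dzero hconn h).symm
    have hb0 : G.dist b (p b) = 0 := by omega
    have : b = p b := dzero hconn hb0
    exact this ▸ hpC b
  exact h₂.1.2 C₁ h₁.1.1 hsub |>.symm
end

section
/- Let X be a quasi-median graph, C1 and C2 two distinct cliques contained in the same hyperplane, and a1 ∈ C1, a2 ∈ C2 two adjacent vertices. Then for every vertex b1 ∈ C1 distinct from a1, there exists b2 ∈ C2 such that a1, a2, b2, b1 span an induced 4-cycle (square). -/
variable {V : Type*}

section Aux
open QM SimpleGraph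

variable {G : SimpleGraph V} {C : Set V}

private lemma dist1 {a b : V} (h : G.Adj a b) : G.dist a b = 1 :=
  SimpleGraph.dist_eq_one_iff_adj.mpr h

private lemma gate_self_s6 {x : V} (hx : x ∈ C) : IsGate G C x x :=
  ⟨hx, fun z _ => by simp [SimpleGraph.dist_self]⟩

private lemma gate_unique (hconn : G.Connected) {x y y' : V}
    (h1 : IsGate G C x y) (h2 : IsGate G C x y') : y = y' := by
  have a := h1.2 y' h2.1
  have b := h2.2 y h1.1
  have c : G.dist y' y = G.dist y y' := G.dist_comm
  have : G.dist y y' = 0 := by omega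
  exact hconn.dist_eq_zero_iff.mp this

private lemma cliques_gated (hconn : G.Connected) (htri : TriangleCondition G)
    (hk4 : NoK4Minus G) (hC : IsMaxClique G C) (hne : C.Nonempty) : Gated G C := by
  intro x
  obtain ⟨c0, hc0⟩ := hne
  have hS : {n | ∃ y ∈ C, G.dist x y = n}.Nonempty := ⟨_, c0, hc0, rfl⟩
  obtain ⟨y, hyC, hy⟩ : ∃ y ∈ C, G.dist x y = sInf {n | ∃ y ∈ C, G.dist x y = n} :=
    Nat.sInf_mem hS
  refine ⟨y, hyC, fun z hz => ?_⟩
  rcases eq_or_ne z y with rfl | hzy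
  · simp [SimpleGraph.dist_self]
  have hmin : ∀ w ∈ C, G.dist x y ≤ G.dist x w := fun w hw => by
    rw [hy]; exact Nat.sInf_le ⟨w, hw, rfl⟩
  have hadj : G.Adj y z := hC.1 hyC hz (Ne.symm hzy)
  have h1 : G.dist y z = 1 := dist1 hadj
  have hle : G.dist x z ≤ G.dist x y + G.dist y z := hconn.dist_triangle
  have hge : G.dist x y ≤ G.dist x z := hmin z hz
  rcases Nat.lt_or_ge (G.dist x z) (G.dist x y + 1) with hlt | hgee
  · exfalso
    have heq : G.dist x y = G.dist x z := by omega
    obtain ⟨t, hty, htz, htd⟩ := htri x y z hadj heq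
    have htC : t ∉ C := fun htC => by have := hmin t htC; omega
    have hall : ∀ c ∈ C, G.Adj t c := by
      intro c hcC
      rcases eq_or_ne c y with rfl | hcy
      · exact hty.symm
      rcases eq_or_ne c z with rfl | hcz
      · exact htz.symm
      by_contra hnc
      exact hk4 ⟨t, c, y, z, fun h => htC (h ▸ hcC), hadj, hty.symm, htz.symm,
        hC.1 hcC hyC hcy, hC.1 hcC hz hcz, hnc⟩
    have hclique : G.IsClique (insert t C) := by
      rw [SimpleGraph.isClique_iff, (haveI := G.symm; Set.pairwise_insert_of_symm)]
      exact ⟨hC.1, fun c hc _ => hall c hc⟩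
    have hmax := hC.2 (insert t C) hclique (Set.subset_insert t C)
    exact htC (hmax ▸ Set.mem_insert t C)
  · omega

private lemma gate_pair (hconn : G.Connected) (hC : G.IsClique C) {a b a' b' : V}
    (hab : G.Adj a b) (ha : IsGate G C a a') (hb : IsGate G C b b') (hne : a' ≠ b') :
    G.dist a a' = G.dist b b' ∧ G.Adj a' b' ∧
      G.dist a b' = G.dist a a' + 1 ∧ G.dist b a' = G.dist a a' + 1 := by
  have hadj : G.Adj a' b' := hC ha.1 hb.1 hne
  have h1 : G.dist a' b' = 1 := dist1 hadj
  have h2 : G.dist b' a' = 1 := dist1 hadj.symm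
  have e1 := ha.2 b' hb.1
  have e2 := hb.2 a' ha.1
  have t1 : G.dist a b' ≤ G.dist a b + G.dist b b' := hconn.dist_triangle
  have t2 : G.dist b a' ≤ G.dist b a + G.dist a a' := hconn.dist_triangle
  have hba : G.dist b a = 1 := dist1 hab.symm
  have hab1 : G.dist a b = 1 := dist1 hab
  exact ⟨by omega, hadj, by omega, by omega⟩

private lemma no_shared_edge (hk4 : NoK4Minus G) {C₁ C₂ : Set V}
    (h1 : IsMaxClique G C₁) (h2 : IsMaxClique G C₂) (hne : C₁ ≠ C₂) {a b : V}
    (ha1 : a ∈ C₁) (ha2 : a ∈ C₂) (hb1 : b ∈ C₁) (hb2 : b ∈ C₂) : a = b := by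
  by_contra hab
  have hsub : ¬ C₁ ⊆ C₂ := fun hsub => hne (h1.2 C₂ h2.1 hsub)
  obtain ⟨v, hv1, hv2⟩ := Set.not_subset.mp hsub
  have hva : G.Adj v a := h1.1 hv1 ha1 (fun h => hv2 (h ▸ ha2))
  have hvb : G.Adj v b := h1.1 hv1 hb1 (fun h => hv2 (h ▸ hb2))
  have hall : ∀ w ∈ C₂, G.Adj v w := by
    intro w hw
    rcases eq_or_ne w a with rfl | hwa
    · exact hva
    rcases eq_or_ne w b with rfl | hwb
    · exact hvb
    by_contra hnw
    exact hk4 ⟨v, w, a, b, fun h => hv2 (h ▸ hw), h2.1 ha2 hb2 hab, hva, hvb,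
      h2.1 hw ha2 hwa, h2.1 hw hb2 hwb, hnw⟩
  have hclique : G.IsClique (insert v C₂) := by
    rw [SimpleGraph.isClique_iff, (haveI := G.symm; Set.pairwise_insert_of_symm)]
    exact ⟨h2.1, fun c hc _ => hall c hc⟩
  have hmax := h2.2 (insert v C₂) hclique (Set.subset_insert v C₂)
  exact hv2 (hmax ▸ Set.mem_insert v C₂)
private lemma square_case1 (hconn : G.Connected)
    (hquad : QuadrangleCondition G) (hk4 : NoK4Minus G) (hk32 : NoK32 G)
    (hC : G.IsClique C) {a b c d q b' : V}
    (hab : G.Adj a b) (hcd : G.Adj c d) (hac : G.Adj a c) (hbd : G.Adj b d)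
    (had : ¬ G.Adj a d) (hbc : ¬ G.Adj b c) (hadne : a ≠ d) (hbcne : b ≠ c)
    (hqa : IsGate G C a q) (hqc : IsGate G C c q) (hqd : IsGate G C d q)
    (hb' : IsGate G C b b') (hqb : q ≠ b') : False := by
  obtain ⟨hk, hqb'adj, hab', hbq⟩ := gate_pair hconn hC hab hqa hb' hqb
  obtain ⟨hk2, _, hbq2, hdb'⟩ := gate_pair hconn hC hbd hb' hqd (Ne.symm hqb)
  have hqb1 : G.dist q b' = 1 := dist1 hqb'adj
  have hcb' : G.dist c b' = G.dist c q + 1 := by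
    have := hqc.2 b' hb'.1; omega
  by_cases hs : G.dist c q + 1 = G.dist a q
  · -- quadrangle from b' through a towards b and c
    have c1 : G.dist b' b = G.dist b b' := G.dist_comm
    have c2 : G.dist b' a = G.dist a b' := G.dist_comm
    have c3 : G.dist b' c = G.dist c b' := G.dist_comm
    have c4 : G.dist b' d = G.dist d b' := G.dist_comm
    have hq1 : G.dist b' b + 1 = G.dist b' a := by omega
    have hq2 : G.dist b' c + 1 = G.dist b' a := by omega
    obtain ⟨y, hby, hcy, hyd⟩ := hquad b' a b c hab hac hbcne hq1 hq2
    have hay : a ≠ y := fun h => by subst h; omega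
    have hdy : d ≠ y := fun h => by subst h; omega
    have hnay : ¬ G.Adj a y := fun h =>
      hk4 ⟨b, c, a, y, hbcne, h, hab.symm, hby, hac.symm, hcy, hbc⟩
    have hndy : ¬ G.Adj d y := fun h =>
      hk4 ⟨b, c, d, y, hbcne, h, hbd, hby, hcd, hcy, hbc⟩
    exact hk32 ⟨a, d, y, b, c, hadne, hay, hdy, hbcne, hab, hac, hbd.symm, hcd.symm,
      hby.symm, hcy.symm, had, hnay, hndy, hbc⟩
  · -- quadrangle from q through b towards a and d
    have c1 : G.dist q a = G.dist a q := G.dist_comm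
    have c2 : G.dist q b = G.dist b q := G.dist_comm
    have c3 : G.dist q c = G.dist c q := G.dist_comm
    have c4 : G.dist q d = G.dist d q := G.dist_comm
    have hq1 : G.dist q a + 1 = G.dist q b := by omega
    have hq2 : G.dist q d + 1 = G.dist q b := by omega
    obtain ⟨x, hax, hdx, hxd⟩ := hquad q b a d hab.symm hbd hadne hq1 hq2
    have hbx : b ≠ x := fun h => by subst h; omega
    have hcx : c ≠ x := fun h => by subst h; omega
    have hnbx : ¬ G.Adj b x := fun h =>
      hk4 ⟨a, d, b, x, hadne, h, hab, hax, hbd.symm, hdx, had⟩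
    have hncx : ¬ G.Adj c x := fun h =>
      hk4 ⟨a, d, c, x, hadne, h, hac, hax, hcd.symm, hdx, had⟩
    exact hk32 ⟨b, c, x, a, d, hbcne, hbx, hcx, hadne, hab.symm, hbd, hac.symm, hcd,
      hax.symm, hdx.symm, hbc, hnbx, hncx, had⟩

private lemma clique_gates (hconn : G.Connected) (htri : TriangleCondition G)
    (hk4 : NoK4Minus G) (hC : G.IsClique C) (hg : Gated G C) {D : Set V} (hD : G.IsClique D)
    {a b c d a' b' p : V} (haD : a ∈ D) (hbD : b ∈ D) (hcD : c ∈ D) (hdD : d ∈ D)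
    (hcdne : c ≠ d) (ha : IsGate G C a a') (hb : IsGate G C b b') (hne : a' ≠ b')
    (hc : IsGate G C c p) (hd : IsGate G C d p) : False := by
  have aux : ∀ e e' : V, e ∈ D → IsGate G C e e' → e' ≠ p → False := by
    intro e e' heD he' hep
    have hec : e ≠ c := fun h => hep (gate_unique hconn (h ▸ he') hc)
    have hed : e ≠ d := fun h => hep (gate_unique hconn (h ▸ he') hd)
    have heca : G.Adj e c := hD heD hcD hec
    have heda : G.Adj e d := hD heD hdD hed
    have hcda : G.Adj c d := hD hcD hdD hcdne
    obtain ⟨hk, hpa, heb, hca⟩ := gate_pair hconn hC heca he' hc hep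
    obtain ⟨hk2, _, _, hda⟩ := gate_pair hconn hC heda he' hd hep
    have c1 : G.dist p c = G.dist c p := G.dist_comm
    have c2 : G.dist p d = G.dist d p := G.dist_comm
    have c3 : G.dist p e = G.dist e p := G.dist_comm
    rcases Nat.eq_zero_or_pos (G.dist c p) with h0 | hpos
    · have hc0 : c = p := hconn.dist_eq_zero_iff.mp h0
      have hd0 : d = p := hconn.dist_eq_zero_iff.mp (by omega)
      exact hcdne (hc0.trans hd0.symm)
    have heqd : G.dist p c = G.dist p d := by omega
    obtain ⟨t, hct, hdt, htd⟩ := htri p c d hcda heqd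
    have c4 : G.dist p t = G.dist t p := G.dist_comm
    have het : e ≠ t := fun h => by subst h; omega
    have haet : G.Adj e t := by
      by_contra hne'
      exact hk4 ⟨e, t, c, d, het, hcda, heca, heda, hct.symm, hdt.symm, hne'⟩
    obtain ⟨t', ht'⟩ := hg t
    have ht'e : t' = e' := by
      by_contra hne'
      obtain ⟨hkk, _, _, _⟩ := gate_pair hconn hC haet he' ht' (fun h => hne' h.symm)
      have hgt := ht'.2 p hc.1
      omega
    rw [ht'e] at ht'
    have h1 := ht'.2 p hc.1
    have hpd : G.dist e' p = 1 := dist1 hpa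
    have h2 : G.dist c e' ≤ G.dist c t + G.dist t e' := hconn.dist_triangle
    have hct1 : G.dist c t = 1 := dist1 hct
    omega
  rcases eq_or_ne a' p with h | h
  · exact aux b b' hbD hb (fun hh => hne (h ▸ hh ▸ rfl))
  · exact aux a a' haD ha h

set_option maxHeartbeats 2000000 in
private lemma opp_square_gates (hconn : G.Connected) (htri : TriangleCondition G)
    (hquad : QuadrangleCondition G) (hk4 : NoK4Minus G) (hk32 : NoK32 G)
    (hC : G.IsClique C) (hg : Gated G C)
    {a b c d a' b' c' d' : V}
    (hab : G.Adj a b) (hcd : G.Adj c d) (hac : G.Adj a c) (hbd : G.Adj b d)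
    (had : ¬ G.Adj a d) (hbc : ¬ G.Adj b c) (hadne : a ≠ d) (hbcne : b ≠ c)
    (ha : IsGate G C a a') (hb : IsGate G C b b') (hne : a' ≠ b')
    (hc : IsGate G C c c') (hd : IsGate G C d d') : c' ≠ d' := by
  intro hpp
  rw [← hpp] at hd
  rcases eq_or_ne c' a' with rfl | hpa
  · exact square_case1 hconn hquad hk4 hk32 hC hab hcd hac hbd had hbc hadne hbcne
      ha hc hd hb hne
  rcases eq_or_ne c' b' with rfl | hpb
  · exact square_case1 hconn hquad hk4 hk32 hC hab.symm hcd.symm hbd hac hbc had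
      hbcne hadne hb hd hc ha (Ne.symm hne)
  · obtain ⟨hk, ha'b', hab', hba'⟩ := gate_pair hconn hC hab ha hb hne
    obtain ⟨hkc, ha'p, hap, hca'⟩ := gate_pair hconn hC hac ha hc (fun h => hpa h.symm)
    obtain ⟨hkd, hb'p, hbp, hdb'⟩ := gate_pair hconn hC hbd hb hd (fun h => hpb h.symm)
    have c1 : G.dist c' a = G.dist a c' := G.dist_comm
    have c2 : G.dist c' b = G.dist b c' := G.dist_comm
    have c3 : G.dist c' c = G.dist c c' := G.dist_comm
    have c4 : G.dist c' d = G.dist d c' := G.dist_comm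
    rcases Nat.eq_zero_or_pos (G.dist a a') with h0 | hposk
    · have hc0 : c = c' := hconn.dist_eq_zero_iff.mp (by rw [← hkc]; exact h0)
      have hd0 : d = c' := hconn.dist_eq_zero_iff.mp (by rw [← hkd, ← hk]; exact h0)
      exact hcd.ne (hc0.trans hd0.symm)
    have heqd : G.dist c' a = G.dist c' b := by clear * - c1 c2 hap hbp hk; omega
    obtain ⟨w, haw, hbw, hwd⟩ := htri c' a b hab heqd
    have c5 : G.dist c' w = G.dist w c' := G.dist_comm
    have hwc : w ≠ c := fun h => hbc (h ▸ hbw)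
    have hwdne : w ≠ d := fun h => had (h ▸ haw)
    have hnwc : ¬ G.Adj w c := fun h =>
      hk4 ⟨b, c, a, w, hbcne, haw, hab.symm, hbw, hac.symm, h.symm, hbc⟩
    obtain ⟨w', hw'⟩ := hg w
    have hd1 : G.dist a' c' = 1 := dist1 ha'p
    have hd2 : G.dist b' c' = 1 := dist1 hb'p
    have hw'p : w' = c' := by
      have hgw := hw'.2 c' hc.1
      rcases eq_or_ne w' a' with rfl | h1
      · obtain ⟨hx, _, _, _⟩ := gate_pair hconn hC hbw hb hw' (Ne.symm hne)
        clear * - hgw hx hd1 hwd c5 c1 hap hk; omega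
      rcases eq_or_ne w' b' with rfl | h2
      · obtain ⟨hx, _, _, _⟩ := gate_pair hconn hC haw ha hw' hne
        clear * - hgw hx hd2 hwd c5 c1 hap; omega
      · obtain ⟨hx, _, _, _⟩ := gate_pair hconn hC haw ha hw' (fun h => h1 h.symm)
        refine hconn.dist_eq_zero_iff.mp ?_
        clear * - hgw hx hwd c5 c1 hap; omega
    rw [hw'p] at hw'
    have hq1 : G.dist c' c + 1 = G.dist c' a := by clear * - c3 c1 hkc hap; omega
    have hq2 : G.dist c' w + 1 = G.dist c' a := hwd
    obtain ⟨y, hcy, hwy, hyd⟩ := hquad c' a c w hac haw (Ne.symm hwc) hq1 hq2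
    have c6 : G.dist c' y = G.dist y c' := G.dist_comm
    have hay : a ≠ y := fun h => by subst h; clear * - hyd; omega
    have hnay : ¬ G.Adj a y := fun h =>
      hk4 ⟨c, w, a, y, Ne.symm hwc, h, hac.symm, hcy, haw.symm, hwy,
        fun hh => hnwc hh.symm⟩
    obtain ⟨y', hy'⟩ := hg y
    have hy'p : y' = c' := by
      by_contra hne2
      obtain ⟨hx, _, _, _⟩ := gate_pair hconn hC hcy hc hy' (fun h => hne2 h.symm)
      have hgy := hy'.2 c' hc.1
      clear * - hx hgy hyd c6 c1 hap hkc; omega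
    rw [hy'p] at hy'
    exact square_case1 hconn hquad hk4 hk32 hC haw.symm hcy.symm hwy hac hnwc hnay
      hwc hay hw' hy' hc ha hpa

private def Cross (G : SimpleGraph V) (C : Set V) (e : Sym2 V) : Prop :=
  ∃ a b a' b', e = s(a, b) ∧ IsGate G C a a' ∧ IsGate G C b b' ∧ a' ≠ b'

private lemma cross_elim {a b : V} (h : Cross G C s(a, b)) :
    ∃ α β, IsGate G C a α ∧ IsGate G C b β ∧ α ≠ β := by
  obtain ⟨x, y, x', y', heq, hx, hy, hne⟩ := h
  rcases Sym2.eq_iff.mp heq with ⟨rfl, rfl⟩ | ⟨rfl, rfl⟩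
  · exact ⟨x', y', hx, hy, hne⟩
  · exact ⟨y', x', hy, hx, Ne.symm hne⟩

private lemma cross_step (hconn : G.Connected) (htri : TriangleCondition G)
    (hquad : QuadrangleCondition G) (hk4 : NoK4Minus G) (hk32 : NoK32 G)
    (hCmax : IsMaxClique G C) (hg : Gated G C)
    {e f : Sym2 V} (hf : f ∈ G.edgeSet)
    (hor : SameClique G e f ∨ OppSquare G e f) (hx : Cross G C e) : Cross G C f := by
  obtain ⟨a, b, a', b', rfl, ha, hb, hne⟩ := hx
  rcases hor with ⟨D, hD, heD, hfD⟩ | ⟨x, y, z, w, hexy, rfl, hxy, hzw, hxz, hyw, hxw, hyz, hxwne, hyzne⟩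
  · induction f using Sym2.ind with | _ c d =>
    have hcd : c ≠ d := (G.mem_edgeSet.mp hf).ne
    have haD : a ∈ D := heD a (by simp)
    have hbD : b ∈ D := heD b (by simp)
    have hcD : c ∈ D := hfD c (by simp)
    have hdD : d ∈ D := hfD d (by simp)
    obtain ⟨c', hc'⟩ := hg c
    obtain ⟨d', hd'⟩ := hg d
    refine ⟨c, d, c', d', rfl, hc', hd', fun hpp => ?_⟩
    rw [hpp] at hc'
    exact clique_gates hconn htri hk4 hCmax.1 hg hD.1 haD hbD hcD hdD hcd ha hb hne hc' hd'
  · obtain ⟨z', hz'⟩ := hg z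
    obtain ⟨w', hw'⟩ := hg w
    refine ⟨z, w, z', w', rfl, hz', hw', ?_⟩
    rcases Sym2.eq_iff.mp hexy with ⟨rfl, rfl⟩ | ⟨rfl, rfl⟩
    · exact opp_square_gates hconn htri hquad hk4 hk32 hCmax.1 hg hxy hzw hxz hyw
        hxw hyz hxwne hyzne ha hb hne hz' hw'
    · exact opp_square_gates hconn htri hquad hk4 hk32 hCmax.1 hg hxy hzw hxz hyw
        hxw hyz hxwne hyzne hb ha (Ne.symm hne) hz' hw'

private lemma cross_eqv (hconn : G.Connected) (htri : TriangleCondition G)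
    (hquad : QuadrangleCondition G) (hk4 : NoK4Minus G) (hk32 : NoK32 G)
    (hCmax : IsMaxClique G C) (hg : Gated G C)
    {e f : Sym2 V} (h : HypRel G e f) : Cross G C e ↔ Cross G C f := by
  have h' : Relation.EqvGen
      (fun e f => e ∈ G.edgeSet ∧ f ∈ G.edgeSet ∧ (SameClique G e f ∨ OppSquare G e f))
      e f := h
  clear h
  induction h' with
  | rel e f h =>
    refine ⟨cross_step hconn htri hquad hk4 hk32 hCmax hg h.2.1 h.2.2, ?_⟩
    refine fun hx => cross_step hconn htri hquad hk4 hk32 hCmax hg h.1 ?_ hx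
    rcases h.2.2 with ⟨D, hD, he, hf⟩ | ⟨x, y, z, w, he, hf, h1, h2, h3, h4, h5, h6, h7, h8⟩
    · exact Or.inl ⟨D, hD, hf, he⟩
    · exact Or.inr ⟨z, w, x, y, hf, he, h2, h1, h3.symm, h4.symm,
        fun hh => h6 hh.symm, fun hh => h5 hh.symm, Ne.symm h8, Ne.symm h7⟩
  | refl e => exact Iff.rfl
  | symm e f h ih => exact ih.symm
  | trans e f g h1 h2 ih1 ih2 => exact ih1.trans ih2

end Aux

open QM in
/-- given two distinct cliques `C₁, C₂` in the same hyperplane of a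
quasi-median graph and adjacent vertices `a₁ ∈ C₁`, `a₂ ∈ C₂`, every `b₁ ∈ C₁ \ {a₁}`
fits into an induced square `a₁, a₂, b₂, b₁` with `b₂ ∈ C₂`. -/
theorem square_completion
    (G : SimpleGraph V) (hqm : QuasiMedian G) (hconn : G.Connected)
    (J : Set (Sym2 V)) (hJ : IsHyperplane G J)
    (C₁ C₂ : Set V) (h₁ : CliqueIn G J C₁) (h₂ : CliqueIn G J C₂) (hne : C₁ ≠ C₂)
    (a₁ a₂ : V) (ha₁ : a₁ ∈ C₁) (ha₂ : a₂ ∈ C₂) (hadj : G.Adj a₁ a₂)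
    (b₁ : V) (hb₁ : b₁ ∈ C₁) (hb₁a₁ : b₁ ≠ a₁) :
    ∃ b₂ ∈ C₂, G.Adj a₂ b₂ ∧ G.Adj b₂ b₁ ∧ G.Adj b₁ a₁ ∧
      ¬ G.Adj a₁ b₂ ∧ ¬ G.Adj a₂ b₁ := by
  obtain ⟨htri, hquad, hk4, hk32⟩ := hqm
  obtain ⟨hC₁, ⟨u₁, v₁, hu₁, hv₁, huv₁⟩, hJ₁⟩ := h₁
  obtain ⟨hC₂, ⟨u₂, v₂, hu₂, hv₂, huv₂⟩, hJ₂⟩ := h₂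
  have hg2 : Gated G C₂ := cliques_gated hconn htri hk4 hC₂ ⟨u₂, hu₂⟩
  obtain ⟨e₀, he₀, rfl⟩ := hJ
  have hcross : ∀ x y, x ∈ C₁ → y ∈ C₁ → x ≠ y → Cross G C₂ s(x, y) := by
    intro x y hx hy hxy
    have h1 := hJ₂ u₂ hu₂ v₂ hv₂ huv₂
    have h2 := hJ₁ x hx y hy hxy
    have hrel : HypRel G s(u₂, v₂) s(x, y) :=
      Relation.EqvGen.trans _ _ _ (Relation.EqvGen.symm _ _ h1.2) h2.2
    exact (cross_eqv hconn htri hquad hk4 hk32 hC₂ hg2 hrel).mp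
      ⟨u₂, v₂, u₂, v₂, rfl, gate_self_s6 hu₂, gate_self_s6 hv₂, huv₂⟩
  have hdisj : ∀ v, v ∈ C₁ → v ∈ C₂ → False := by
    intro v hv1 hv2
    obtain ⟨u, hu, huv⟩ : ∃ u ∈ C₁, u ≠ v := by
      rcases eq_or_ne u₁ v with rfl | h
      · exact ⟨v₁, hv₁, fun hh => huv₁ hh.symm⟩
      · exact ⟨u₁, hu₁, h⟩
    obtain ⟨γ, δ, hγ, hδ, hγδ⟩ := cross_elim (hcross u v hu hv1 huv)
    have hδv : δ = v := gate_unique hconn hδ (gate_self_s6 hv2)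
    subst hδv
    rcases eq_or_ne u γ with rfl | hne2
    · exact huv (no_shared_edge hk4 hC₁ hC₂ hne hu hγ.1 hv1 hv2)
    · have h1' := hγ.2 δ hv2
      have h2' : G.dist γ δ = 1 := dist1 (hC₂.1 hγ.1 hv2 hγδ)
      have h3' : G.dist u γ ≠ 0 := fun h0 => hne2 (hconn.dist_eq_zero_iff.mp h0)
      have h4' : G.dist u δ = 1 := dist1 (hC₁.1 hu hv1 huv)
      clear * - h1' h2' h3' h4'
      omega
  have ha₁2 : a₁ ∉ C₂ := fun h => hdisj a₁ ha₁ h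
  have hb₁2 : b₁ ∉ C₂ := fun h => hdisj b₁ hb₁ h
  obtain ⟨α, β, hα, hβ, hαβ⟩ := cross_elim (hcross a₁ b₁ ha₁ hb₁ (Ne.symm hb₁a₁))
  have hd1 : G.dist a₁ a₂ = 1 := dist1 hadj
  have hga := hα.2 a₂ ha₂
  have hαa₂ : α = a₂ := by
    rcases eq_or_ne α a₂ with h | h
    · exact h
    · exfalso
      have h5 : G.dist α a₂ = 1 := dist1 (hC₂.1 hα.1 ha₂ h)
      have h6 : G.dist a₁ α ≠ 0 := fun h0 =>
        ha₁2 (by rw [hconn.dist_eq_zero_iff.mp h0]; exact hα.1)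
      clear * - hd1 hga h5 h6
      omega
  rw [hαa₂] at hα hαβ
  have hβ2 : β ∈ C₂ := hβ.1
  have haβ : G.Adj a₂ β := hC₂.1 ha₂ hβ2 hαβ
  have hβa2 : G.dist β a₂ = 1 := dist1 haβ.symm
  have hgb := hβ.2 a₂ ha₂
  have htrb : G.dist b₁ a₂ ≤ G.dist b₁ a₁ + G.dist a₁ a₂ := hconn.dist_triangle
  have hb₁a₁d : G.dist b₁ a₁ = 1 := dist1 (hC₁.1 hb₁ ha₁ hb₁a₁)
  have hb₁β : G.dist b₁ β ≠ 0 := fun h0 =>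
    hb₁2 (by rw [hconn.dist_eq_zero_iff.mp h0]; exact hβ2)
  have hb₁βd : G.dist b₁ β = 1 := by
    clear * - hgb htrb hb₁a₁d hb₁β hβa2 hd1
    omega
  refine ⟨β, hβ2, haβ, (SimpleGraph.dist_eq_one_iff_adj.mp hb₁βd).symm,
    hC₁.1 hb₁ ha₁ hb₁a₁, ?_, ?_⟩
  · intro h
    have h7 : G.dist a₁ β = 1 := dist1 h
    have h8 := hα.2 β hβ2
    have h9 : G.dist a₂ β = 1 := dist1 haβ
    clear * - h7 h8 h9 hd1
    omega
  · intro h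
    have h7 : G.dist b₁ a₂ = 1 := dist1 h.symm
    clear * - h7 hgb hβa2 hb₁βd
    omega
end

section
/- Let X be a quasi-median graph, C a clique, J its hyperplane, and p : X → C the gate map. For each x ∈ C, the sector p⁻¹(x) is a gated subgraph of X. -/
variable {V : Type*}

namespace QMAux

open SimpleGraph QM

variable {G : SimpleGraph V}

lemma adj_dist_le (hconn : G.Connected) {a b : V} (h : G.Adj a b) (c : V) :
    G.dist c b ≤ G.dist c a + 1 := by
  have h1 : G.dist a b = 1 := SimpleGraph.dist_eq_one_iff_adj.mpr h
  have h2 := hconn.dist_triangle (u := c) (v := a) (w := b)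
  omega

lemma exists_step (hconn : G.Connected) {z x : V} (h : z ≠ x) :
    ∃ w, G.Adj z w ∧ G.dist x w + 1 = G.dist x z := by
  obtain ⟨q, hlen⟩ := hconn.exists_walk_length_eq_dist z x
  cases q with
  | nil => exact absurd rfl h
  | @cons _ b _ hadj q' =>
    refine ⟨b, hadj, ?_⟩
    have h1 : G.dist b x ≤ q'.length := SimpleGraph.dist_le q'
    have h2 : G.dist x z ≤ G.dist x b + 1 := adj_dist_le hconn hadj.symm x
    have h3 : G.dist x b = G.dist b x := SimpleGraph.dist_comm
    have h4 : G.dist z x = G.dist x z := SimpleGraph.dist_comm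
    simp only [SimpleGraph.Walk.length_cons] at hlen
    omega

variable {C : Set V} {p : V → V} {x : V}

lemma fiber_dist (hconn : G.Connected) (hC : G.IsClique C)
    (hp : ∀ v, IsGate G C v (p v)) (hx : x ∈ C) {z c : V}
    (hz : p z = x) (hc : c ∈ C) (hcx : c ≠ x) :
    G.dist z c = G.dist z x + 1 := by
  have h := (hp z).2 c hc
  rw [hz] at h
  have hadj : G.Adj x c := hC hx hc (Ne.symm hcx)
  rw [SimpleGraph.dist_eq_one_iff_adj.mpr hadj] at h
  exact h

lemma edge_lemma (hconn : G.Connected) (hC : G.IsClique C)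
    (hp : ∀ v, IsGate G C v (p v)) (hx : x ∈ C) {a b : V}
    (hab : G.Adj a b) (ha : p a = x) (hb : p b ≠ x) :
    G.dist b (p b) = G.dist a x ∧ G.dist b x = G.dist a x + 1 := by
  have hcC : p b ∈ C := (hp b).1
  have h1 : G.dist a (p b) = G.dist a x + 1 :=
    fiber_dist hconn hC hp hx ha hcC hb
  have h2 := (hp b).2 x hx
  have hadjcx : G.Adj (p b) x := hC hcC hx hb
  rw [SimpleGraph.dist_eq_one_iff_adj.mpr hadjcx] at h2
  have h3 : G.dist a (p b) ≤ G.dist b (p b) + 1 := by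
    have := adj_dist_le hconn hab.symm (p b)
    have ca : G.dist (p b) a = G.dist a (p b) := SimpleGraph.dist_comm
    have cb : G.dist (p b) b = G.dist b (p b) := SimpleGraph.dist_comm
    omega
  have h4 : G.dist b x ≤ G.dist a x + 1 := by
    have := adj_dist_le hconn hab x
    have ca : G.dist x a = G.dist a x := SimpleGraph.dist_comm
    have cb : G.dist x b = G.dist b x := SimpleGraph.dist_comm
    omega
  constructor <;> omega

lemma sector_step (hconn : G.Connected) (hC : G.IsClique C)
    (hp : ∀ v, IsGate G C v (p v)) (hx : x ∈ C) {z w : V}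
    (hz : p z = x) (hwz : G.Adj z w) (hle : G.dist w x ≤ G.dist z x) :
    p w = x := by
  by_contra hw
  have := (edge_lemma hconn hC hp hx hwz hz hw).2
  omega

/-- Triangle-closedness of the sector. -/
lemma tri_closed (htri : TriangleCondition G) (hk4 : NoK4Minus G)
    (hconn : G.Connected) (hC : G.IsClique C)
    (hp : ∀ v, IsGate G C v (p v)) (hx : x ∈ C) {w z t : V}
    (hw : p w = x) (hz : p z = x) (hwz : G.Adj w z)
    (h1 : G.Adj t w) (h2 : G.Adj t z) : p t = x := by
  by_contra ht
  obtain ⟨e1, e2⟩ := edge_lemma hconn hC hp hx h1.symm hw ht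
  obtain ⟨f1, f2⟩ := edge_lemma hconn hC hp hx h2.symm hz ht
  -- e1 : d t (p t) = d w x, e2 : d t x = d w x + 1, f1 : = d z x, f2 : = d z x + 1
  have hddpos : 0 < G.dist w x := by
    rcases Nat.eq_zero_or_pos (G.dist w x) with h0 | h
    · exfalso
      have hw' : w = x := hconn.dist_eq_zero_iff.mp h0
      have hz' : z = x := hconn.dist_eq_zero_iff.mp (by omega)
      rw [hw', hz'] at hwz
      exact G.irrefl hwz
    · exact h
  obtain ⟨s, hsw, hsz, hsd⟩ := htri x w z hwz
    (by rw [SimpleGraph.dist_comm (u := x) (v := w), SimpleGraph.dist_comm (u := x) (v := z)]; omega)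
  -- hsd : d x s + 1 = d x w
  have cxw : G.dist x w = G.dist w x := SimpleGraph.dist_comm
  have cxt : G.dist x t = G.dist t x := SimpleGraph.dist_comm
  by_cases hst : s = t
  · subst hst; omega
  by_cases hadjst : G.Adj s t
  · have := adj_dist_le hconn hadjst x
    omega
  · exact hk4 ⟨s, t, w, z, hst, hwz, hsw.symm, hsz.symm, h1, h2, hadjst⟩

/-- Local convexity of the sector. -/
lemma loc_convex (htri : TriangleCondition G) (hquad : QuadrangleCondition G)
    (hk4 : NoK4Minus G) (hk32 : NoK32 G)
    (hconn : G.Connected) (hC : G.IsClique C)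
    (hp : ∀ v, IsGate G C v (p v)) (hx : x ∈ C) {w1 w2 w3 t : V}
    (h1 : p w1 = x) (h2 : p w2 = x) (h3 : p w3 = x)
    (a12 : G.Adj w1 w2) (a23 : G.Adj w2 w3)
    (at1 : G.Adj t w1) (at3 : G.Adj t w3)
    (n13 : ¬ G.Adj w1 w3) (nt2 : ¬ G.Adj t w2)
    (ne13 : w1 ≠ w3) (net2 : t ≠ w2) : p t = x := by
  by_contra ht
  have hcC : p t ∈ C := (hp t).1
  obtain ⟨e1, e2⟩ := edge_lemma hconn hC hp hx at1.symm h1 ht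
  obtain ⟨f1, f2⟩ := edge_lemma hconn hC hp hx at3.symm h3 ht
  -- e1 : d t (p t) = d w1 x, e2 : d t x = d w1 x + 1; similarly f for w3
  have hddpos : 0 < G.dist w1 x := by
    rcases Nat.eq_zero_or_pos (G.dist w1 x) with h0 | h
    · exact absurd ((hconn.dist_eq_zero_iff.mp h0).trans
        (hconn.dist_eq_zero_iff.mp (show G.dist w3 x = 0 by omega)).symm) ne13
    · exact h
  have cx1 : G.dist x w1 = G.dist w1 x := SimpleGraph.dist_comm
  have cx3 : G.dist x w3 = G.dist w3 x := SimpleGraph.dist_comm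
  have cxt : G.dist x t = G.dist t x := SimpleGraph.dist_comm
  obtain ⟨s, hs1, hs3, hsd⟩ := hquad x t w1 w3 at1 at3 ne13 (by omega) (by omega)
  -- hsd : d x s + 2 = d x t = d w1 x + 1
  have hs : p s = x := by
    refine sector_step hconn hC hp hx h1 hs1 ?_
    have : G.dist x s = G.dist s x := SimpleGraph.dist_comm
    omega
  have hnst : ¬ G.Adj s t := by
    intro h
    have := (edge_lemma hconn hC hp hx h hs ht).1
    have cxs : G.dist x s = G.dist s x := SimpleGraph.dist_comm
    omega
  have hnes : s ≠ t := by
    intro h; subst h; omega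
  by_cases hsw2 : G.Adj s w2
  · exact hk4 ⟨w1, w3, w2, s, ne13, hsw2.symm, a12, hs1, a23.symm, hs3, n13⟩
  by_cases hsew2 : s = w2
  · -- second quadrangle, from c = p t
    subst hsew2
    have c1c : G.dist (p t) w1 = G.dist w1 (p t) := SimpleGraph.dist_comm
    have c2c : G.dist (p t) s = G.dist s (p t) := SimpleGraph.dist_comm
    have ctc : G.dist (p t) t = G.dist t (p t) := SimpleGraph.dist_comm
    have g1 : G.dist w1 (p t) = G.dist w1 x + 1 := fiber_dist hconn hC hp hx h1 hcC ht
    have g2 : G.dist s (p t) = G.dist s x + 1 := fiber_dist hconn hC hp hx h2 hcC ht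
    have cxs : G.dist x s = G.dist s x := SimpleGraph.dist_comm
    obtain ⟨q, hqt, hq2, hqd⟩ := hquad (p t) w1 t s at1.symm a12 net2
      (by omega) (by omega)
    -- hqd : d c q + 2 = d c w1 = d w1 x + 1
    have cqc : G.dist (p t) q = G.dist q (p t) := SimpleGraph.dist_comm
    have hqnotS : p q ≠ x := by
      intro hqx
      obtain ⟨k1, k2⟩ := edge_lemma hconn hC hp hx hqt.symm hqx ht
      have g3 : G.dist q (p t) = G.dist q x + 1 := fiber_dist hconn hC hp hx hqx hcC ht
      omega
    obtain ⟨m1, m2⟩ := edge_lemma hconn hC hp hx hq2 h2 hqnotS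
    -- m1 : d q (p q) = d s x, m2 : d q x = d s x + 1
    have hnq1 : ¬ G.Adj w1 q := by
      intro h
      have := (edge_lemma hconn hC hp hx h h1 hqnotS).1
      omega
    have hnq3 : ¬ G.Adj w3 q := by
      intro h
      have := (edge_lemma hconn hC hp hx h h3 hqnotS).1
      omega
    have hneq1 : w1 ≠ q := fun h => hqnotS (h ▸ h1)
    have hneq3 : w3 ≠ q := fun h => hqnotS (h ▸ h3)
    exact hk32 ⟨w1, w3, q, t, s, ne13, hneq1, hneq3, net2,
      at1.symm, a12, at3.symm, a23.symm, hqt.symm, hq2.symm,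
      n13, hnq1, hnq3, nt2⟩
  · exact hk32 ⟨t, s, w2, w1, w3, Ne.symm hnes, net2, hsew2, ne13,
      at1, at3, hs1.symm, hs3.symm, a12.symm, a23,
      fun h => hnst h.symm, nt2, hsw2, n13⟩


/-- A geodesic walk to `y` staying inside the sector. -/
def Desc (G : SimpleGraph V) (p : V → V) (x y v : V) : Prop :=
  ∃ q : G.Walk v y, q.length = G.dist y v ∧ ∀ a ∈ q.support, p a = x

lemma desc_head (hconn : G.Connected) {y v : V}
    (h : Desc G p x y v) (hne : v ≠ y) :
    ∃ w, p w = x ∧ G.Adj v w ∧ G.dist y w + 1 = G.dist y v ∧ Desc G p x y w := by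
  obtain ⟨q, hlen, hsup⟩ := h
  cases q with
  | nil => exact absurd rfl hne
  | @cons _ b _ hadj q' =>
    have hb : p b = x := hsup b (by
      rw [SimpleGraph.Walk.support_cons]
      exact List.mem_cons_of_mem _ q'.start_mem_support)
    simp only [SimpleGraph.Walk.length_cons] at hlen
    have hd1 : G.dist b y ≤ q'.length := SimpleGraph.dist_le q'
    have hd2 : G.dist y v ≤ G.dist y b + 1 := adj_dist_le hconn hadj.symm y
    have hcb : G.dist y b = G.dist b y := SimpleGraph.dist_comm
    refine ⟨b, hb, hadj, by omega, q', by omega, fun a ha => hsup a ?_⟩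
    rw [SimpleGraph.Walk.support_cons]
    exact List.mem_cons_of_mem _ ha

lemma desc_cons (hconn : G.Connected) {y v w : V}
    (h : Desc G p x y w) (hadj : G.Adj v w) (hv : p v = x)
    (hlev : G.dist y w + 1 = G.dist y v) : Desc G p x y v := by
  obtain ⟨q, hlen, hsup⟩ := h
  refine ⟨SimpleGraph.Walk.cons hadj q, by
    simp only [SimpleGraph.Walk.length_cons]; omega, ?_⟩
  intro a ha
  rw [SimpleGraph.Walk.support_cons, List.mem_cons] at ha
  rcases ha with ha | ha
  · exact ha ▸ hv
  · exact hsup a ha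

lemma desc_trivial {y : V} (hy : p y = x) : Desc G p x y y :=
  ⟨SimpleGraph.Walk.nil, by simp [SimpleGraph.dist_self], by simp [hy]⟩

/-- Claim I: descending walks propagate down one level. -/
lemma descI (htri : TriangleCondition G) (hquad : QuadrangleCondition G)
    (hk4 : NoK4Minus G) (hk32 : NoK32 G)
    (hconn : G.Connected) (hC : G.IsClique C)
    (hp : ∀ v, IsGate G C v (p v)) (hx : x ∈ C) {y : V} :
    ∀ n t0 t1, p t0 = x → p t1 = x → G.Adj t0 t1 → G.dist y t0 = n →
      G.dist y t1 = n + 1 → Desc G p x y t1 → Desc G p x y t0 := by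
  intro n
  induction n using Nat.strong_induction_on with
  | _ n ih =>
    intro t0 t1 h0 h1 hadj hd0 hd1 hdesc
    have hne : t1 ≠ y := by
      intro h; subst h; rw [SimpleGraph.dist_comm, SimpleGraph.dist_self] at hd1; omega
    obtain ⟨w1, hw1, hadj1, hlev1, hdesc1⟩ := desc_head hconn hdesc hne
    by_cases hw1t0 : w1 = t0
    · exact hw1t0 ▸ hdesc1
    · obtain ⟨q, hq0, hqw, hqd⟩ := hquad y t1 t0 w1 hadj.symm hadj1
        (fun h => hw1t0 h.symm) (by omega) (by omega)
      -- hqd : d y q + 2 = d y t1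
      have hq : p q = x := by
        by_cases hqt1 : G.Adj q t1
        · exact tri_closed htri hk4 hconn hC hp hx h0 h1 hadj hq0.symm hqt1
        by_cases h01 : G.Adj t0 w1
        · exact tri_closed htri hk4 hconn hC hp hx h0 hw1 h01 hq0.symm hqw.symm
        · refine loc_convex htri hquad hk4 hk32 hconn hC hp hx h0 h1 hw1
            hadj hadj1 hq0.symm hqw.symm h01 hqt1 (fun h => hw1t0 h.symm) ?_
          intro h; subst h; omega
      have hdq : Desc G p x y q :=
        ih (G.dist y q) (by omega) q w1 hq hw1 hqw.symm rfl (by omega) hdesc1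
      exact desc_cons hconn hdq hq0 h0 (by omega)

/-- Everyone in the sector connected to `y` by a sector walk has a descending walk. -/
lemma descAll (htri : TriangleCondition G) (hquad : QuadrangleCondition G)
    (hk4 : NoK4Minus G) (hk32 : NoK32 G)
    (hconn : G.Connected) (hC : G.IsClique C)
    (hp : ∀ v, IsGate G C v (p v)) (hx : x ∈ C) {y : V} (hy : p y = x) :
    ∀ {v yy : V} (q : G.Walk v yy), y = yy → (∀ a ∈ q.support, p a = x) →
      Desc G p x y v := by
  intro v yy q
  induction q with
  | nil =>
    intro h _
    subst h
    exact desc_trivial hy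
  | @cons v b yy hadj q' ih =>
    intro hyy hsup
    subst hyy
    have hv : p v = x := hsup v (by
      rw [SimpleGraph.Walk.support_cons]; exact List.mem_cons_self)
    have hb : p b = x := hsup b (by
      rw [SimpleGraph.Walk.support_cons]
      exact List.mem_cons_of_mem _ q'.start_mem_support)
    have hdb : Desc G p x y b := ih rfl (fun a ha => hsup a (by
      rw [SimpleGraph.Walk.support_cons]; exact List.mem_cons_of_mem _ ha))
    have hb1 : G.dist y b ≤ G.dist y v + 1 := adj_dist_le hconn hadj y
    have hb2 : G.dist y v ≤ G.dist y b + 1 := adj_dist_le hconn hadj.symm y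
    rcases Nat.lt_trichotomy (G.dist y b) (G.dist y v) with hlt | heq | hgt
    · exact desc_cons hconn hdb hadj hv (by omega)
    · rcases Nat.eq_zero_or_pos (G.dist y v) with h0 | hpos
      · have : y = v := hconn.dist_eq_zero_iff.mp h0
        exact this ▸ desc_trivial hy
      · obtain ⟨t, hvt, hbt, htd⟩ := htri y v b hadj (by omega)
        have ht : p t = x := tri_closed htri hk4 hconn hC hp hx hv hb hadj
          hvt.symm hbt.symm
        have hdt : Desc G p x y t :=
          descI htri hquad hk4 hk32 hconn hC hp hx (G.dist y t) t b ht hb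
            hbt.symm rfl (by omega) hdb
        exact desc_cons hconn hdt hvt hv (by omega)
    · exact descI htri hquad hk4 hk32 hconn hC hp hx (G.dist y v) v b hv hb
        hadj rfl (by omega) hdb

/-- Sector walk to `x`. -/
lemma sconn (hconn : G.Connected) (hC : G.IsClique C)
    (hp : ∀ v, IsGate G C v (p v)) (hx : x ∈ C) :
    ∀ n z, G.dist x z = n → p z = x →
      ∃ q : G.Walk z x, ∀ a ∈ q.support, p a = x := by
  intro n
  induction n using Nat.strong_induction_on with
  | _ n ih =>
    intro z hn hz
    by_cases hzx : z = x
    · subst hzx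
      exact ⟨SimpleGraph.Walk.nil, by simp [hz]⟩
    · obtain ⟨w, hzw, hwd⟩ := exists_step hconn hzx
      have hcw : G.dist x w = G.dist w x := SimpleGraph.dist_comm
      have hcz : G.dist x z = G.dist z x := SimpleGraph.dist_comm
      have hw : p w = x := sector_step hconn hC hp hx hz hzw (by omega)
      obtain ⟨q, hq⟩ := ih (G.dist x w) (by
        have := hconn.pos_dist_of_ne (Ne.symm hzx)
        omega) w rfl hw
      refine ⟨SimpleGraph.Walk.cons hzw q, ?_⟩
      intro a ha
      rw [SimpleGraph.Walk.support_cons, List.mem_cons] at ha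
      rcases ha with ha | ha
      · exact ha ▸ hz
      · exact hq a ha

/-- C1: every sector vertex other than `y` has a sector neighbour one step
closer to `y`. -/
lemma c1 (htri : TriangleCondition G) (hquad : QuadrangleCondition G)
    (hk4 : NoK4Minus G) (hk32 : NoK32 G)
    (hconn : G.Connected) (hC : G.IsClique C)
    (hp : ∀ v, IsGate G C v (p v)) (hx : x ∈ C) {y z : V}
    (hy : p y = x) (hz : p z = x) (hne : z ≠ y) :
    ∃ w, p w = x ∧ G.Adj z w ∧ G.dist y w + 1 = G.dist y z := by
  obtain ⟨q1, hq1⟩ := sconn hconn hC hp hx (G.dist x z) z rfl hz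
  obtain ⟨q2, hq2⟩ := sconn hconn hC hp hx (G.dist x y) y rfl hy
  have hsup : ∀ a ∈ (q1.append q2.reverse).support, p a = x := by
    intro a ha
    rw [SimpleGraph.Walk.support_append, List.mem_append] at ha
    rcases ha with ha | ha
    · exact hq1 a ha
    · refine hq2 a ?_
      have := List.mem_of_mem_tail ha
      rwa [SimpleGraph.Walk.support_reverse, List.mem_reverse] at this
  have hd := descAll htri hquad hk4 hk32 hconn hC hp hx hy
    (q1.append q2.reverse) rfl hsup
  obtain ⟨w, hw, hzw, hlev, _⟩ := desc_head hconn hd hne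
  exact ⟨w, hw, hzw, hlev⟩


end QMAux

open QMAux in
open QM in
/-- for a clique `C` of a quasi-median graph with gate map `p`, its
hyperplane `J`, and `x ∈ C`, the sector `p⁻¹(x)` is a gated subgraph. -/
theorem sector_gated
    (G : SimpleGraph V) (hqm : QuasiMedian G) (hconn : G.Connected)
    (C : Set V) (hC : IsMaxClique G C)
    (p : V → V) (hp : ∀ v : V, IsGate G C v (p v))
    (J : Set (Sym2 V)) (hJ : IsHyperplane G J) (hJC : CliqueIn G J C)
    (x : V) (hx : x ∈ C) :
    Gated G {y : V | p y = x} := by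
  intro u
  have hxS : p x = x := by
    have h := (hp x).2 x hx
    rw [SimpleGraph.dist_self] at h
    exact hconn.dist_eq_zero_iff.mp (by omega)
  have hTne : {n : ℕ | ∃ s, p s = x ∧ G.dist u s = n}.Nonempty := ⟨_, x, hxS, rfl⟩
  obtain ⟨y, hy, hyk⟩ := Nat.sInf_mem hTne
  set k := sInf {n : ℕ | ∃ s, p s = x ∧ G.dist u s = n} with hk
  have hmin : ∀ s, p s = x → k ≤ G.dist u s := fun s hs => Nat.sInf_le ⟨s, hs, rfl⟩
  have main : ∀ m z, p z = x → G.dist y z = m → G.dist u z = k + m := by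
    intro m
    induction m using Nat.strong_induction_on with
    | _ m ihm =>
      have inner : ∀ n z, p z = x → G.dist y z = m → G.dist u z = n → n = k + m := by
        intro n
        induction n using Nat.strong_induction_on with
        | _ n ihn =>
          intro z hz hyz hduz
          rcases Nat.eq_zero_or_pos m with hm0 | hmpos
          · subst hm0
            have : y = z := hconn.dist_eq_zero_iff.mp hyz
            subst this
            omega
          · have hzy : z ≠ y := by
              intro h; subst h; rw [SimpleGraph.dist_self] at hyz; omega
            obtain ⟨w, hw, hzw, hlevw⟩ :=
              c1 hqm.1 hqm.2.1 hqm.2.2.1 hqm.2.2.2 hconn hC.1 hp hx hy hz hzy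
            have hduw : G.dist u w = k + (m - 1) :=
              ihm (m - 1) (by omega) w hw (by omega)
            have hb1 : G.dist u z ≤ G.dist u w + 1 := adj_dist_le hconn hzw.symm u
            have hb2 : G.dist u w ≤ G.dist u z + 1 := adj_dist_le hconn hzw u
            have hkn : k ≤ n := hduz ▸ hmin z hz
            by_cases hcase1 : n = k + m
            · exact hcase1
            by_cases hcase2 : n = k + (m - 1)
            · exfalso
              obtain ⟨t, hwt, hzt, htd⟩ := hqm.1 u w z hzw.symm (by omega)
              have ht : p t = x :=
                tri_closed hqm.1 hqm.2.2.1 hconn hC.1 hp hx hw hz hzw.symm hwt.symm hzt.symm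
              have h1 : G.dist y t ≤ G.dist y w + 1 := adj_dist_le hconn hwt y
              have h2 : G.dist y z ≤ G.dist y t + 1 := adj_dist_le hconn hzt.symm y
              by_cases hyt : G.dist y t = m
              · have := ihn (G.dist u t) (by omega) t ht hyt rfl
                omega
              · have := ihm (m - 1) (by omega) t ht (by omega)
                omega
            · exfalso
              have hn2 : n + 2 = k + m := by omega
              have hm2 : 2 ≤ m := by
                rcases Nat.lt_or_ge m 2 with h | h
                · omega
                · exact h
              have hwy : w ≠ y := by
                intro h; subst h; rw [SimpleGraph.dist_self] at hlevw; omega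
              obtain ⟨w', hw', hww', hlevw'⟩ :=
                c1 hqm.1 hqm.2.1 hqm.2.2.1 hqm.2.2.2 hconn hC.1 hp hx hy hw hwy
              have hduw' : G.dist u w' = k + (m - 2) :=
                ihm (m - 2) (by omega) w' hw' (by omega)
              have hzw'ne : z ≠ w' := by
                intro h; rw [← h] at hlevw'; omega
              obtain ⟨t, hzt, hw't, htd⟩ := hqm.2.1 u w z w' hzw.symm hww'
                hzw'ne (by omega) (by omega)
              have hnadj_zw' : ¬ G.Adj z w' := by
                intro h
                have := adj_dist_le hconn h.symm y
                omega
              have hduzt : G.dist u t ≤ G.dist u z + 1 := adj_dist_le hconn hzt u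
              have ht : p t = x := by
                by_cases hta : G.Adj t w
                · exact tri_closed hqm.1 hqm.2.2.1 hconn hC.1 hp hx hw hz hzw.symm hta hzt.symm
                · refine loc_convex hqm.1 hqm.2.1 hqm.2.2.1 hqm.2.2.2 hconn hC.1 hp hx hz hw hw'
                    hzw hww' hzt.symm hw't.symm hnadj_zw' hta hzw'ne ?_
                  intro h; rw [h] at htd; omega
              have h1 : G.dist y t ≤ G.dist y w' + 1 := adj_dist_le hconn hw't y
              have h2 : G.dist y z ≤ G.dist y t + 1 := adj_dist_le hconn hzt.symm y
              have := ihm (m - 1) (by omega) t ht (by omega)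
              omega
      intro z hz hyz
      have := inner (G.dist u z) z hz hyz rfl
      omega
  refine ⟨y, hy, fun z hzS => ?_⟩
  have := main (G.dist y z) z hzS rfl
  omega
end

section
/- Let X be a quasi-median graph and J a hyperplane. The neighborhood N(J) of J, i.e., the subgraph of X generated by the edges of J, is a gated subgraph of X. -/
variable {V : Type*}

namespace QMAux
open QM

variable {G : SimpleGraph V}

lemma dist_of_adj {u v : V} (h : G.Adj u v) : G.dist u v = 1 :=
  SimpleGraph.dist_eq_one_iff_adj.mpr h

lemma adj_of_dist_one {u v : V} (h : G.dist u v = 1) : G.Adj u v :=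
  SimpleGraph.dist_eq_one_iff_adj.mp h

lemma dist_le_adj (hconn : G.Connected) {u v w : V} (h : G.Adj v w) :
    G.dist u w ≤ G.dist u v + 1 := by
  have := hconn.dist_triangle (u := u) (v := v) (w := w)
  have h1 : G.dist v w = 1 := dist_of_adj h
  omega

lemma dist_pos_of_ne (hconn : G.Connected) {u v : V} (h : u ≠ v) : 0 < G.dist u v :=
  Nat.pos_of_ne_zero fun h0 => h (hconn.dist_eq_zero_iff.mp h0)

lemma dist_eq_two (hconn : G.Connected) {u v w : V} (huv : u ≠ v) (hna : ¬ G.Adj u v)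
    (h1 : G.Adj u w) (h2 : G.Adj w v) : G.dist u v = 2 := by
  have hle : G.dist u v ≤ 2 := by
    have := SimpleGraph.dist_le (SimpleGraph.Walk.cons h1 (SimpleGraph.Walk.cons h2 SimpleGraph.Walk.nil))
    simpa using this
  have h0 : G.dist u v ≠ 0 := fun h0 => huv (hconn.dist_eq_zero_iff.mp h0)
  have h1' : G.dist u v ≠ 1 := fun h1' => hna (adj_of_dist_one h1')
  omega

/-- every clique extends to a maximal clique -/
lemma exists_maxclique {C : Set V} (hC : G.IsClique C) :
    ∃ D : Set V, IsMaxClique G D ∧ C ⊆ D := by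
  obtain ⟨m, hm, hmax⟩ := zorn_subset_nonempty {D : Set V | G.IsClique D}
    (fun c hcS hchain _ => by
      refine ⟨⋃₀ c, ?_, fun s hs => Set.subset_sUnion_of_mem hs⟩
      intro x hx y hy hxy
      obtain ⟨s, hs, hxs⟩ := hx
      obtain ⟨t, ht, hyt⟩ := hy
      rcases hchain.total hs ht with hst | hts
      · exact (hcS ht) (hst hxs) hyt hxy
      · exact (hcS hs) hxs (hts hyt) hxy) C hC
  exact ⟨m, ⟨hmax.prop, fun D hD hsub => hmax.eq_of_le hD hsub⟩, hm⟩

/-- absorption: a common neighbour of two distinct vertices of a maximal clique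
belongs to the clique (uses no K4 minus). -/
lemma absorb (hk4 : NoK4Minus G) {C : Set V} (hC : IsMaxClique G C)
    {p q t : V} (hp : p ∈ C) (hq : q ∈ C) (hpq : p ≠ q)
    (htp : G.Adj t p) (htq : G.Adj t q) : t ∈ C := by
  by_contra ht
  by_cases hall : ∀ c ∈ C, c ≠ t → G.Adj t c
  · -- C ∪ {t} is a clique
    have hclique : G.IsClique (insert t C) := by
      intro x hx y hy hxy
      rcases hx with rfl | hx
      · rcases hy with rfl | hy
        · exact absurd rfl hxy
        · exact hall y hy (fun h => hxy h.symm)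
      · rcases hy with rfl | hy
        · exact (hall x hx hxy).symm
        · exact hC.1 hx hy hxy
    have := hC.2 _ hclique (Set.subset_insert _ _)
    exact ht (this ▸ Set.mem_insert t C)
  · push_neg at hall
    obtain ⟨c, hc, hct, hnadj⟩ := hall
    have hcp : c ≠ p := fun h => hnadj (by rw [h]; exact htp)
    have hcq : c ≠ q := fun h => hnadj (by rw [h]; exact htq)
    exact hk4 ⟨t, c, p, q, fun h => hct h.symm, hC.1 hp hq hpq, htp, htq,
      (hC.1 hc hp hcp), (hC.1 hc hq hcq), hnadj⟩

/-- uniqueness of the maximal clique containing a given edge -/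
lemma maxclique_unique (hk4 : NoK4Minus G) {C D : Set V} (hC : IsMaxClique G C)
    (hD : IsMaxClique G D) {a b : V} (hab : a ≠ b)
    (haC : a ∈ C) (hbC : b ∈ C) (haD : a ∈ D) (hbD : b ∈ D) : C = D := by
  have hsub : C ⊆ D := by
    intro u hu
    by_cases hua : u = a
    · exact hua ▸ haD
    by_cases hub : u = b
    · exact hub ▸ hbD
    exact absorb hk4 hD haD hbD hab (hC.1 hu haC hua) (hC.1 hu hbC hub)
  exact hC.2 _ hD.1 hsub

/-- Gate of `x` in the clique `C`. -/
def CG (G : SimpleGraph V) (x : V) (C : Set V) (g : V) : Prop :=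
  g ∈ C ∧ ∀ z ∈ C, z ≠ g → G.dist x z = G.dist x g + 1

lemma CG.unique {x : V} {C : Set V} {g g' : V} (h : CG G x C g) (h' : CG G x C g') :
    g = g' := by
  by_contra hne
  have h1 := h.2 g' h'.1 (fun h => hne h.symm)
  have h2 := h'.2 g h.1 hne
  omega

lemma CG.dist_le {x : V} {C : Set V} {g : V} (h : CG G x C g) {z : V} (hz : z ∈ C) :
    G.dist x g ≤ G.dist x z := by
  by_cases hzg : z = g
  · exact hzg ▸ le_refl _
  · rw [h.2 z hz hzg]; omega

/-- cliques are gated (existence of a gate). Uses the triangle condition and no K4⁻. -/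
lemma clique_gated (hconn : G.Connected) (htri : TriangleCondition G) (hk4 : NoK4Minus G)
    {C : Set V} (hC : IsMaxClique G C) (hne : C.Nonempty) (x : V) :
    ∃ g, CG G x C g := by
  classical
  -- choose g minimizing the distance
  have hS : {n | ∃ z ∈ C, G.dist x z = n}.Nonempty := ⟨_, hne.choose, hne.choose_spec, rfl⟩
  obtain ⟨g, hgC, hgd⟩ := Nat.sInf_mem hS
  refine ⟨g, hgC, fun z hz hzg => ?_⟩
  have hmin : ∀ w ∈ C, G.dist x g ≤ G.dist x w := by
    intro w hw
    rw [hgd]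
    exact Nat.sInf_le ⟨w, hw, rfl⟩
  have hadj : G.Adj z g := hC.1 hz hgC hzg
  have hub : G.dist x z ≤ G.dist x g + 1 := dist_le_adj hconn hadj.symm
  have hlb : G.dist x g ≤ G.dist x z := hmin z hz
  rcases Nat.lt_or_ge (G.dist x z) (G.dist x g + 1) with hlt | hge
  · exfalso
    have heq : G.dist x z = G.dist x g := by omega
    obtain ⟨t, htz, htg, htd⟩ := htri x z g hadj heq
    -- t ∉ C since closer
    have htC : t ∉ C := by
      intro htC
      have := hmin t htC
      omega
    -- absorb: t adjacent to z, g ∈ C distinct ⇒ t ∈ C, contradiction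
    exact htC (absorb hk4 hC hz hgC hzg htz.symm htg.symm)
  · omega

section Matched

/-- Two maximal cliques matched by a perfect matching of edges (arising from a square). -/
structure Matched (G : SimpleGraph V) (C D : Set V) : Prop where
  maxC : IsMaxClique G C
  maxD : IsMaxClique G D
  disj : ∀ u ∈ C, u ∉ D
  exCD : ∀ u ∈ C, ∃ v ∈ D, G.Adj u v
  exDC : ∀ v ∈ D, ∃ u ∈ C, G.Adj u v
  uniqCD : ∀ u ∈ C, ∀ v ∈ D, ∀ v' ∈ D, G.Adj u v → G.Adj u v' → v = v'
  uniqDC : ∀ v ∈ D, ∀ u ∈ C, ∀ u' ∈ C, G.Adj u v → G.Adj u' v → u = u'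

lemma Matched.symm (h : Matched G C D) : Matched G D C where
  maxC := h.maxD
  maxD := h.maxC
  disj := fun v hv hvC => h.disj v hvC hv
  exCD := fun v hv => (h.exDC v hv).imp (fun u ⟨hu, ha⟩ => ⟨hu, ha.symm⟩)
  exDC := fun u hu => (h.exCD u hu).imp (fun v ⟨hv, ha⟩ => ⟨hv, ha.symm⟩)
  uniqCD := fun v hv u hu u' hu' h1 h2 => h.uniqDC v hv u hu u' hu' h1.symm h2.symm
  uniqDC := fun u hu v hv v' hv' h1 h2 => h.uniqCD u hu v hv v' hv' h1.symm h2.symm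

/-- A pair of adjacent vertices forms a clique. -/
lemma pair_clique {a b : V} (h : G.Adj a b) : G.IsClique {a, b} := by
  intro x hx y hy hxy
  simp only [Set.mem_insert_iff, Set.mem_singleton_iff] at hx hy
  rcases hx with rfl | rfl <;> rcases hy with rfl | rfl
  · exact absurd rfl hxy
  · exact h
  · exact h.symm
  · exact absurd rfl hxy

/-- Two maximal cliques on the opposite edges of an induced square are matched. -/
lemma matched_of_oppSquare (hconn : G.Connected) (htri : TriangleCondition G)
    (hk4 : NoK4Minus G) {a b c d : V}
    (hab : G.Adj a b) (hcd : G.Adj c d) (hac : G.Adj a c) (hbd : G.Adj b d)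
    (hnad : ¬ G.Adj a d) (hnbc : ¬ G.Adj b c) (hne_ad : a ≠ d) (hne_bc : b ≠ c)
    {C D : Set V} (hC : IsMaxClique G C) (haC : a ∈ C) (hbC : b ∈ C)
    (hD : IsMaxClique G D) (hcD : c ∈ D) (hdD : d ∈ D) :
    Matched G C D := by
  -- key side facts
  have hcC : c ∉ C := fun h => hnbc (hC.1 hbC h hne_bc)
  have hdC : d ∉ C := fun h => hnad (hC.1 haC h hne_ad)
  have haD : a ∉ D := fun h => hnad (hD.1 h hdD hne_ad)
  have hbD : b ∉ D := fun h => hnbc (hD.1 h hcD hne_bc)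
  -- interior vertices of C are not adjacent to c nor d
  have hintC : ∀ u ∈ C, u ≠ a → u ≠ b → (¬ G.Adj u c ∧ ¬ G.Adj u d ∧ u ≠ c ∧ u ≠ d) := by
    intro u hu hua hub
    have huc : u ≠ c := fun h => hcC (h ▸ hu)
    have hud : u ≠ d := fun h => hdC (h ▸ hu)
    refine ⟨fun hadj => ?_, fun hadj => ?_, huc, hud⟩
    · exact hk4 ⟨c, b, a, u, fun h => hne_bc h.symm, hC.1 haC hu (fun h => hua h.symm),
        hac.symm, hadj.symm, hab.symm, hC.1 hbC hu (fun h => hub h.symm),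
        fun h => hnbc h.symm⟩
    · exact hk4 ⟨d, a, b, u, fun h => hne_ad h.symm, hC.1 hbC hu (fun h => hub h.symm),
        hbd.symm, hadj.symm, hab, hC.1 haC hu (fun h => hua h.symm),
        fun h => hnad h.symm⟩
  have hintD : ∀ v ∈ D, v ≠ c → v ≠ d → (¬ G.Adj v a ∧ ¬ G.Adj v b ∧ v ≠ a ∧ v ≠ b) := by
    intro v hv hvc hvd
    have hva : v ≠ a := fun h => haD (h ▸ hv)
    have hvb : v ≠ b := fun h => hbD (h ▸ hv)
    refine ⟨fun hadj => ?_, fun hadj => ?_, hva, hvb⟩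
    · exact hk4 ⟨a, d, c, v, hne_ad, hD.1 hcD hv (fun h => hvc h.symm),
        hac, hadj.symm, hcd.symm, hD.1 hdD hv (fun h => hvd h.symm), hnad⟩
    · exact hk4 ⟨b, c, d, v, hne_bc, hD.1 hdD hv (fun h => hvd h.symm),
        hbd, hadj.symm, hcd, hD.1 hcD hv (fun h => hvc h.symm), hnbc⟩
  -- disjointness
  have hdisj : ∀ u ∈ C, u ∉ D := by
    intro u huC huD
    by_cases hua : u = a
    · subst hua; exact hnad (hD.1 huD hdD hne_ad)
    by_cases hub : u = b
    · subst hub; exact hnbc (hD.1 huD hcD hne_bc)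
    obtain ⟨hnc, hnd, huc, hud⟩ := hintC u huC hua hub
    exact hnc (hD.1 huD hcD huc)
  -- existence of partners (C to D)
  have hex : ∀ u ∈ C, ∃ v ∈ D, G.Adj u v := by
    intro u huC
    by_cases hua : u = a
    · exact ⟨c, hcD, hua ▸ hac⟩
    by_cases hub : u = b
    · exact ⟨d, hdD, hub ▸ hbd⟩
    obtain ⟨hnc, hnd, huc, hud⟩ := hintC u huC hua hub
    have hd1 : G.dist u c = 2 :=
      dist_eq_two hconn huc hnc (hC.1 huC haC hua) hac
    have hd2 : G.dist u d = 2 :=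
      dist_eq_two hconn hud hnd (hC.1 huC hbC hub) hbd
    obtain ⟨s, hsc, hsd, hsdist⟩ := htri u c d hcd (hd1.trans hd2.symm)
    have hus : G.Adj u s := adj_of_dist_one (by omega)
    exact ⟨s, absorb hk4 hD hcD hdD hcd.ne hsc.symm hsd.symm, hus⟩
  have hexD : ∀ v ∈ D, ∃ u ∈ C, G.Adj u v := by
    intro v hvD
    by_cases hvc : v = c
    · exact ⟨a, haC, hvc ▸ hac⟩
    by_cases hvd : v = d
    · exact ⟨b, hbC, hvd ▸ hbd⟩
    obtain ⟨hna, hnb, hva, hvb⟩ := hintD v hvD hvc hvd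
    have hd1 : G.dist v a = 2 :=
      dist_eq_two hconn hva hna (hD.1 hvD hcD hvc) hac.symm
    have hd2 : G.dist v b = 2 :=
      dist_eq_two hconn hvb hnb (hD.1 hvD hdD hvd) hbd.symm
    obtain ⟨s, hsa, hsb, hsdist⟩ := htri v a b hab (hd1.trans hd2.symm)
    have hvs : G.Adj v s := adj_of_dist_one (by omega)
    exact ⟨s, absorb hk4 hC haC hbC hab.ne hsa.symm hsb.symm, hvs.symm⟩
  -- uniqueness (C side)
  have huniq : ∀ u ∈ C, ∀ v ∈ D, ∀ v' ∈ D, G.Adj u v → G.Adj u v' → v = v' := by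
    intro u huC v hvD v' hv'D h1 h2
    by_contra hvv'
    by_cases hua : u = a
    · subst hua
      have hvd : v ≠ d := fun h => hnad (h ▸ h1)
      have hv'd : v' ≠ d := fun h => hnad (h ▸ h2)
      exact hk4 ⟨u, d, v, v', hne_ad, hD.1 hvD hv'D hvv', h1, h2,
        hD.1 hdD hvD (fun h => hvd h.symm), hD.1 hdD hv'D (fun h => hv'd h.symm), hnad⟩
    by_cases hub : u = b
    · subst hub
      have hvc : v ≠ c := fun h => hnbc (h ▸ h1)
      have hv'c : v' ≠ c := fun h => hnbc (h ▸ h2)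
      exact hk4 ⟨u, c, v, v', hne_bc, hD.1 hvD hv'D hvv', h1, h2,
        hD.1 hcD hvD (fun h => hvc h.symm), hD.1 hcD hv'D (fun h => hv'c h.symm), hnbc⟩
    obtain ⟨hnc, hnd, huc, hud⟩ := hintC u huC hua hub
    have hvc : v ≠ c := fun h => hnc (h ▸ h1)
    have hv'c : v' ≠ c := fun h => hnc (h ▸ h2)
    exact hk4 ⟨u, c, v, v', huc, hD.1 hvD hv'D hvv', h1, h2,
      hD.1 hcD hvD (fun h => hvc h.symm), hD.1 hcD hv'D (fun h => hv'c h.symm), hnc⟩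
  have huniqD : ∀ v ∈ D, ∀ u ∈ C, ∀ u' ∈ C, G.Adj u v → G.Adj u' v → u = u' := by
    intro v hvD u huC u' hu'C h1 h2
    by_contra huu'
    by_cases hvc : v = c
    · subst hvc
      have hub : u ≠ b := fun h => hnbc (by rw [← h]; exact h1)
      have hu'b : u' ≠ b := fun h => hnbc (by rw [← h]; exact h2)
      exact hk4 ⟨v, b, u, u', fun h => hne_bc h.symm, hC.1 huC hu'C huu', h1.symm, h2.symm,
        hC.1 hbC huC (fun h => hub h.symm), hC.1 hbC hu'C (fun h => hu'b h.symm),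
        fun h => hnbc h.symm⟩
    by_cases hvd : v = d
    · subst hvd
      have hua : u ≠ a := fun h => hnad (by rw [← h]; exact h1)
      have hu'a : u' ≠ a := fun h => hnad (by rw [← h]; exact h2)
      exact hk4 ⟨v, a, u, u', fun h => hne_ad h.symm, hC.1 huC hu'C huu', h1.symm, h2.symm,
        hC.1 haC huC (fun h => hua h.symm), hC.1 haC hu'C (fun h => hu'a h.symm),
        fun h => hnad h.symm⟩
    obtain ⟨hna, hnb, hva, hvb⟩ := hintD v hvD hvc hvd
    have hua : u ≠ a := fun h => hna (by rw [← h]; exact h1.symm)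
    have hu'a : u' ≠ a := fun h => hna (by rw [← h]; exact h2.symm)
    exact hk4 ⟨v, a, u, u', hva, hC.1 huC hu'C huu', h1.symm, h2.symm,
      hC.1 haC huC (fun h => hua h.symm), hC.1 haC hu'C (fun h => hu'a h.symm), hna⟩
  exact ⟨hC, hD, hdisj, hex, hexD, huniq, huniqD⟩

end Matched

section Transport

/-- Any vertex of a clique is its own gate. -/
lemma CG_self {C : Set V} (hC : IsMaxClique G C) {z : V} (hz : z ∈ C) : CG G z C z := by
  refine ⟨hz, fun w hw hwz => ?_⟩
  rw [SimpleGraph.dist_self, dist_of_adj (hC.1 hw hz hwz).symm]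

/-- Gate recognition: a vertex adjacent to exactly one vertex of a clique not containing it
is gated by that vertex. -/
lemma CG_of_unique_adj (hconn : G.Connected) {C : Set V} (hC : IsMaxClique G C)
    {ρ g : V} (hg : g ∈ C) (hρC : ρ ∉ C) (hadj : G.Adj ρ g)
    (hno : ∀ z ∈ C, z ≠ g → ¬ G.Adj ρ z) : CG G ρ C g := by
  refine ⟨hg, fun z hz hzg => ?_⟩
  rw [dist_of_adj hadj]
  exact dist_eq_two hconn (fun h => hρC (h ▸ hz)) (hno z hz hzg) hadj (hC.1 hg hz (fun h => hzg h.symm))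

/-- Gate transport across a matched pair (the "skew-kill", using the quadrangle
condition and the absence of K_{3,2}). -/
lemma Matched.adj_gates (hconn : G.Connected) (hquad : QuadrangleCondition G)
    (hk4 : NoK4Minus G) (hk32 : NoK32 G) {C D : Set V} (hM : Matched G C D)
    {x p q : V} (hp : CG G x C p) (hq : CG G x D q) : G.Adj p q := by
  by_contra hnadj
  obtain ⟨v, hvD, hpv⟩ := hM.exCD p hp.1
  have hvq : v ≠ q := fun h => hnadj (h ▸ hpv)
  obtain ⟨u₀, hu₀C, hu₀q⟩ := hM.exDC q hq.1
  have hu₀p : u₀ ≠ p := fun h => hnadj (by rw [← h]; exact hu₀q)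
  have hPu₀ : G.dist x u₀ = G.dist x p + 1 := hp.2 u₀ hu₀C hu₀p
  have hRv : G.dist x v = G.dist x q + 1 := hq.2 v hvD hvq
  have h1 : G.dist x u₀ ≤ G.dist x q + 1 := dist_le_adj hconn hu₀q.symm
  have h2 : G.dist x v ≤ G.dist x p + 1 := dist_le_adj hconn hpv
  have hR : G.dist x q = G.dist x p := by omega
  have hpq : p ≠ q := fun h => hM.disj p hp.1 (h ▸ hq.1)
  have hPpos : 0 < G.dist x p := by
    rcases Nat.eq_zero_or_pos (G.dist x p) with h0 | h
    · exfalso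
      have hxp : x = p := hconn.dist_eq_zero_iff.mp h0
      have hxq : x = q := hconn.dist_eq_zero_iff.mp (by omega)
      exact hpq (hxp ▸ hxq)
    · exact h
  obtain ⟨s, hsp, hsq, hsd⟩ := hquad x u₀ p q (hM.maxC.1 hu₀C hp.1 hu₀p) hu₀q hpq
    (by omega) (by omega)
  refine hk32 ⟨u₀, v, s, p, q, ?_, ?_, ?_, hpq, hM.maxC.1 hu₀C hp.1 hu₀p, hu₀q,
    hpv.symm, hM.maxD.1 hvD hq.1 hvq, hsp.symm, hsq.symm, ?_, ?_, ?_, hnadj⟩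
  · exact fun h => hM.disj u₀ hu₀C (h ▸ hvD)
  · intro h; rw [h] at hPu₀; omega
  · intro h; rw [h] at hRv; omega
  · intro h
    exact hvq (hM.uniqCD u₀ hu₀C v hvD q hq.1 h hu₀q)
  · intro h
    -- s adjacent to u₀ and p ∈ C ⇒ s ∈ C, distance contradiction
    have hsC : s ∈ C := absorb hk4 hM.maxC hu₀C hp.1 hu₀p h.symm hsp.symm
    by_cases hsp' : s = p
    · rw [hsp'] at hsd; omega
    · have := hp.2 s hsC hsp'; omega
  · intro h
    have hsD : s ∈ D := absorb hk4 hM.maxD hvD hq.1 hvq h.symm hsq.symm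
    by_cases hsq' : s = q
    · rw [hsq'] at hsd; omega
    · have := hq.2 s hsD hsq'; omega

/-- Chains of matched cliques. -/
def MChain (G : SimpleGraph V) : Set V → Set V → Prop :=
  Relation.ReflTransGen (fun C D => Matched G C D)

lemma MChain.symm {C D : Set V} (h : MChain G C D) : MChain G D C := by
  induction h with
  | refl => exact Relation.ReflTransGen.refl
  | tail _ hstep ih =>
      exact Relation.ReflTransGen.trans (Relation.ReflTransGen.single hstep.symm) ih

lemma MChain.trans' {C D E : Set V} (h : MChain G C D) (h' : MChain G D E) : MChain G C E :=
  Relation.ReflTransGen.trans h h'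

/-- Transport of gate-(in)equality along a chain of matched cliques. -/
lemma MChain.gate_iff (hconn : G.Connected) (htri : TriangleCondition G)
    (hquad : QuadrangleCondition G) (hk4 : NoK4Minus G) (hk32 : NoK32 G)
    {C D : Set V} (hch : MChain G C D) :
    ∀ (hC : IsMaxClique G C), C.Nonempty → ∀ (ρ σ p p' q q' : V),
      CG G ρ C p → CG G σ C p' → CG G ρ D q → CG G σ D q' → (p = p' ↔ q = q') := by
  induction hch using Relation.ReflTransGen.head_induction_on with
  | refl =>
      intro hC hCne ρ σ p p' q q' hp hp' hq hq'
      rw [hp.unique hq, hp'.unique hq']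
  | head hstep hch ih =>
      rename_i C C₁
      intro hC hCne ρ σ p p' q q' hp hp' hq hq'
      have hC₁ : IsMaxClique G C₁ := hstep.maxD
      have hC₁ne : C₁.Nonempty := by
        obtain ⟨u, hu⟩ := hCne
        obtain ⟨v, hv, _⟩ := hstep.exCD u hu
        exact ⟨v, hv⟩
      obtain ⟨pc, hpc⟩ := clique_gated hconn htri hk4 hC₁ hC₁ne ρ
      obtain ⟨pc', hpc'⟩ := clique_gated hconn htri hk4 hC₁ hC₁ne σ
      have h1 : G.Adj p pc := hstep.adj_gates hconn hquad hk4 hk32 hp hpc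
      have h2 : G.Adj p' pc' := hstep.adj_gates hconn hquad hk4 hk32 hp' hpc'
      have key : (p = p') ↔ (pc = pc') := by
        constructor
        · intro h
          exact hstep.uniqCD p hp.1 pc hpc.1 pc' hpc'.1 h1 (h ▸ h2)
        · intro h
          exact hstep.uniqDC pc hpc.1 p hp.1 p' hp'.1 h1 (h ▸ h2)
      rw [key]
      exact ih hC₁ hC₁ne ρ σ pc pc' q q' hpc hpc' hq hq'

end Transport

section Hyperplane

variable {J : Set (Sym2 V)} {e₀ : Sym2 V}

/-- base relation generating hyperplanes -/
abbrev HRel (G : SimpleGraph V) : Sym2 V → Sym2 V → Prop :=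
  fun e f => e ∈ G.edgeSet ∧ f ∈ G.edgeSet ∧ (SameClique G e f ∨ OppSquare G e f)

lemma sameClique_symm {e f : Sym2 V} (h : SameClique G e f) : SameClique G f e := by
  obtain ⟨C, hC, h1, h2⟩ := h; exact ⟨C, hC, h2, h1⟩

lemma oppSquare_symm {e f : Sym2 V} (h : OppSquare G e f) : OppSquare G f e := by
  obtain ⟨a, b, c, d, rfl, rfl, hab, hcd, hac, hbd, hnad, hnbc, had, hbc⟩ := h
  exact ⟨c, d, a, b, rfl, rfl, hcd, hab, hac.symm, hbd.symm,
    fun h => hnbc h.symm, fun h => hnad h.symm, fun h => hbc h.symm, fun h => had h.symm⟩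

lemma J_edge (hJdef : J = {f | f ∈ G.edgeSet ∧ HypRel G e₀ f}) {f : Sym2 V} (hf : f ∈ J) :
    f ∈ G.edgeSet := by rw [hJdef] at hf; exact hf.1

lemma J_step (hJdef : J = {f | f ∈ G.edgeSet ∧ HypRel G e₀ f}) {f g : Sym2 V} (hf : f ∈ J)
    (hgE : g ∈ G.edgeSet) (h : SameClique G f g ∨ OppSquare G f g) : g ∈ J := by
  rw [hJdef] at hf ⊢
  exact ⟨hgE, Relation.EqvGen.trans _ _ _ hf.2 (Relation.EqvGen.rel _ _ ⟨hf.1, hgE, h⟩)⟩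

lemma J_eqv (hJdef : J = {f | f ∈ G.edgeSet ∧ HypRel G e₀ f}) {f g : Sym2 V}
    (h : Relation.EqvGen (HRel G) f g) : (f ∈ J ↔ g ∈ J) := by
  induction h with
  | rel x y hr =>
      obtain ⟨hxE, hyE, hor⟩ := hr
      constructor
      · intro hx; exact J_step hJdef hx hyE hor
      · intro hy
        exact J_step hJdef hy hxE (hor.imp sameClique_symm oppSquare_symm)
  | refl x => exact Iff.rfl
  | symm x y _ ih => exact ih.symm
  | trans x y z _ _ ih1 ih2 => exact ih1.trans ih2

lemma clique_edge_J (hJdef : J = {f | f ∈ G.edgeSet ∧ HypRel G e₀ f}) {f : Sym2 V}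
    (hf : f ∈ J) {C : Set V} (hC : IsMaxClique G C) (hE : EdgeOf C f)
    {u v : V} (hu : u ∈ C) (hv : v ∈ C) (huv : u ≠ v) : s(u, v) ∈ J := by
  have hadj : G.Adj u v := hC.1 hu hv huv
  refine J_step hJdef hf (G.mem_edgeSet.mpr hadj) (Or.inl ⟨C, hC, hE, fun w hw => ?_⟩)
  rcases Sym2.mem_iff.mp hw with rfl | rfl
  exacts [hu, hv]

lemma exists_clique_on_edge {f : Sym2 V} (hf : f ∈ G.edgeSet) :
    ∃ C, IsMaxClique G C ∧ EdgeOf C f := by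
  induction f using Sym2.ind with
  | _ a b =>
    have hab : G.Adj a b := hf
    obtain ⟨C, hC, hsub⟩ := exists_maxclique (pair_clique hab)
    refine ⟨C, hC, fun v hv => ?_⟩
    rcases Sym2.mem_iff.mp hv with rfl | rfl
    · exact hsub (Set.mem_insert _ _)
    · exact hsub (Set.mem_insert_of_mem _ rfl)

lemma maxclique_unique_edge (hk4 : NoK4Minus G) {f : Sym2 V} (hfE : f ∈ G.edgeSet)
    {A B : Set V} (hA : IsMaxClique G A) (hEA : EdgeOf A f)
    (hB : IsMaxClique G B) (hEB : EdgeOf B f) : A = B := by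
  induction f using Sym2.ind with
  | _ a b =>
    have hab : G.Adj a b := hfE
    exact maxclique_unique hk4 hA hB hab.ne (hEA a (Sym2.mem_mk_left a b))
      (hEA b (Sym2.mem_mk_right a b)) (hEB a (Sym2.mem_mk_left a b))
      (hEB b (Sym2.mem_mk_right a b))

lemma matched_of_oppSquare_edges (hconn : G.Connected) (htri : TriangleCondition G)
    (hk4 : NoK4Minus G) {f g : Sym2 V} (hopp : OppSquare G f g)
    {A B : Set V} (hA : IsMaxClique G A) (hEA : EdgeOf A f)
    (hB : IsMaxClique G B) (hEB : EdgeOf B g) : Matched G A B := by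
  obtain ⟨a, b, c, d, rfl, rfl, hab, hcd, hac, hbd, hnad, hnbc, had, hbc⟩ := hopp
  exact matched_of_oppSquare hconn htri hk4 hab hcd hac hbd hnad hnbc had hbc hA
    (hEA a (Sym2.mem_mk_left a b)) (hEA b (Sym2.mem_mk_right a b))
    hB (hEB c (Sym2.mem_mk_left c d)) (hEB d (Sym2.mem_mk_right c d))

/-- Any two maximal cliques carrying edges of `J` are connected by a chain of
matched cliques. -/
lemma mchain_of_J (hconn : G.Connected) (htri : TriangleCondition G) (hk4 : NoK4Minus G)
    (hJdef : J = {f | f ∈ G.edgeSet ∧ HypRel G e₀ f}) :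
    ∀ {f g : Sym2 V}, Relation.EqvGen (HRel G) f g → f ∈ J → g ∈ J →
      ∀ {A B : Set V}, IsMaxClique G A → EdgeOf A f → IsMaxClique G B → EdgeOf B g →
        MChain G A B := by
  intro f g heqv
  induction heqv with
  | rel x y hr =>
      intro hx hy A B hA hEA hB hEB
      obtain ⟨hxE, hyE, hor⟩ := hr
      rcases hor with hsc | hopp
      · obtain ⟨C0, hC0, hEx, hEy⟩ := hsc
        have h1 : A = C0 := maxclique_unique_edge hk4 hxE hA hEA hC0 hEx
        have h2 : B = C0 := maxclique_unique_edge hk4 hyE hB hEB hC0 hEy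
        rw [h1, h2]; exact Relation.ReflTransGen.refl
      · exact Relation.ReflTransGen.single
          (matched_of_oppSquare_edges hconn htri hk4 hopp hA hEA hB hEB)
  | refl x =>
      intro hx _ A B hA hEA hB hEB
      rw [maxclique_unique_edge hk4 (J_edge hJdef hx) hA hEA hB hEB]
      exact Relation.ReflTransGen.refl
  | symm x y h ih =>
      intro hy hx A B hA hEA hB hEB
      exact (ih hx hy hB hEB hA hEA).symm
  | trans x y z h1 h2 ih1 ih2 =>
      intro hx hz A B hA hEA hB hEB
      have hyJ : y ∈ J := (J_eqv hJdef h1).mp hx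
      obtain ⟨Ch, hCh, hECh⟩ := exists_clique_on_edge (J_edge hJdef hyJ)
      exact (ih1 hx hyJ hA hEA hCh hECh).trans' (ih2 hyJ hz hCh hECh hB hEB)

lemma mchain_J (hconn : G.Connected) (htri : TriangleCondition G) (hk4 : NoK4Minus G)
    (hJdef : J = {f | f ∈ G.edgeSet ∧ HypRel G e₀ f})
    {f g : Sym2 V} (hf : f ∈ J) (hg : g ∈ J)
    {A B : Set V} (hA : IsMaxClique G A) (hEA : EdgeOf A f)
    (hB : IsMaxClique G B) (hEB : EdgeOf B g) : MChain G A B := by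
  have h1 : HypRel G e₀ f := by rw [hJdef] at hf; exact hf.2
  have h2 : HypRel G e₀ g := by rw [hJdef] at hg; exact hg.2
  exact mchain_of_J hconn htri hk4 hJdef
    (Relation.EqvGen.trans _ _ _ (Relation.EqvGen.symm _ _ h1) h2) hf hg hA hEA hB hEB

end Hyperplane

section Closure

variable {J : Set (Sym2 V)} {e₀ : Sym2 V}

/-- vertices of the hyperplane neighbourhood -/
def NV (J : Set (Sym2 V)) : Set V := {v | ∃ e ∈ J, v ∈ e}

lemma mem_NV_of_J {a b : V} (h : s(a, b) ∈ J) : a ∈ NV J :=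
  ⟨s(a, b), h, Sym2.mem_mk_left a b⟩

lemma mem_NV_of_J' {a b : V} (h : s(a, b) ∈ J) : b ∈ NV J :=
  ⟨s(a, b), h, Sym2.mem_mk_right a b⟩

/-- every vertex of `N(J)` lies in a maximal clique all of whose edges belong to `J`. -/
lemma exists_jclique (hJdef : J = {f | f ∈ G.edgeSet ∧ HypRel G e₀ f})
    {a : V} (ha : a ∈ NV J) :
    ∃ (A : Set V) (a2 : V), IsMaxClique G A ∧ a ∈ A ∧ a2 ∈ A ∧ a2 ≠ a ∧
      s(a, a2) ∈ J ∧ EdgeOf A s(a, a2) ∧ (∀ u ∈ A, ∀ v ∈ A, u ≠ v → s(u, v) ∈ J) := by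
  obtain ⟨e, heJ, hae⟩ := ha
  obtain ⟨b, rfl⟩ := Sym2.mem_iff_exists.mp hae
  have hadj : G.Adj a b := G.mem_edgeSet.mp (J_edge hJdef heJ)
  obtain ⟨A, hA, hEA⟩ := exists_clique_on_edge (J_edge hJdef heJ)
  have haA : a ∈ A := hEA a (Sym2.mem_mk_left a b)
  have hbA : b ∈ A := hEA b (Sym2.mem_mk_right a b)
  exact ⟨A, b, hA, haA, hbA, hadj.ne', heJ, hEA,
    fun u hu v hv huv => clique_edge_J hJdef heJ hA hEA hu hv huv⟩

/-- Triangle closure: a common neighbour of two adjacent vertices of `N(J)`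
belongs to `N(J)`. -/
lemma Htri (hconn : G.Connected) (htri : TriangleCondition G) (hquad : QuadrangleCondition G)
    (hk4 : NoK4Minus G) (hk32 : NoK32 G)
    (hJdef : J = {f | f ∈ G.edgeSet ∧ HypRel G e₀ f})
    {a b t : V} (ha : a ∈ NV J) (hb : b ∈ NV J) (hab : G.Adj a b)
    (hta : G.Adj t a) (htb : G.Adj t b) : t ∈ NV J := by
  classical
  by_cases hJab : s(a, b) ∈ J
  · -- the easy case: the edge ab is itself in J
    obtain ⟨C, hC, hEC⟩ := exists_clique_on_edge (J_edge hJdef hJab)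
    have haC : a ∈ C := hEC a (Sym2.mem_mk_left a b)
    have hbC : b ∈ C := hEC b (Sym2.mem_mk_right a b)
    have htC : t ∈ C := absorb hk4 hC haC hbC hab.ne hta htb
    exact mem_NV_of_J (clique_edge_J hJdef hJab hC hEC htC haC hta.ne)
  -- J-cliques at a and b
  obtain ⟨A, a2, hA, haA, ha2A, ha2a, hJa2, hEA, hAJ⟩ := exists_jclique hJdef ha
  obtain ⟨B, b2, hB, hbB, hb2B, hb2b, hJb2, hEB, hBJ⟩ := exists_jclique hJdef hb
  -- preprocessing on the A side
  by_cases htmemA : t ∈ A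
  · exact mem_NV_of_J (hAJ t htmemA a haA hta.ne)
  by_cases hexA : ∃ z ∈ A, z ≠ a ∧ G.Adj t z
  · obtain ⟨z, hz, hza, htz⟩ := hexA
    have : t ∈ A := absorb hk4 hA haA hz (Ne.symm hza) hta htz
    exact mem_NV_of_J (hAJ t this a haA hta.ne)
  push_neg at hexA
  -- preprocessing on the B side
  by_cases htmemB : t ∈ B
  · exact mem_NV_of_J (hBJ t htmemB b hbB htb.ne)
  by_cases hexB : ∃ z ∈ B, z ≠ b ∧ G.Adj t z
  · obtain ⟨z, hz, hzb, htz⟩ := hexB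
    have : t ∈ B := absorb hk4 hB hbB hz (Ne.symm hzb) htb htz
    exact mem_NV_of_J (hBJ t this b hbB htb.ne)
  push_neg at hexB
  -- b has no neighbours in A besides a, and is not in A
  have hbA : b ∉ A := fun h => hJab (hAJ a haA b h hab.ne)
  have hnoBA : ∀ z ∈ A, z ≠ a → ¬ G.Adj b z := fun z hz hza hadj =>
    hbA (absorb hk4 hA haA hz (Ne.symm hza) hab.symm hadj)
  have haB : a ∉ B := fun h => hJab (hBJ a h b hbB hab.ne)
  have hnoAB : ∀ z ∈ B, z ≠ b → ¬ G.Adj a z := fun z hz hzb hadj =>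
    haB (absorb hk4 hB hbB hz (Ne.symm hzb) hab hadj)
  -- gates
  have hCGbA : CG G b A a := CG_of_unique_adj hconn hA haA hbA hab.symm hnoBA
  have hCGtA : CG G t A a := CG_of_unique_adj hconn hA haA htmemA hta hexA
  have hCGaB : CG G a B b := CG_of_unique_adj hconn hB hbB haB hab hnoAB
  have hCGtB : CG G t B b := CG_of_unique_adj hconn hB hbB htmemB htb hexB
  have hCGbB : CG G b B b := CG_self hB hbB
  have hAne : A.Nonempty := ⟨a, haA⟩
  have hBne : B.Nonempty := ⟨b, hbB⟩
  -- chain from A to B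
  have hch : MChain G A B := mchain_J hconn htri hk4 hJdef hJa2 hJb2 hA hEA hB hEB
  -- gate of the companion a2 in B
  obtain ⟨v₂, hv₂⟩ := clique_gated hconn htri hk4 hB hBne a2
  have hiff := hch.gate_iff hconn htri hquad hk4 hk32 hA hAne b a2 a a2 b v₂
    hCGbA (CG_self hA ha2A) hCGbB hv₂
  have hv₂b : v₂ ≠ b := fun h => (Ne.symm ha2a) (hiff.mpr h.symm)
  -- the partner of a2 in B is adjacent to it
  have ha2b : a2 ≠ b := fun h => hbA (h ▸ ha2A)
  have hna2b : ¬ G.Adj a2 b := fun hadj => hnoBA a2 ha2A ha2a hadj.symm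
  have hda2b : G.dist a2 b = 2 :=
    dist_eq_two hconn ha2b hna2b (hA.1 ha2A haA ha2a) hab
  have hda2v₂ : G.dist a2 b = G.dist a2 v₂ + 1 := hv₂.2 b hbB (Ne.symm hv₂b)
  have hadj_a2v₂ : G.Adj a2 v₂ := adj_of_dist_one (by omega)
  -- t is at distance two from both a2 and v₂
  have hdta2 : G.dist t a2 = 2 := by
    rw [hCGtA.2 a2 ha2A ha2a, dist_of_adj hta]
  have hdtv₂ : G.dist t v₂ = 2 := by
    rw [hCGtB.2 v₂ hv₂.1 hv₂b, dist_of_adj htb]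
  obtain ⟨s, hsa2, hsv₂, hsd⟩ := htri t a2 v₂ hadj_a2v₂ (hdta2.trans hdtv₂.symm)
  rw [hdta2] at hsd
  have hts : G.Adj t s := adj_of_dist_one (by omega)
  by_cases hsa : G.Adj s a
  · exact absurd hts
      (hexA s (absorb hk4 hA haA ha2A (Ne.symm ha2a) hsa hsa2.symm) hsa.ne)
  · have hsna : s ≠ a := by
      intro h
      subst h
      have h1 := hCGaB.2 v₂ hv₂.1 hv₂b
      rw [dist_of_adj hab] at h1
      have h2 : G.dist s v₂ = 1 := dist_of_adj hsv₂.symm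
      omega
    have hopp : OppSquare G s(a, a2) s(t, s) :=
      ⟨a, a2, t, s, rfl, rfl, hA.1 haA ha2A (Ne.symm ha2a), hts, hta.symm, hsa2,
        fun h => hsa h.symm, fun h => hexA a2 ha2A ha2a h.symm,
        fun h => hsna h.symm, fun h => htmemA (by rw [← h]; exact ha2A)⟩
    exact mem_NV_of_J (J_step hJdef hJa2 (G.mem_edgeSet.mpr hts) (Or.inr hopp))

end Closure

section HSLsec

variable {J : Set (Sym2 V)} {e₀ : Sym2 V}

/-- The hard square closure: in an induced square `a–t–b–w` with `a, b, w ∈ N(J)`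
and the edges `wa`, `wb` not in `J`, the fourth corner `t` is in `N(J)`. -/
lemma HSL (hconn : G.Connected) (htri : TriangleCondition G) (hquad : QuadrangleCondition G)
    (hk4 : NoK4Minus G) (hk32 : NoK32 G)
    (hJdef : J = {f | f ∈ G.edgeSet ∧ HypRel G e₀ f})
    {a b w t : V} (ha : a ∈ NV J) (hb : b ∈ NV J) (hw : w ∈ NV J)
    (hwa : G.Adj w a) (hwb : G.Adj w b) (hanb : ¬ G.Adj a b) (hab : a ≠ b)
    (hta : G.Adj t a) (htb : G.Adj t b) (hntw : ¬ G.Adj t w) (htw : t ≠ w)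
    (hJwa : s(w, a) ∉ J) (hJwb : s(w, b) ∉ J) : t ∈ NV J := by
  classical
  obtain ⟨W, w2, hW, hwW, hw2W, hw2w, hJw2, hEW, hWJ⟩ := exists_jclique hJdef hw
  obtain ⟨A, a2, hA, haA, ha2A, _, hJa2, hEA, hAJ⟩ := exists_jclique hJdef ha
  obtain ⟨B, b2, hB, hbB, hb2B, _, hJb2, hEB, hBJ⟩ := exists_jclique hJdef hb
  -- a and b have no contact with W except through w
  have haW : a ∉ W := fun h => hJwa (hWJ w hwW a h hwa.ne)
  have hnoAW : ∀ z ∈ W, z ≠ w → ¬ G.Adj a z := fun z hz hzw hadj =>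
    haW (absorb hk4 hW hwW hz (Ne.symm hzw) hwa.symm hadj)
  have hbW : b ∉ W := fun h => hJwb (hWJ w hwW b h hwb.ne)
  have hnoBW : ∀ z ∈ W, z ≠ w → ¬ G.Adj b z := fun z hz hzw hadj =>
    hbW (absorb hk4 hW hwW hz (Ne.symm hzw) hwb.symm hadj)
  -- t has no contact with W at all (else we are done)
  have htW : t ∉ W := fun h => hntw (hW.1 h hwW htw)
  by_cases hexW : ∃ w' ∈ W, w' ≠ w ∧ G.Adj t w'
  · obtain ⟨w', hw'W, hw'w, htw'⟩ := hexW
    have hopp : OppSquare G s(w, w') s(a, t) :=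
      ⟨w, w', a, t, rfl, rfl, hW.1 hwW hw'W (Ne.symm hw'w), hta.symm, hwa, htw'.symm,
        fun h => hntw h.symm, fun h => hnoAW w' hw'W hw'w h.symm,
        Ne.symm htw, fun h => haW (h ▸ hw'W)⟩
    exact mem_NV_of_J'
      (J_step hJdef (hWJ w hwW w' hw'W (Ne.symm hw'w)) (G.mem_edgeSet.mpr hta.symm)
        (Or.inr hopp))
  push_neg at hexW
  -- distances from t to W
  have hdtw : G.dist t w = 2 := dist_eq_two hconn htw hntw hta hwa.symm
  have hWne : W.Nonempty := ⟨w, hwW⟩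
  have hAne : A.Nonempty := ⟨a, haA⟩
  have hBne : B.Nonempty := ⟨b, hbB⟩
  have hCGtW : CG G t W w := by
    obtain ⟨g, hg⟩ := clique_gated hconn htri hk4 hW hWne t
    by_cases hgw : g = w
    · exact hgw ▸ hg
    · exfalso
      have h1 := hg.2 w hwW (fun h => hgw h.symm)
      rw [hdtw] at h1
      have h2 : G.Adj t g := adj_of_dist_one (by omega)
      exact hexW g hg.1 hgw h2
  -- t and A
  by_cases htmemA : t ∈ A
  · exact mem_NV_of_J (hAJ t htmemA a haA hta.ne)
  by_cases hexA : ∃ z ∈ A, z ≠ a ∧ G.Adj t z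
  · obtain ⟨z, hz, hza, htz⟩ := hexA
    have : t ∈ A := absorb hk4 hA haA hz (Ne.symm hza) hta htz
    exact mem_NV_of_J (hAJ t this a haA hta.ne)
  push_neg at hexA
  have hCGtA : CG G t A a := CG_of_unique_adj hconn hA haA htmemA hta hexA
  -- t and B
  by_cases htmemB : t ∈ B
  · exact mem_NV_of_J (hBJ t htmemB b hbB htb.ne)
  by_cases hexB : ∃ z ∈ B, z ≠ b ∧ G.Adj t z
  · obtain ⟨z, hz, hzb, htz⟩ := hexB
    have : t ∈ B := absorb hk4 hB hbB hz (Ne.symm hzb) htb htz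
    exact mem_NV_of_J (hBJ t this b hbB htb.ne)
  push_neg at hexB
  have hCGtB : CG G t B b := CG_of_unique_adj hconn hB hbB htmemB htb hexB
  -- w and A, B
  have hwA : w ∉ A := fun h => hJwa (hAJ w h a haA hwa.ne)
  have hnoWA : ∀ z ∈ A, z ≠ a → ¬ G.Adj w z := fun z hz hza hadj =>
    hwA (absorb hk4 hA haA hz (Ne.symm hza) hwa hadj)
  have hCGwA : CG G w A a := CG_of_unique_adj hconn hA haA hwA hwa hnoWA
  have hwB : w ∉ B := fun h => hJwb (hBJ w h b hbB hwb.ne)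
  have hnoWB : ∀ z ∈ B, z ≠ b → ¬ G.Adj w z := fun z hz hzb hadj =>
    hwB (absorb hk4 hB hbB hz (Ne.symm hzb) hwb hadj)
  have hCGwB : CG G w B b := CG_of_unique_adj hconn hB hbB hwB hwb hnoWB
  -- a, b and W (gates)
  have hCGaW : CG G a W w := CG_of_unique_adj hconn hW hwW haW hwa.symm hnoAW
  have hCGbW : CG G b W w := CG_of_unique_adj hconn hW hwW hbW hwb.symm hnoBW
  -- chains
  have hchWA : MChain G W A := mchain_J hconn htri hk4 hJdef hJw2 hJa2 hW hEW hA hEA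
  have hchWB : MChain G W B := mchain_J hconn htri hk4 hJdef hJw2 hJb2 hW hEW hB hEB
  -- gate of b in A is a
  have hCGbA : CG G b A a := by
    obtain ⟨g, hg⟩ := clique_gated hconn htri hk4 hA hAne b
    have hiff := hchWA.gate_iff hconn htri hquad hk4 hk32 hW hWne b a w w g a
      hCGbW hCGaW hg (CG_self hA haA)
    rw [hiff.mp rfl] at hg
    exact hg
  -- gate of a in B is b
  have hCGaB : CG G a B b := by
    obtain ⟨g, hg⟩ := clique_gated hconn htri hk4 hB hBne a
    have hiff := hchWB.gate_iff hconn htri hquad hk4 hk32 hW hWne a b w w g b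
      hCGaW hCGbW hg (CG_self hB hbB)
    rw [hiff.mp rfl] at hg
    exact hg
  -- companion transports
  obtain ⟨a₁, ha₁⟩ := clique_gated hconn htri hk4 hA hAne w2
  have ha₁a : a₁ ≠ a := by
    intro h
    have hiff := hchWA.gate_iff hconn htri hquad hk4 hk32 hW hWne w2 w w2 w a₁ a
      (CG_self hW hw2W) (CG_self hW hwW) ha₁ hCGwA
    exact hw2w (hiff.mpr h)
  obtain ⟨b₁, hb₁⟩ := clique_gated hconn htri hk4 hB hBne w2
  have hb₁b : b₁ ≠ b := by
    intro h
    have hiff := hchWB.gate_iff hconn htri hquad hk4 hk32 hW hWne w2 w w2 w b₁ b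
      (CG_self hW hw2W) (CG_self hW hwW) hb₁ hCGwB
    exact hw2w (hiff.mpr h)
  -- w2 is adjacent to its partners
  have hw2a : G.dist w2 a = 2 :=
    dist_eq_two hconn (fun h => haW (by rw [← h]; exact hw2W))
      (fun h => (hnoAW w2 hw2W hw2w) h.symm) (hW.1 hw2W hwW hw2w) hwa
  have hadj_w2a₁ : G.Adj w2 a₁ := by
    have := ha₁.2 a haA (Ne.symm ha₁a)
    rw [hw2a] at this
    exact adj_of_dist_one (by omega)
  have hw2b : G.dist w2 b = 2 :=
    dist_eq_two hconn (fun h => hbW (by rw [← h]; exact hw2W))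
      (fun h => (hnoBW w2 hw2W hw2w) h.symm) (hW.1 hw2W hwW hw2w) hwb
  have hadj_w2b₁ : G.Adj w2 b₁ := by
    have := hb₁.2 b hbB (Ne.symm hb₁b)
    rw [hw2b] at this
    exact adj_of_dist_one (by omega)
  -- distance facts
  have hdab : G.dist a b = 2 := dist_eq_two hconn hab hanb hwa.symm hwb
  have hdab₁ : G.dist a b₁ = 3 := by
    have := hCGaB.2 b₁ hb₁.1 hb₁b
    rw [hdab] at this; omega
  have hdba₁ : G.dist b a₁ = 3 := by
    have h1 := hCGbA.2 a₁ ha₁.1 ha₁a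
    have h2 : G.dist b a = 2 := (SimpleGraph.dist_comm).trans hdab
    omega
  have ha₁b₁ : a₁ ≠ b₁ := by
    intro h
    have hadj : G.Adj b b₁ := hB.1 hbB hb₁.1 (Ne.symm hb₁b)
    rw [← h] at hadj
    have := dist_of_adj hadj
    rw [hdba₁] at this
    omega
  have hdtw2 : G.dist t w2 = 3 := by
    have := hCGtW.2 w2 hw2W hw2w
    rw [hdtw] at this; omega
  have hdta₁ : G.dist t a₁ = 2 := by
    have := hCGtA.2 a₁ ha₁.1 ha₁a
    rw [dist_of_adj hta] at this; omega
  have hdtb₁ : G.dist t b₁ = 2 := by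
    have := hCGtB.2 b₁ hb₁.1 hb₁b
    rw [dist_of_adj htb] at this; omega
  -- the quadrangle
  obtain ⟨h, hha₁, hhb₁, hhd⟩ := hquad t w2 a₁ b₁ hadj_w2a₁ hadj_w2b₁ ha₁b₁
    (by omega) (by omega)
  rw [hdtw2] at hhd
  have hth : G.Adj t h := adj_of_dist_one (by omega)
  have hnha : ¬ G.Adj h a := by
    intro hadj
    have hhA : h ∈ A := absorb hk4 hA haA ha₁.1 (Ne.symm ha₁a) hadj hha₁.symm
    have hhna : h ≠ a := hadj.ne
    have := hCGtA.2 h hhA hhna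
    rw [dist_of_adj hta] at this
    have h2 : G.dist t h = 1 := by omega
    omega
  have hhne_a : a ≠ h := by
    intro heq
    have : G.Adj b₁ a := by rw [heq]; exact hhb₁
    have h1 := dist_of_adj this.symm
    rw [hdab₁] at h1; omega
  have hopp : OppSquare G s(a₁, a) s(h, t) :=
    ⟨a₁, a, h, t, rfl, rfl, hA.1 ha₁.1 haA ha₁a, hth.symm, hha₁, hta.symm,
      (by
        intro hadj
        have h2 : G.dist t a₁ = 1 := by
          rw [SimpleGraph.dist_comm]; exact dist_of_adj hadj
        omega),
      fun hadj => hnha hadj.symm,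
      (by
        intro heq
        rw [heq, SimpleGraph.dist_self] at hdta₁
        omega),
      hhne_a⟩
  exact mem_NV_of_J'
    (J_step hJdef (hAJ a₁ ha₁.1 a haA ha₁a) (G.mem_edgeSet.mpr hth.symm) (Or.inr hopp))

end HSLsec

section Closure2

variable {J : Set (Sym2 V)} {e₀ : Sym2 V}

/-- Combined closure: a common neighbour `t` of two distinct vertices `z, w₂` of `N(J)`
which have a common neighbour `w ∈ N(J)` is in `N(J)`. -/
lemma Hloc (hconn : G.Connected) (htri : TriangleCondition G) (hquad : QuadrangleCondition G)
    (hk4 : NoK4Minus G) (hk32 : NoK32 G)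
    (hJdef : J = {f | f ∈ G.edgeSet ∧ HypRel G e₀ f})
    {z w₂ w t : V} (hz : z ∈ NV J) (hw₂ : w₂ ∈ NV J) (hwY : w ∈ NV J)
    (hwz : G.Adj w z) (hww₂ : G.Adj w w₂) (hzw₂ : z ≠ w₂)
    (htz : G.Adj t z) (htw₂ : G.Adj t w₂) : t ∈ NV J := by
  classical
  by_cases htweq : t = w
  · exact htweq ▸ hwY
  by_cases htw : G.Adj t w
  · exact Htri hconn htri hquad hk4 hk32 hJdef hz hwY hwz.symm htz htw
  by_cases hzadj : G.Adj z w₂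
  · exact Htri hconn htri hquad hk4 hk32 hJdef hz hw₂ hzadj htz htw₂
  by_cases hJwz : s(w, z) ∈ J
  · have hopp : OppSquare G s(w, z) s(w₂, t) :=
      ⟨w, z, w₂, t, rfl, rfl, hwz, htw₂.symm, hww₂, htz.symm,
        fun h => htw h.symm, hzadj, fun h => htweq h.symm, hzw₂⟩
    exact mem_NV_of_J'
      (J_step hJdef hJwz (G.mem_edgeSet.mpr htw₂.symm) (Or.inr hopp))
  by_cases hJww₂ : s(w, w₂) ∈ J
  · have hopp : OppSquare G s(w, w₂) s(z, t) :=
      ⟨w, w₂, z, t, rfl, rfl, hww₂, htz.symm, hwz, htw₂.symm,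
        fun h => htw h.symm, fun h => hzadj h.symm, fun h => htweq h.symm,
        Ne.symm hzw₂⟩
    exact mem_NV_of_J'
      (J_step hJdef hJww₂ (G.mem_edgeSet.mpr htz.symm) (Or.inr hopp))
  exact HSL hconn htri hquad hk4 hk32 hJdef hz hw₂ hwY hwz hww₂ hzadj hzw₂
    htz htw₂ htw htweq hJwz hJww₂

lemma edge_has_vertex (e : Sym2 V) : ∃ x, x ∈ e := by
  induction e using Sym2.ind with
  | _ a b => exact ⟨a, Sym2.mem_mk_left a b⟩

/-- connectivity of `N(J)`: any two vertices are joined by a walk inside `N(J)`. -/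
lemma NV_connected (hJdef : J = {f | f ∈ G.edgeSet ∧ HypRel G e₀ f})
    {u v : V} (hu : u ∈ NV J) (hv : v ∈ NV J) :
    ∃ p : G.Walk u v, ∀ x ∈ p.support, x ∈ NV J := by
  classical
  obtain ⟨f, hfJ, huf⟩ := hu
  obtain ⟨g, hgJ, hvg⟩ := hv
  have key : ∀ {f g : Sym2 V}, Relation.EqvGen (HRel G) f g → f ∈ J → g ∈ J →
      ∀ u ∈ f, ∀ v ∈ g, ∃ p : G.Walk u v, ∀ x ∈ p.support, x ∈ NV J := by
    intro f g heqv
    induction heqv with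
    | rel e e' hr =>
        intro he he' u hu' v hv'
        obtain ⟨heE, he'E, hor⟩ := hr
        have huNV : u ∈ NV J := ⟨e, he, hu'⟩
        have hvNV : v ∈ NV J := ⟨e', he', hv'⟩
        rcases hor with hsc | hopp
        · obtain ⟨C, hC, hEe, hEe'⟩ := hsc
          have huC : u ∈ C := hEe u hu'
          have hvC : v ∈ C := hEe' v hv'
          by_cases huv : u = v
          · subst huv
            exact ⟨SimpleGraph.Walk.nil, by
              intro x hx
              simp only [SimpleGraph.Walk.support_nil, List.mem_singleton] at hx
              exact hx ▸ huNV⟩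
          · refine ⟨SimpleGraph.Walk.cons (hC.1 huC hvC huv) SimpleGraph.Walk.nil, ?_⟩
            intro x hx
            simp only [SimpleGraph.Walk.support_cons, SimpleGraph.Walk.support_nil,
              List.mem_cons, List.mem_singleton] at hx
            rcases hx with rfl | rfl | h
            · exact huNV
            · exact hvNV
            · simp at h
        · obtain ⟨a, b, c, d, rfl, rfl, hab, hcd, hac, hbd, hnad, hnbc, had, hbc⟩ := hopp
          have haNV : a ∈ NV J := ⟨_, he, Sym2.mem_mk_left a b⟩
          have hbNV : b ∈ NV J := ⟨_, he, Sym2.mem_mk_right a b⟩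
          have hcNV : c ∈ NV J := ⟨_, he', Sym2.mem_mk_left c d⟩
          have hdNV : d ∈ NV J := ⟨_, he', Sym2.mem_mk_right c d⟩
          rcases Sym2.mem_iff.mp hu' with rfl | rfl <;> rcases Sym2.mem_iff.mp hv' with rfl | rfl
          · refine ⟨SimpleGraph.Walk.cons hac SimpleGraph.Walk.nil, ?_⟩
            intro x hx
            simp only [SimpleGraph.Walk.support_cons, SimpleGraph.Walk.support_nil,
              List.mem_cons, List.mem_singleton] at hx
            rcases hx with rfl | rfl | h
            · exact haNV
            · exact hcNV
            · simp at h
          · refine ⟨SimpleGraph.Walk.cons hac (SimpleGraph.Walk.cons hcd SimpleGraph.Walk.nil), ?_⟩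
            intro x hx
            simp only [SimpleGraph.Walk.support_cons, SimpleGraph.Walk.support_nil,
              List.mem_cons, List.mem_singleton] at hx
            rcases hx with rfl | rfl | rfl | h
            · exact haNV
            · exact hcNV
            · exact hdNV
            · simp at h
          · refine ⟨SimpleGraph.Walk.cons hbd (SimpleGraph.Walk.cons hcd.symm SimpleGraph.Walk.nil), ?_⟩
            intro x hx
            simp only [SimpleGraph.Walk.support_cons, SimpleGraph.Walk.support_nil,
              List.mem_cons, List.mem_singleton] at hx
            rcases hx with rfl | rfl | rfl | h
            · exact hbNV
            · exact hdNV
            · exact hcNV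
            · simp at h
          · refine ⟨SimpleGraph.Walk.cons hbd SimpleGraph.Walk.nil, ?_⟩
            intro x hx
            simp only [SimpleGraph.Walk.support_cons, SimpleGraph.Walk.support_nil,
              List.mem_cons, List.mem_singleton] at hx
            rcases hx with rfl | rfl | h
            · exact hbNV
            · exact hdNV
            · simp at h
    | refl e =>
        intro he _ u hu' v hv'
        have huNV : u ∈ NV J := ⟨e, he, hu'⟩
        have hvNV : v ∈ NV J := ⟨e, he, hv'⟩
        obtain ⟨u₂, rfl⟩ := Sym2.mem_iff_exists.mp hu'
        have hadj : G.Adj u u₂ := G.mem_edgeSet.mp (J_edge hJdef he)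
        rcases Sym2.mem_iff.mp hv' with rfl | rfl
        · exact ⟨SimpleGraph.Walk.nil, by
            intro x hx
            simp only [SimpleGraph.Walk.support_nil, List.mem_singleton] at hx
            exact hx ▸ huNV⟩
        · refine ⟨SimpleGraph.Walk.cons hadj SimpleGraph.Walk.nil, ?_⟩
          intro x hx
          simp only [SimpleGraph.Walk.support_cons, SimpleGraph.Walk.support_nil,
            List.mem_cons, List.mem_singleton] at hx
          rcases hx with rfl | rfl | h
          · exact huNV
          · exact hvNV
          · simp at h
    | symm e e' _ ih =>
        intro he' he u hu' v hv'
        obtain ⟨p, hp⟩ := ih he he' v hv' u hu'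
        refine ⟨p.reverse, fun x hx => hp x ?_⟩
        rwa [SimpleGraph.Walk.support_reverse, List.mem_reverse] at hx
    | trans e e' e'' h1 h2 ih1 ih2 =>
        intro he he'' u hu' v hv'
        have he' : e' ∈ J := (J_eqv hJdef h1).mp he
        obtain ⟨w₀, hw₀⟩ := edge_has_vertex e'
        obtain ⟨p1, hp1⟩ := ih1 he he' u hu' w₀ hw₀
        obtain ⟨p2, hp2⟩ := ih2 he' he'' w₀ hw₀ v hv'
        refine ⟨p1.append p2, fun x hx => ?_⟩
        rcases (SimpleGraph.Walk.mem_support_append_iff _ _).mp hx with h | h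
        · exact hp1 x h
        · exact hp2 x h
  have h1 : HypRel G e₀ f := by rw [hJdef] at hfJ; exact hfJ.2
  have h2 : HypRel G e₀ g := by rw [hJdef] at hgJ; exact hgJ.2
  exact key (Relation.EqvGen.trans _ _ _ (Relation.EqvGen.symm _ _ h1) h2) hfJ hgJ u huf v hvg

end Closure2

section Main

variable {J : Set (Sym2 V)} {e₀ : Sym2 V}

lemma gate_main (hconn : G.Connected) (htri : TriangleCondition G)
    (hquad : QuadrangleCondition G) (hk4 : NoK4Minus G) (hk32 : NoK32 G)
    (hJdef : J = {f | f ∈ G.edgeSet ∧ HypRel G e₀ f})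
    (x y : V) (hy : y ∈ NV J) (hmin : ∀ z ∈ NV J, G.dist x y ≤ G.dist x z) :
    ∀ n : ℕ, ∀ M : ℕ, ∀ z : V, ∀ p : G.Walk y z, p.length ≤ n →
      (∀ v ∈ p.support, v ∈ NV J) → G.dist x z ≤ M →
      G.dist x z = G.dist x y + G.dist y z ∧
        ∃ q : G.Walk y z, q.length = G.dist y z ∧ ∀ v ∈ q.support, v ∈ NV J := by
  intro n
  induction n using Nat.strong_induction_on with
  | _ n IHn =>
  intro M
  induction M using Nat.strong_induction_on with
  | _ M IHM =>
  intro z p hlen hsupp hdistM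
  by_cases hzy : z = y
  · subst hzy
    refine ⟨by simp [SimpleGraph.dist_self], SimpleGraph.Walk.nil, by simp [SimpleGraph.dist_self], ?_⟩
    intro v hv
    simp only [SimpleGraph.Walk.support_nil, List.mem_singleton] at hv
    exact hv ▸ hy
  cases p with
  | nil => exact absurd rfl hzy
  | cons hadj0 q0 =>
    obtain ⟨w, r, hwz, heq⟩ := SimpleGraph.Walk.exists_cons_eq_concat hadj0 q0
    have hlen0 : (SimpleGraph.Walk.cons hadj0 q0).length ≤ n := hlen
    have hlen' : r.length + 1 ≤ n := by
      have h2 := congrArg SimpleGraph.Walk.length heq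
      simp only [SimpleGraph.Walk.length_cons, SimpleGraph.Walk.length_concat] at h2
      simp only [SimpleGraph.Walk.length_cons] at hlen0
      omega
    have hsupp' : ∀ v ∈ r.support, v ∈ NV J := by
      intro v hv
      apply hsupp
      rw [heq, SimpleGraph.Walk.support_concat, List.mem_append]
      exact Or.inl hv
    have hzNV : z ∈ NV J := hsupp z (SimpleGraph.Walk.end_mem_support _)
    have hwNV : w ∈ NV J := hsupp' w (SimpleGraph.Walk.end_mem_support _)
    obtain ⟨hweq, qw, hqwlen, hqwsupp⟩ :=
      IHn (n - 1) (by omega) (G.dist x w) w r (by omega) hsupp' (le_refl _)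
    have hminz : G.dist x y ≤ G.dist x z := hmin z hzNV
    have hub : G.dist x z ≤ G.dist x w + 1 := dist_le_adj hconn hwz
    have hlb : G.dist x w ≤ G.dist x z + 1 := dist_le_adj hconn hwz.symm
    have htriz : G.dist x z ≤ G.dist x y + G.dist y z := hconn.dist_triangle
    have hyzle : G.dist y z ≤ G.dist y w + 1 := dist_le_adj hconn hwz
    have hdywle : G.dist y w ≤ r.length := SimpleGraph.dist_le r
    have hcases : G.dist x z = G.dist x w + 1 ∨ G.dist x z = G.dist x w ∨
        G.dist x z + 1 = G.dist x w := by omega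
    rcases hcases with hA | hB | hC
    -- Case A : z is one step further from x than w
    · have hyz : G.dist y z = G.dist y w + 1 := by omega
      refine ⟨by omega, qw.concat hwz, ?_, ?_⟩
      · rw [SimpleGraph.Walk.length_concat, hqwlen, hyz]
      · intro v hv
        rw [SimpleGraph.Walk.support_concat, List.mem_append] at hv
        rcases hv with h | h
        · exact hqwsupp v h
        · simp only [List.mem_singleton] at h
          exact h ▸ hzNV
    -- Case B : z and w are equidistant from x
    · obtain ⟨s, hzs, hws, hsd⟩ := htri x z w hwz.symm (by omega)
      have hsNV : s ∈ NV J :=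
        Htri hconn htri hquad hk4 hk32 hJdef hzNV hwNV hwz.symm hzs.symm hws.symm
      have hM1 : 1 ≤ M := by omega
      obtain ⟨hseq, qs, hqslen, hqssupp⟩ :=
        IHM (M - 1) (by omega) s (r.concat hws)
          (by rw [SimpleGraph.Walk.length_concat]; omega)
          (by
            intro v hv
            rw [SimpleGraph.Walk.support_concat, List.mem_append] at hv
            rcases hv with h | h
            · exact hsupp' v h
            · simp only [List.mem_singleton] at h
              exact h ▸ hsNV)
          (by omega)
      have h1 : G.dist y z ≤ G.dist y s + 1 := dist_le_adj hconn hzs.symm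
      have hyz : G.dist y z = G.dist y s + 1 := by omega
      refine ⟨by omega, qs.concat hzs.symm, ?_, ?_⟩
      · rw [SimpleGraph.Walk.length_concat, hqslen, hyz]
      · intro v hv
        rw [SimpleGraph.Walk.support_concat, List.mem_append] at hv
        rcases hv with h | h
        · exact hqssupp v h
        · simp only [List.mem_singleton] at h
          exact h ▸ hzNV
    -- Case C : z is one step closer to x than w
    · have hm'pos : 1 ≤ G.dist y w := by omega
      cases hqw : qw with
      | nil =>
          exfalso
          rw [hqw] at hqwlen
          simp only [SimpleGraph.Walk.length_nil] at hqwlen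
          omega
      | cons hadj2 q2 =>
        obtain ⟨w₂, r₂, hw₂w, heq₂⟩ := SimpleGraph.Walk.exists_cons_eq_concat hadj2 q2
        have hlen₂ : r₂.length + 1 = G.dist y w := by
          have h2 := congrArg SimpleGraph.Walk.length heq₂
          simp only [SimpleGraph.Walk.length_cons, SimpleGraph.Walk.length_concat] at h2
          rw [hqw] at hqwlen
          simp only [SimpleGraph.Walk.length_cons] at hqwlen
          omega
        have hsupp₂ : ∀ v ∈ r₂.support, v ∈ NV J := by
          intro v hv
          have : v ∈ (SimpleGraph.Walk.cons hadj2 q2).support := by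
            rw [heq₂, SimpleGraph.Walk.support_concat, List.mem_append]
            exact Or.inl hv
          rw [← hqw] at this
          exact hqwsupp v this
        have hw₂NV : w₂ ∈ NV J := hsupp₂ w₂ (SimpleGraph.Walk.end_mem_support _)
        have hdyw₂ : G.dist y w₂ + 1 = G.dist y w := by
          have h1 : G.dist y w₂ ≤ r₂.length := SimpleGraph.dist_le r₂
          have h2 : G.dist y w ≤ G.dist y w₂ + 1 := dist_le_adj hconn hw₂w
          omega
        obtain ⟨hw₂eq, qw₂, hqw₂len, hqw₂supp⟩ :=
          IHn (n - 1) (by omega) (G.dist x w₂) w₂ r₂ (by omega) hsupp₂ (le_refl _)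
        by_cases hzw₂ : z = w₂
        · subst hzw₂
          exact ⟨hw₂eq, qw₂, hqw₂len, hqw₂supp⟩
        · obtain ⟨s, hzs, hw₂s, hsd⟩ := hquad x w z w₂ hwz hw₂w.symm hzw₂
            (by omega) (by omega)
          have hsNV : s ∈ NV J := Hloc hconn htri hquad hk4 hk32 hJdef hzNV hw₂NV hwNV
            hwz hw₂w.symm hzw₂ hzs.symm hw₂s.symm
          obtain ⟨hseq, qs, hqslen, hqssupp⟩ :=
            IHn (n - 1) (by omega) (G.dist x s) s (r₂.concat hw₂s)
              (by rw [SimpleGraph.Walk.length_concat]; omega)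
              (by
                intro v hv
                rw [SimpleGraph.Walk.support_concat, List.mem_append] at hv
                rcases hv with h | h
                · exact hsupp₂ v h
                · simp only [List.mem_singleton] at h
                  exact h ▸ hsNV)
              (le_refl _)
          have h1 : G.dist y z ≤ G.dist y s + 1 := dist_le_adj hconn hzs.symm
          have hyz : G.dist y z = G.dist y s + 1 := by omega
          refine ⟨by omega, qs.concat hzs.symm, ?_, ?_⟩
          · rw [SimpleGraph.Walk.length_concat, hqslen, hyz]
          · intro v hv
            rw [SimpleGraph.Walk.support_concat, List.mem_append] at hv
            rcases hv with h | h
            · exact hqssupp v h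
            · simp only [List.mem_singleton] at h
              exact h ▸ hzNV

end Main

end QMAux

open QM in
/-- in a quasi-median graph, the neighborhood `N(J)` of a hyperplane `J`
(the subgraph generated by the edges of `J`, i.e. all their endpoints) is gated. -/
theorem hyperplane_neighborhood_gated
    (G : SimpleGraph V) (hqm : QuasiMedian G) (hconn : G.Connected)
    (J : Set (Sym2 V)) (hJ : IsHyperplane G J) :
    Gated G {v : V | ∃ e ∈ J, v ∈ e} := by
  classical
  obtain ⟨htri, hquad, hk4, hk32⟩ := hqm
  obtain ⟨e₀, he₀, hJdef⟩ := hJ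
  intro x
  have he₀J : e₀ ∈ J := by rw [hJdef]; exact ⟨he₀, Relation.EqvGen.refl e₀⟩
  obtain ⟨v₀, hv₀⟩ := QMAux.edge_has_vertex e₀
  have hv₀Y : v₀ ∈ QMAux.NV J := ⟨e₀, he₀J, hv₀⟩
  have hS : {n | ∃ z ∈ QMAux.NV J, G.dist x z = n}.Nonempty := ⟨_, v₀, hv₀Y, rfl⟩
  obtain ⟨y, hyY, hyd⟩ := Nat.sInf_mem hS
  have hmin : ∀ z ∈ QMAux.NV J, G.dist x y ≤ G.dist x z := by
    intro z hz
    rw [hyd]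
    exact Nat.sInf_le ⟨z, hz, rfl⟩
  refine ⟨y, hyY, ?_⟩
  intro z hz
  obtain ⟨p, hp⟩ := QMAux.NV_connected hJdef hyY hz
  exact (QMAux.gate_main hconn htri hquad hk4 hk32 hJdef x y hyY hmin p.length (G.dist x z)
    z p (le_refl _) hp (le_refl _)).1
end

section
/- Let X be a quasi-median graph, C a clique, J the hyperplane containing C, and a, b two vertices of X. Then the edge [a,b] belongs to J if and only if the gates of a and b onto C are distinct. -/
variable {V : Type*}

namespace QM

set_option linter.unusedSectionVars false

variable {G : SimpleGraph V} {C : Set V} {p : V → V}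

section Basics

variable (hconn : G.Connected) (hC : IsMaxClique G C) (hp : ∀ v : V, IsGate G C v (p v))

include hconn hC hp

lemma gate_mem (v : V) : p v ∈ C := (hp v).1

lemma gate_dist (v c : V) (hc : c ∈ C) :
    G.dist v c = G.dist v (p v) + G.dist (p v) c := (hp v).2 c hc

lemma adj_dist_le {u v : V} (h : G.Adj u v) (x : V) : G.dist u x ≤ G.dist v x + 1 := by
  have h1 : G.dist u x ≤ G.dist u v + G.dist v x := hconn.dist_triangle
  have h2 : G.dist u v = 1 := SimpleGraph.dist_eq_one_iff_adj.mpr h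
  omega

lemma gate_of_mem {v : V} (hv : v ∈ C) : p v = v := by
  have h := (hp v).2 v hv
  rw [SimpleGraph.dist_self] at h
  have h0 : G.dist v (p v) = 0 := by omega
  exact ((hconn.dist_eq_zero_iff).mp h0).symm

lemma dist_gate_other {v c : V} (hc : c ∈ C) (hne : p v ≠ c) :
    G.dist v c = G.dist v (p v) + 1 := by
  have h := gate_dist hconn hC hp v c hc
  have h1 : G.dist (p v) c = 1 :=
    SimpleGraph.dist_eq_one_iff_adj.mpr (hC.1 (gate_mem hconn hC hp v) hc hne)
  omega

lemma cross_level {a b : V} (h : G.Adj a b) (hne : p a ≠ p b) :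
    G.dist a (p a) = G.dist b (p b) := by
  have h1 := dist_gate_other hconn hC hp (gate_mem hconn hC hp b) hne
  have h2 := dist_gate_other hconn hC hp (gate_mem hconn hC hp a) hne.symm
  have h3 := adj_dist_le hconn hC hp h (p b)
  have h4 := adj_dist_le hconn hC hp h.symm (p a)
  omega

lemma gate_propagate {u v : V} (h : G.Adj u v)
    (hd : G.dist u (p v) + 1 = G.dist v (p v)) : p u = p v := by
  by_contra hne
  have h1 := cross_level hconn hC hp h hne
  have h2 := dist_gate_other hconn hC hp (gate_mem hconn hC hp v) hne
  omega

lemma descend {a c : V} (h : 0 < G.dist a c) :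
    ∃ a' : V, G.Adj a a' ∧ G.dist a' c + 1 = G.dist a c := by
  obtain ⟨w, hw⟩ := hconn.exists_walk_length_eq_dist a c
  cases w with
  | nil => simp at hw; simp at h
  | cons hadj q =>
    rename_i a'
    refine ⟨a', hadj, ?_⟩
    have h1 : G.dist a' c ≤ q.length := SimpleGraph.dist_le q
    have h2 : q.length + 1 = G.dist a c := by
      simpa [SimpleGraph.Walk.length_cons] using hw
    have h3 := adj_dist_le hconn hC hp hadj c
    omega

end Basics


section Triangle

variable (hconn : G.Connected) (hC : IsMaxClique G C) (hp : ∀ v : V, IsGate G C v (p v))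

include hconn hC hp

lemma tri_gate (htri : TriangleCondition G) (hk4 : NoK4Minus G)
    {x y z : V} (hxy : G.Adj x y) (hxz : G.Adj x z) (hyz : G.Adj y z)
    (hne : p x ≠ p y) : p z ≠ p x := by
  intro heq
  have hyx : G.dist y (p y) = G.dist x (p x) := (cross_level hconn hC hp hxy hne).symm
  have h1 : G.dist z (p y) = G.dist z (p z) + 1 :=
    dist_gate_other hconn hC hp (gate_mem hconn hC hp y) (by rw [heq]; exact hne)
  have h2 : G.dist y (p x) = G.dist y (p y) + 1 :=
    dist_gate_other hconn hC hp (gate_mem hconn hC hp x) (fun h => hne h.symm)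
  have h3 : G.dist z (p y) ≤ G.dist y (p y) + 1 := adj_dist_le hconn hC hp hyz.symm (p y)
  have h4 : G.dist y (p x) ≤ G.dist z (p x) + 1 := adj_dist_le hconn hC hp hyz (p x)
  have hzz : G.dist z (p x) = G.dist z (p z) := by rw [heq]
  have hm : G.dist z (p x) = G.dist x (p x) := by omega
  have hn1 : 1 ≤ G.dist x (p x) := by
    by_contra h
    have hx : x = p x := (hconn.dist_eq_zero_iff).mp (by omega)
    have hz : z = p x := (hconn.dist_eq_zero_iff).mp (by omega)
    exact hxz.ne (hx.trans hz.symm)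
  have e1 : G.dist (p x) x = G.dist x (p x) := SimpleGraph.dist_comm
  have e2 : G.dist (p x) z = G.dist z (p x) := SimpleGraph.dist_comm
  obtain ⟨t, hxt, hzt, ht⟩ := htri (p x) x z hxz (by omega)
  have e3 : G.dist (p x) t = G.dist t (p x) := SimpleGraph.dist_comm
  have hyt : ¬ G.Adj y t := by
    intro h
    have := adj_dist_le hconn hC hp h (p x)
    omega
  have hyne : y ≠ t := by
    intro h
    have h5 : G.dist y (p x) = G.dist t (p x) := by rw [h]
    omega
  exact hk4 ⟨y, t, x, z, hyne, hxz, hxy.symm, hyz, hxt.symm, hzt.symm, hyt⟩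

lemma clique_inv (htri : TriangleCondition G) (hk4 : NoK4Minus G)
    {D : Set V} (hD : G.IsClique D) {x y u v : V}
    (hx : x ∈ D) (hy : y ∈ D) (hu : u ∈ D) (hv : v ∈ D)
    (hxy : x ≠ y) (huv : u ≠ v) (hne : p x ≠ p y) : p u ≠ p v := by
  classical
  have key : ∀ w, w ∈ D → w ≠ x → w ≠ y → p w ≠ p x ∧ p w ≠ p y := by
    intro w hw hwx hwy
    exact ⟨tri_gate hconn hC hp htri hk4 (hD hx hy hxy) (hD hx hw (Ne.symm hwx))
        (hD hy hw (Ne.symm hwy)) hne,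
      tri_gate hconn hC hp htri hk4 (hD hy hx hxy.symm) (hD hy hw (Ne.symm hwy))
        (hD hx hw (Ne.symm hwx)) hne.symm⟩
  by_cases hux : u = x
  · subst hux
    by_cases hvy : v = y
    · subst hvy; exact hne
    · exact Ne.symm ((key v hv (Ne.symm huv) hvy).1)
  · by_cases huy : u = y
    · subst huy
      by_cases hvx : v = x
      · subst hvx; exact hne.symm
      · exact Ne.symm ((key v hv hvx (Ne.symm huv)).2)
    · by_cases hvx : v = x
      · subst hvx; exact (key u hu hux huy).1
      · by_cases hvy : v = y
        · subst hvy; exact (key u hu hux huy).2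
        · exact Ne.symm (tri_gate hconn hC hp htri hk4 (hD hu hx hux)
            (hD hu hv huv) (hD hx hv (Ne.symm hvx)) (key u hu hux huy).1)
end Triangle

section Square

variable (hconn : G.Connected) (hC : IsMaxClique G C) (hp : ∀ v : V, IsGate G C v (p v))

include hconn hC hp

set_option maxHeartbeats 1600000 in
lemma square_core (htri : TriangleCondition G) (hquad : QuadrangleCondition G)
    (hk4 : NoK4Minus G) (hk32 : NoK32 G) (μ : ℕ)
    (IH : ∀ x y z w : V, G.Adj x y → G.Adj z w → G.Adj x z → G.Adj y w →
      ¬ G.Adj x w → ¬ G.Adj y z → x ≠ w → y ≠ z → p z = p w →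
      G.dist z (p z) + G.dist w (p w) ≤ μ → p x = p y)
    {x y z w : V} (hxy : G.Adj x y) (hzw : G.Adj z w) (hxz : G.Adj x z)
    (hyw : G.Adj y w) (hxw : ¬ G.Adj x w) (hyz : ¬ G.Adj y z)
    (hxwne : x ≠ w) (hyzne : y ≠ z) (hg : p z = p w)
    (hsum : G.dist z (p z) + G.dist w (p w) ≤ μ + 1)
    (hne : p x ≠ p y) (hyg : p y ≠ p z) : False := by
  have hpwy : p y ≠ p w := by rw [← hg]; exact hyg
  have hlev_yw : G.dist y (p y) = G.dist w (p w) := cross_level hconn hC hp hyw hpwy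
  have hlev_xy : G.dist x (p x) = G.dist y (p y) := cross_level hconn hC hp hxy hne
  have hdyw : G.dist y (p w) = G.dist y (p y) + 1 :=
    dist_gate_other hconn hC hp (gate_mem hconn hC hp w) hpwy
  have hdwy : G.dist w (p y) = G.dist w (p w) + 1 :=
    dist_gate_other hconn hC hp (gate_mem hconn hC hp y) (Ne.symm hpwy)
  have hdxy : G.dist x (p y) = G.dist x (p x) + 1 :=
    dist_gate_other hconn hC hp (gate_mem hconn hC hp y) hne
  have hdyx : G.dist y (p x) = G.dist y (p y) + 1 :=
    dist_gate_other hconn hC hp (gate_mem hconn hC hp x) (Ne.symm hne)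
  by_cases hxg : p x = p z
  · -- Case I : the gate of x is g = p z = p w
    have hdxg : G.dist x (p z) = G.dist x (p x) := by rw [hxg]
    have hdyg : G.dist y (p z) = G.dist y (p w) := by rw [hg]
    have hdwg : G.dist w (p z) = G.dist w (p w) := by rw [hg]
    have b1 : G.dist z (p z) ≤ G.dist x (p z) + 1 := adj_dist_le hconn hC hp hxz.symm (p z)
    have b2 : G.dist x (p z) ≤ G.dist z (p z) + 1 := adj_dist_le hconn hC hp hxz (p z)
    by_cases hk : G.dist z (p z) + 1 = G.dist y (p y)
    · -- I-c : z is one level below x; K₃,₂ contradiction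
      have hdzy : G.dist z (p y) = G.dist z (p z) + 1 :=
        dist_gate_other hconn hC hp (gate_mem hconn hC hp y) (Ne.symm hyg)
      have c1 : G.dist (p y) y = G.dist y (p y) := SimpleGraph.dist_comm
      have c2 : G.dist (p y) x = G.dist x (p y) := SimpleGraph.dist_comm
      have c3 : G.dist (p y) z = G.dist z (p y) := SimpleGraph.dist_comm
      obtain ⟨t, hyt, hzt, ht⟩ := hquad (p y) x y z hxy hxz hyzne
        (by clear * - c1 c2 hdxy hlev_xy; omega)
        (by clear * - c3 c2 hdzy hk hdxy hlev_xy; omega)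
      have c4 : G.dist (p y) t = G.dist t (p y) := SimpleGraph.dist_comm
      have hxt : ¬ G.Adj x t := by
        intro h; have := adj_dist_le hconn hC hp h (p y)
        clear * - this c2 c4 ht; omega
      have hwt : ¬ G.Adj w t := by
        intro h; have := adj_dist_le hconn hC hp h (p y)
        clear * - this c2 c4 ht hdwy hlev_yw hdxy hlev_xy; omega
      have hxtne : x ≠ t := by
        intro h; have h5 : G.dist x (p y) = G.dist t (p y) := by rw [h]
        clear * - h5 c2 c4 ht; omega
      have hwtne : w ≠ t := by
        intro h; have h5 : G.dist w (p y) = G.dist t (p y) := by rw [h]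
        clear * - h5 c2 c4 ht hdxy hlev_xy hdwy hlev_yw; omega
      exact hk32 ⟨x, w, t, y, z, hxwne, hxtne, hwtne, hyzne, hxy, hxz, hyw.symm,
        hzw.symm, hyt.symm, hzt.symm, hxw, hxt, hwt, hyz⟩
    · -- I-ab : z at the level of x or above; descend and use the induction hypothesis
      have c1 : G.dist (p z) y = G.dist y (p z) := SimpleGraph.dist_comm
      have c2 : G.dist (p z) x = G.dist x (p z) := SimpleGraph.dist_comm
      have c3 : G.dist (p z) w = G.dist w (p z) := SimpleGraph.dist_comm
      obtain ⟨t, hxt, hwt, ht⟩ := hquad (p z) y x w hxy.symm hyw hxwne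
        (by clear * - c1 c2 hdyg hdyw hdxg hlev_xy; omega)
        (by clear * - c1 c3 hdwg hlev_yw hdyg hdyw; omega)
      have c4 : G.dist (p z) t = G.dist t (p z) := SimpleGraph.dist_comm
      have hpt : p t = p x := by
        apply gate_propagate hconn hC hp hxt.symm
        rw [hxg]
        clear * - ht c4 c2 c1 hdyg hdyw hdxg hlev_xy; omega
      have hyt : ¬ G.Adj y t := by
        intro h; have := adj_dist_le hconn hC hp h (p z)
        clear * - this c4 ht c1 hdyg hdyw; omega
      have hytne : y ≠ t := by
        intro h; have h5 : G.dist y (p z) = G.dist t (p z) := by rw [h]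
        clear * - h5 c4 ht c1 hdyg hdyw; omega
      have hwx : ¬ G.Adj w x := fun h => hxw h.symm
      have hsum' : G.dist t (p t) + G.dist x (p x) ≤ μ := by
        have h5 : G.dist t (p t) = G.dist t (p z) := by rw [hpt, hxg]
        clear * - h5 ht c4 c1 hdyg hdyw hlev_yw hlev_xy hsum hk b2 hdxg; omega
      have := IH w y t x hyw.symm hxt.symm hwt hxy.symm hwx hyt
        (Ne.symm hxwne) hytne hpt hsum'
      exact hpwy this.symm
  · -- Case III : the edge x-z also crosses
    have hzx : p z ≠ p x := Ne.symm hxg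
    have hlev_xz : G.dist x (p x) = G.dist z (p z) := cross_level hconn hC hp hxz hxg
    have hdxz : G.dist x (p z) = G.dist x (p x) + 1 :=
      dist_gate_other hconn hC hp (gate_mem hconn hC hp z) hxg
    have hdzx : G.dist z (p x) = G.dist z (p z) + 1 :=
      dist_gate_other hconn hC hp (gate_mem hconn hC hp x) hzx
    have hdyg : G.dist y (p z) = G.dist y (p w) := by rw [hg]
    have hdwg : G.dist w (p z) = G.dist w (p w) := by rw [hg]
    have hn1 : 1 ≤ G.dist y (p y) := by
      by_contra hn
      have hz0 : z = p z := (hconn.dist_eq_zero_iff).mp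
        (by clear * - hn hlev_xz hlev_xy; omega)
      have hw0 : w = p w := (hconn.dist_eq_zero_iff).mp
        (by clear * - hn hlev_yw; omega)
      exact hzw.ne (by rw [hz0, hw0, hg])
    have c1 : G.dist (p z) x = G.dist x (p z) := SimpleGraph.dist_comm
    have c2 : G.dist (p z) y = G.dist y (p z) := SimpleGraph.dist_comm
    obtain ⟨t, hxt, hyt, ht⟩ := htri (p z) x y hxy
      (by clear * - c1 c2 hdxz hlev_xy hdyg hdyw; omega)
    have c3 : G.dist (p z) t = G.dist t (p z) := SimpleGraph.dist_comm
    have hpt : p t = p z := by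
      by_cases hptx : p t = p x
      · exfalso
        have hnty : p t ≠ p y := by rw [hptx]; exact hne
        have h1 : G.dist t (p t) = G.dist y (p y) := cross_level hconn hC hp hyt.symm hnty
        have h2 : G.dist t (p z) = G.dist t (p t) + 1 :=
          dist_gate_other hconn hC hp (gate_mem hconn hC hp z) (by rw [hptx]; exact hxg)
        clear * - h1 h2 ht c3 c1 hdxz hlev_xy; omega
      · have h1 : G.dist t (p t) = G.dist x (p x) := cross_level hconn hC hp hxt.symm hptx
        have h2 : G.dist t (p z) = G.dist t (p t) + G.dist (p t) (p z) :=
          gate_dist hconn hC hp t (p z) (gate_mem hconn hC hp z)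
        have h0 : G.dist (p t) (p z) = 0 := by
          clear * - h1 h2 ht c3 c1 hdxz hlev_xy hlev_xz; omega
        exact (hconn.dist_eq_zero_iff).mp h0
    have hztne : z ≠ t := by
      intro h; rw [← h] at hyt; exact hyz hyt
    have hzt : ¬ G.Adj z t := by
      intro hadj
      exact tri_gate hconn hC hp htri hk4 hxz.symm hadj hxt hzx hpt
    have c4 : G.dist (p z) z = G.dist z (p z) := SimpleGraph.dist_comm
    obtain ⟨s, hzs, hts, hs⟩ := hquad (p z) x z t hxz hxt hztne
      (by clear * - c4 c1 hlev_xz hdxz hlev_xy; omega) ht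
    have c5 : G.dist (p z) s = G.dist s (p z) := SimpleGraph.dist_comm
    have hps : p s = p z := by
      apply gate_propagate hconn hC hp hzs.symm
      clear * - c5 hs c1 hdxz hlev_xz c4; omega
    have hxs : ¬ G.Adj x s := by
      intro h; have := adj_dist_le hconn hC hp h (p z)
      clear * - this c5 hs c1; omega
    have hxsne : x ≠ s := by
      intro h; have h5 : G.dist x (p z) = G.dist s (p z) := by rw [h]
      clear * - h5 c5 hs c1; omega
    have hsum' : G.dist t (p t) + G.dist s (p s) ≤ μ := by
      have e1 : G.dist t (p t) = G.dist t (p z) := by rw [hpt]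
      have e2 : G.dist s (p s) = G.dist s (p z) := by rw [hps]
      clear * - e1 e2 hsum hlev_yw hlev_xy hlev_xz ht c3 c1 hdxz hs c5; omega
    exact hxg (IH x z t s hxz hts hxt hzs hxs hzt hxsne hztne (hpt.trans hps.symm) hsum')

lemma square_gate (htri : TriangleCondition G) (hquad : QuadrangleCondition G)
    (hk4 : NoK4Minus G) (hk32 : NoK32 G) :
    ∀ μ : ℕ, ∀ x y z w : V, G.Adj x y → G.Adj z w → G.Adj x z → G.Adj y w →
      ¬ G.Adj x w → ¬ G.Adj y z → x ≠ w → y ≠ z → p z = p w →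
      G.dist z (p z) + G.dist w (p w) ≤ μ → p x = p y := by
  intro μ
  induction μ with
  | zero =>
    intro x y z w _ hzw _ _ _ _ _ _ hg hsum
    exfalso
    have hz0 : z = p z := (hconn.dist_eq_zero_iff).mp (by clear * - hsum; omega)
    have hw0 : w = p w := (hconn.dist_eq_zero_iff).mp (by clear * - hsum; omega)
    exact hzw.ne (by rw [hz0, hw0, hg])
  | succ μ IH =>
    intro x y z w hxy hzw hxz hyw hxw hyz hxwne hyzne hg hsum
    by_contra hne
    by_cases hyg : p y = p z
    · have hxg : p x ≠ p w := by
        rw [← hg]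
        intro h
        exact hne (h.trans hyg.symm)
      exact square_core hconn hC hp htri hquad hk4 hk32 μ IH hxy.symm hzw.symm hyw hxz
        hyz hxw hyzne hxwne hg.symm (by omega) (Ne.symm hne) hxg
    · exact square_core hconn hC hp htri hquad hk4 hk32 μ IH hxy hzw hxz hyw
        hxw hyz hxwne hyzne hg hsum hne hyg

end Square

section MainLemmas

variable (hconn : G.Connected) (hC : IsMaxClique G C) (hp : ∀ v : V, IsGate G C v (p v))

include hconn hC hp

lemma cross_in_J (hquad : QuadrangleCondition G) (hk4 : NoK4Minus G)
    {J : Set (Sym2 V)} {e₀ : Sym2 V}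
    (hJ : J = {f | f ∈ G.edgeSet ∧ HypRel G e₀ f})
    (hJC : CliqueIn G J C) :
    ∀ n : ℕ, ∀ a b : V, G.Adj a b → p a ≠ p b → G.dist a (p a) = n → s(a, b) ∈ J := by
  intro n
  induction n with
  | zero =>
    intro a b hab hne hd
    have ha : a = p a := (hconn.dist_eq_zero_iff).mp hd
    have hb : b = p b := (hconn.dist_eq_zero_iff).mp
      (by rw [← cross_level hconn hC hp hab hne]; exact hd)
    exact hJC.2.2 a (by rw [ha]; exact gate_mem hconn hC hp a)
      b (by rw [hb]; exact gate_mem hconn hC hp b) hab.ne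
  | succ n IH =>
    intro a b hab hne hd
    obtain ⟨a', haa', hda'⟩ := descend hconn hC hp (a := a) (c := p a) (by omega)
    have hpa' : p a' = p a := gate_propagate hconn hC hp haa'.symm hda'
    have hda'' : G.dist a' (p a') = n := by rw [hpa']; omega
    have hlev : G.dist a (p a) = G.dist b (p b) := cross_level hconn hC hp hab hne
    have hdab : G.dist a (p b) = G.dist a (p a) + 1 :=
      dist_gate_other hconn hC hp (gate_mem hconn hC hp b) hne
    have hpa'b : p a' ≠ p b := by rw [hpa']; exact hne
    have hda'b : G.dist a' (p b) = G.dist a' (p a') + 1 :=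
      dist_gate_other hconn hC hp (gate_mem hconn hC hp b) hpa'b
    have hba' : b ≠ a' := by
      intro h
      exact hpa'b (congrArg p h).symm
    have c1 : G.dist (p b) b = G.dist b (p b) := SimpleGraph.dist_comm
    have c2 : G.dist (p b) a = G.dist a (p b) := SimpleGraph.dist_comm
    have c3 : G.dist (p b) a' = G.dist a' (p b) := SimpleGraph.dist_comm
    obtain ⟨x, hbx, ha'x, hx⟩ := hquad (p b) a b a' hab haa' hba'
      (by clear * - c1 c2 hlev hdab hd; omega)
      (by clear * - c3 c2 hdab hda'b hda'' hd; omega)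
    have c4 : G.dist (p b) x = G.dist x (p b) := SimpleGraph.dist_comm
    have hpx : p x = p b := gate_propagate hconn hC hp hbx.symm
      (by clear * - c4 c2 c1 hx hdab hlev hd; omega)
    have hax : ¬ G.Adj a x := by
      intro h; have := adj_dist_le hconn hC hp h (p b)
      clear * - this c4 c2 hx hdab hd; omega
    have haxne : a ≠ x := by
      intro h; have h5 : G.dist a (p b) = G.dist x (p b) := by rw [h]
      clear * - h5 c4 c2 hx hdab hd; omega
    have hba'' : ¬ G.Adj b a' := by
      intro h
      exact hk4 ⟨a, x, b, a', haxne, h, hab, haa', hbx.symm, ha'x.symm, hax⟩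
    have hmem : s(a', x) ∈ J := IH a' x ha'x (by rw [hpa', hpx]; exact hne) hda''
    rw [hJ] at hmem ⊢
    refine ⟨(G.mem_edgeSet).mpr hab, ?_⟩
    refine Relation.EqvGen.trans _ _ _ hmem.2 (Relation.EqvGen.symm _ _ ?_)
    exact Relation.EqvGen.rel _ _ ⟨(G.mem_edgeSet).mpr hab, hmem.1,
      Or.inr ⟨a, b, a', x, rfl, rfl, hab, ha'x, haa', hbx, hax, hba'', haxne, hba'⟩⟩

omit hconn hC hp in
lemma edge_rep (f : Sym2 V) (hf : f ∈ G.edgeSet) : ∃ r s, f = s(r, s) ∧ G.Adj r s := by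
  revert hf
  induction f using Sym2.ind with
  | _ r s => intro hf; exact ⟨r, s, rfl, (G.mem_edgeSet).mp hf⟩

lemma hyprel_gate (hqm : QuasiMedian G) {e f : Sym2 V} (h : HypRel G e f) :
    (∃ u v, e = s(u, v) ∧ G.Adj u v ∧ p u ≠ p v) ↔
      (∃ u v, f = s(u, v) ∧ G.Adj u v ∧ p u ≠ p v) := by
  obtain ⟨htri, hquad, hk4, hk32⟩ := hqm
  have step : ∀ e f : Sym2 V,
      (e ∈ G.edgeSet ∧ f ∈ G.edgeSet ∧ (SameClique G e f ∨ OppSquare G e f)) →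
      (∃ u v, e = s(u, v) ∧ G.Adj u v ∧ p u ≠ p v) →
      (∃ u v, f = s(u, v) ∧ G.Adj u v ∧ p u ≠ p v) := by
    rintro e f ⟨he, hf, hrel⟩ ⟨u, v, rfl, hadj, hne⟩
    rcases hrel with hsc | hop
    · obtain ⟨D, hD, heD, hfD⟩ := hsc
      obtain ⟨r, s', rfl, hrs⟩ := edge_rep f hf
      refine ⟨r, s', rfl, hrs, ?_⟩
      exact clique_inv hconn hC hp htri hk4 hD.1
        (heD u (by simp)) (heD v (by simp)) (hfD r (by simp)) (hfD s' (by simp))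
        hadj.ne hrs.ne hne
    · obtain ⟨a, b, c, d, he', hf', hab, hcd, hac, hbd, had, hbc, hadne, hbcne⟩ := hop
      have hne' : p a ≠ p b := by
        rcases Sym2.eq_iff.mp he' with ⟨rfl, rfl⟩ | ⟨rfl, rfl⟩
        · exact hne
        · exact hne.symm
      subst hf'
      refine ⟨c, d, rfl, hcd, fun hpcd => hne' ?_⟩
      exact square_gate hconn hC hp htri hquad hk4 hk32
        (G.dist c (p c) + G.dist d (p d)) a b c d hab hcd hac hbd had hbc
        hadne hbcne hpcd le_rfl
  have stepsymm : ∀ e f : Sym2 V,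
      (e ∈ G.edgeSet ∧ f ∈ G.edgeSet ∧ (SameClique G e f ∨ OppSquare G e f)) →
      (f ∈ G.edgeSet ∧ e ∈ G.edgeSet ∧ (SameClique G f e ∨ OppSquare G f e)) := by
    rintro e f ⟨he, hf, hrel⟩
    refine ⟨hf, he, ?_⟩
    rcases hrel with ⟨D, hD, heD, hfD⟩ | ⟨a, b, c, d, he', hf', hab, hcd, hac, hbd,
      had, hbc, hadne, hbcne⟩
    · exact Or.inl ⟨D, hD, hfD, heD⟩
    · exact Or.inr ⟨c, d, a, b, hf', he', hcd, hab, hac.symm, hbd.symm,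
        (fun h => hbc h.symm), (fun h => had h.symm), hbcne.symm, hadne.symm⟩
  induction h with
  | rel x y hxy => exact ⟨step _ _ hxy, step _ _ (stepsymm _ _ hxy)⟩
  | refl x => exact Iff.rfl
  | symm x y hxy ih => exact ih.symm
  | trans x y z hxy hyz ih1 ih2 => exact ih1.trans ih2

end MainLemmas


end QM

open QM in
/-- in a quasi-median graph, an edge `[a,b]` belongs to the hyperplane `J`
containing a clique `C` if and only if the gates of `a` and `b` in `C` are distinct. -/
theorem edge_in_hyperplane_iff_gates_distinct
    (G : SimpleGraph V) (hqm : QuasiMedian G) (hconn : G.Connected)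
    (C : Set V) (hC : IsMaxClique G C)
    (p : V → V) (hp : ∀ v : V, IsGate G C v (p v))
    (J : Set (Sym2 V)) (hJ : IsHyperplane G J) (hJC : CliqueIn G J C)
    (a b : V) (hab : G.Adj a b) :
    s(a, b) ∈ J ↔ p a ≠ p b := by
  obtain ⟨e₀, he₀, rfl⟩ := hJ
  constructor
  · intro hmem
    obtain ⟨hedge, hrel⟩ := hmem
    obtain ⟨_, ⟨c, d, hcC, hdC, hcd⟩, hall⟩ := hJC
    have hcdJ := hall c hcC d hdC hcd
    have hrel' : HypRel G s(c, d) s(a, b) :=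
      Relation.EqvGen.trans _ _ _ (Relation.EqvGen.symm _ _ hcdJ.2) hrel
    have hpcd : p c ≠ p d := by
      rw [gate_of_mem hconn hC hp hcC, gate_of_mem hconn hC hp hdC]
      exact hcd
    obtain ⟨u, v, huv, hadj, hne⟩ :=
      (hyprel_gate hconn hC hp hqm hrel').mp ⟨c, d, rfl, hC.1 hcC hdC hcd, hpcd⟩
    rcases Sym2.eq_iff.mp huv with ⟨rfl, rfl⟩ | ⟨rfl, rfl⟩
    · exact hne
    · exact hne.symm
  · intro hne
    exact cross_in_J hconn hC hp hqm.2.1 hqm.2.2.1 rfl hJC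
      (G.dist a (p a)) a b hab hne rfl
end

section
/- Ping-pong lemma for graph products: Let G be a group acting on a set X, Γ a simplicial graph, and H = {H_v : v ∈ V(Γ)} a collection of subgroups of G whose union generates G, such that elements of H_u and H_v commute whenever u and v are adjacent in Γ. Suppose there exist subsets {X_v : v ∈ V(Γ)} of X and a point x0 ∈ X not in any X_v, satisfying: (1) if u,v are adjacent then g·X_u ⊆ X_u for every nontrivial g ∈ H_v; (2) if u,v are distinct and non-adjacent then g·X_u ⊆ X_v for every nontrivial g ∈ H_v; (3) for every u and every nontrivial g ∈ H_u, g·x0 ∈ X_u. Then the natural surjection from the graph product ΓH onto G is an isomorphism. -/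
/-- The commutation relators defining the graph product of the family of groups `M`
over the simplicial graph `Γ`, inside the free product `Monoid.CoprodI M`. -/
def graphProdRels {ι : Type*} (Γ : SimpleGraph ι) (M : ι → Type*) [∀ i, Group (M i)] :
    Set (Monoid.CoprodI M) :=
  {x | ∃ (i j : ι) (_ : Γ.Adj i j) (g : M i) (h : M j),
    x = Monoid.CoprodI.of g * Monoid.CoprodI.of h *
      (Monoid.CoprodI.of g)⁻¹ * (Monoid.CoprodI.of h)⁻¹}

/-- The graph product `ΓM` of a family of groups over a simplicial graph: the quotient
of the free product by the normal closure of the commutation relators. -/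
abbrev GraphProduct {ι : Type*} (Γ : SimpleGraph ι) (M : ι → Type*) [∀ i, Group (M i)] :=
  Monoid.CoprodI M ⧸ Subgroup.normalClosure (graphProdRels Γ M)

section GPAux

variable {ι : Type*} (Γ : SimpleGraph ι) {M : ι → Type*} [∀ i, Group (M i)]

/-- `GPCanSee Γ i w` : there is a letter of vertex `i` in `w` that can be shuffled to the
front of `w` using only commutations with letters of adjacent vertices. -/
def GPCanSee (i : ι) : List ((j : ι) × M j) → Prop
  | [] => False
  | b :: w => b.1 = i ∨ (Γ.Adj i b.1 ∧ GPCanSee i w)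

/-- A word is graph-reduced. -/
def GPRed : List ((j : ι) × M j) → Prop
  | [] => True
  | a :: w => a.2 ≠ 1 ∧ ¬ GPCanSee Γ a.1 w ∧ GPRed w

variable {K : Type*} [Group K] (f : ∀ i, M i →* K)

def GPprod (w : List ((j : ι) × M j)) : K := (w.map fun a => f a.1 a.2).prod

@[simp] lemma GPprod_nil : GPprod f ([] : List ((j : ι) × M j)) = 1 := rfl

@[simp] lemma GPprod_cons (a : (j : ι) × M j) (w : List ((j : ι) × M j)) :
    GPprod f (a :: w) = f a.1 a.2 * GPprod f w := by
  simp [GPprod]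

lemma GPextract
    (hf : ∀ i j, Γ.Adj i j → ∀ (g : M i) (h : M j), f i g * f j h = f j h * f i g)
    (v : ι) : ∀ w, GPRed Γ w → GPCanSee Γ v w →
    ∃ (g : M v) (w' : List ((j : ι) × M j)), GPRed Γ (⟨v, g⟩ :: w') ∧
      GPprod f w = f v g * GPprod f w' ∧
      (∀ j, Γ.Adj j v → GPCanSee Γ j w' → GPCanSee Γ j w) ∧
      w'.length + 1 = w.length := by
  intro w
  induction w with
  | nil => intro _ h; cases h
  | cons a t ih =>
    obtain ⟨i', a2⟩ := a
    intro hred hsee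
    obtain ⟨ha1, hna, hrt⟩ := hred
    rcases hsee with h | ⟨hadj, hst⟩
    · dsimp at h; subst h
      exact ⟨a2, t, ⟨ha1, hna, hrt⟩, by simp, fun j hj hs => Or.inr ⟨hj, hs⟩, rfl⟩
    · obtain ⟨g, t', hred', hprod', hmono', hlen'⟩ := ih hrt hst
      obtain ⟨hg1, hg2, hg3⟩ := hred'
      refine ⟨g, ⟨i', a2⟩ :: t', ⟨hg1, ?_, ha1, ?_, hg3⟩, ?_, ?_, ?_⟩
      · rintro (h | ⟨h1, h2⟩)
        · exact hadj.ne' h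
        · exact hg2 h2
      · intro h
        exact hna (hmono' i' hadj.symm h)
      · rw [GPprod_cons, hprod', ← mul_assoc, hf i' v hadj.symm a2 g, mul_assoc, GPprod_cons]
      · rintro j hj (h | ⟨h1, h2⟩)
        · exact Or.inl h
        · exact Or.inr ⟨h1, hmono' j hj h2⟩
      · simp only [List.length_cons] at *
        omega

lemma GPprepend
    (hf : ∀ i j, Γ.Adj i j → ∀ (g : M i) (h : M j), f i g * f j h = f j h * f i g)
    (w : List ((j : ι) × M j)) (hred : GPRed Γ w) (i : ι) (g : M i) :
    ∃ w₂, GPRed Γ w₂ ∧ GPprod f w₂ = f i g * GPprod f w := by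
  by_cases hg : g = 1
  · exact ⟨w, hred, by simp [hg]⟩
  by_cases hsee : GPCanSee Γ i w
  · obtain ⟨a, w', hared, haprod, -, -⟩ := GPextract Γ f hf i w hred hsee
    obtain ⟨ha2, hnsee, hred'⟩ := hared
    by_cases hga : g * a = 1
    · exact ⟨w', hred', by
        rw [haprod, ← mul_assoc, ← map_mul, hga, map_one, one_mul]⟩
    · exact ⟨⟨i, g * a⟩ :: w', ⟨hga, hnsee, hred'⟩, by
        rw [GPprod_cons, haprod, map_mul, mul_assoc]⟩
  · exact ⟨⟨i, g⟩ :: w, ⟨hg, hsee, hred⟩, by rw [GPprod_cons]⟩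

lemma GPfold
    (hf : ∀ i j, Γ.Adj i j → ∀ (g : M i) (h : M j), f i g * f j h = f j h * f i g) :
    ∀ (u : List ((j : ι) × M j)) (w), GPRed Γ w →
      ∃ w₂, GPRed Γ w₂ ∧ GPprod f w₂ = GPprod f u * GPprod f w := by
  intro u
  induction u with
  | nil => exact fun w h => ⟨w, h, by simp⟩
  | cons a u' ih =>
    intro w h
    obtain ⟨w₁, h₁, hp₁⟩ := ih w h
    obtain ⟨w₂, h₂, hp₂⟩ := GPprepend Γ f hf w₁ h₁ a.1 a.2
    exact ⟨w₂, h₂, by rw [hp₂, hp₁, GPprod_cons, mul_assoc]⟩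

end GPAux

section GPPing

variable {G X ι : Type*} [Group G] [MulAction G X]

lemma GPpingpong (Γ : SimpleGraph ι) (H : ι → Subgroup G)
    (hcomm : ∀ i j, Γ.Adj i j → ∀ g ∈ H i, ∀ h ∈ H j, g * h = h * g)
    (Xv : ι → Set X) (x₀ : X)
    (h1 : ∀ i j, Γ.Adj i j → ∀ g ∈ H j, g ≠ 1 → ∀ x ∈ Xv i, g • x ∈ Xv i)
    (h2 : ∀ i j, i ≠ j → ¬ Γ.Adj i j → ∀ g ∈ H j, g ≠ 1 → ∀ x ∈ Xv i, g • x ∈ Xv j)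
    (h3 : ∀ i, ∀ g ∈ H i, g ≠ 1 → g • x₀ ∈ Xv i) :
    ∀ (n : ℕ) (w : List ((j : ι) × ↥(H j))), w.length ≤ n → GPRed Γ w →
      ∀ v, GPCanSee Γ v w → GPprod (fun i => (H i).subtype) w • x₀ ∈ Xv v := by
  have hf : ∀ i j, Γ.Adj i j → ∀ (g : ↥(H i)) (h : ↥(H j)),
      (H i).subtype g * (H j).subtype h = (H j).subtype h * (H i).subtype g :=
    fun i j hij g h => hcomm i j hij g g.2 h h.2
  intro n
  induction n with
  | zero =>
    intro w hlen _ v hsee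
    rw [List.length_eq_zero_iff.1 (Nat.le_zero.1 hlen)] at hsee
    cases hsee
  | succ n ih =>
    intro w hlen hred v hsee
    obtain ⟨g, w', hred', hprod', -, hlen'⟩ :=
      GPextract Γ (fun i => (H i).subtype) hf v w hred hsee
    obtain ⟨hg, hnsee, hredw'⟩ := hred'
    have hgG : ((g : G)) ≠ 1 := by simpa using hg
    rw [hprod']
    cases w' with
    | nil =>
      rw [GPprod_nil, mul_one]
      exact h3 v (g : G) g.2 hgG
    | cons b w'' =>
      have hlw : (b :: w'').length ≤ n := by
        rw [← hlen'] at hlen; omega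
      by_cases hA : ∃ j, GPCanSee Γ j (b :: w'') ∧ ¬ Γ.Adj v j
      · obtain ⟨j, hjsee, hjadj⟩ := hA
        have hjv : j ≠ v := fun h => hnsee (h ▸ hjsee)
        have hy := ih (b :: w'') hlw hredw' j hjsee
        rw [mul_smul]
        exact h2 j v hjv (fun h => hjadj h.symm) (g : G) g.2 hgG _ hy
      · push_neg at hA
        have hadjb : Γ.Adj v b.1 := hA b.1 (Or.inl rfl)
        obtain ⟨hb1, hb2, hb3⟩ := hredw'
        have hredw3 : GPRed Γ (⟨v, g⟩ :: w'') :=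
          ⟨hg, fun h => hnsee (Or.inr ⟨hadjb, h⟩), hb3⟩
        have hlw3 : (⟨v, g⟩ :: w'' : List ((j : ι) × ↥(H j))).length ≤ n := by
          simp only [List.length_cons] at hlw ⊢; omega
        have hy := ih (⟨v, g⟩ :: w'') hlw3 hredw3 v (Or.inl rfl)
        rw [GPprod_cons] at hy
        rw [GPprod_cons, ← mul_assoc, hf v b.1 hadjb g b.2, mul_assoc, mul_smul]
        refine h1 v b.1 hadjb (b.2 : G) b.2.2 (by simpa using hb1) _ hy

end GPPing


/-- ping-pong lemma for graph products. Under the ping-pong hypotheses,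
the natural surjection from the graph product of the subgroups `H v` onto `G`
(i.e. any homomorphism from the graph product restricting to the inclusions on the
vertex groups) is an isomorphism. -/
theorem graph_product_ping_pong {G X ι : Type*} [Group G] [MulAction G X]
    (Γ : SimpleGraph ι) (H : ι → Subgroup G)
    (hgen : Subgroup.closure (⋃ i, (H i : Set G)) = ⊤)
    (hcomm : ∀ i j, Γ.Adj i j → ∀ g ∈ H i, ∀ h ∈ H j, g * h = h * g)
    (Xv : ι → Set X) (x₀ : X) (hx₀ : ∀ i, x₀ ∉ Xv i)
    (h1 : ∀ i j, Γ.Adj i j → ∀ g ∈ H j, g ≠ 1 → ∀ x ∈ Xv i, g • x ∈ Xv i)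
    (h2 : ∀ i j, i ≠ j → ¬ Γ.Adj i j → ∀ g ∈ H j, g ≠ 1 → ∀ x ∈ Xv i, g • x ∈ Xv j)
    (h3 : ∀ i, ∀ g ∈ H i, g ≠ 1 → g • x₀ ∈ Xv i)
    (φ : GraphProduct Γ (fun i => ↥(H i)) →* G)
    (hφ : ∀ (i : ι) (g : ↥(H i)),
      φ (QuotientGroup.mk (Monoid.CoprodI.of g)) = (g : G)) :
    Function.Bijective φ := by
  classical
  set N := Subgroup.normalClosure (graphProdRels Γ (fun i => ↥(H i))) with hN
  let mkh : Monoid.CoprodI (fun i => ↥(H i)) →* GraphProduct Γ (fun i => ↥(H i)) :=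
    QuotientGroup.mk' N
  let fq : ∀ i, ↥(H i) →* GraphProduct Γ (fun i => ↥(H i)) :=
    fun i => mkh.comp (Monoid.CoprodI.of (M := fun i => ↥(H i)) (i := i))
  have hfq : ∀ i j, Γ.Adj i j → ∀ (g : ↥(H i)) (h : ↥(H j)),
      fq i g * fq j h = fq j h * fq i g := by
    intro i j hij g h
    rw [← commutatorElement_eq_one_iff_mul_comm]
    have hrel : ((Monoid.CoprodI.of (M := fun i => ↥(H i))) g *
        (Monoid.CoprodI.of (M := fun i => ↥(H i))) h *
        ((Monoid.CoprodI.of (M := fun i => ↥(H i))) g)⁻¹ *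
        ((Monoid.CoprodI.of (M := fun i => ↥(H i))) h)⁻¹)
        ∈ graphProdRels Γ (fun i => ↥(H i)) := ⟨i, j, hij, g, h, rfl⟩
    open scoped commutatorElement in
    have heq : ⁅fq i g, fq j h⁆ = mkh ⁅(Monoid.CoprodI.of (M := fun i => ↥(H i))) g,
        (Monoid.CoprodI.of (M := fun i => ↥(H i))) h⁆ :=
      (map_commutatorElement mkh _ _).symm
    rw [heq]
    exact (QuotientGroup.eq_one_iff _).2 (Subgroup.subset_normalClosure hrel)
  have hφf : ∀ w : List ((j : ι) × ↥(H j)),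
      φ (GPprod fq w) = GPprod (fun i => (H i).subtype) w := by
    intro w
    induction w with
    | nil => simp
    | cons a t iht =>
      rw [GPprod_cons, map_mul, iht, GPprod_cons]
      congr 1
      exact hφ a.1 a.2
  have hrepr : ∀ x : Monoid.CoprodI (fun i => ↥(H i)),
      ∃ w, GPRed Γ w ∧ GPprod fq w = mkh x := by
    intro x
    induction x using Monoid.CoprodI.induction_on with
    | one => exact ⟨[], trivial, by simp⟩
    | of i g =>
      obtain ⟨w, hw, hp⟩ := GPprepend Γ fq hfq [] trivial i g
      exact ⟨w, hw, by rw [hp]; simp; rfl⟩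
    | mul x y hx hy =>
      obtain ⟨wx, hwx, hpx⟩ := hx
      obtain ⟨wy, hwy, hpy⟩ := hy
      obtain ⟨w, hw, hp⟩ := GPfold Γ fq hfq wx wy hwy
      exact ⟨w, hw, by rw [hp, hpx, hpy, map_mul]⟩
  constructor
  · rw [injective_iff_map_eq_one]
    intro q hq
    obtain ⟨x, rfl⟩ := QuotientGroup.mk'_surjective N q
    obtain ⟨w, hwred, hwprod⟩ := hrepr x
    have hG1 : GPprod (fun i => (H i).subtype) w = 1 := by
      rw [← hφf, hwprod]; exact hq
    cases w with
    | nil => rw [← hwprod]; simp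
    | cons a t =>
      exfalso
      have := GPpingpong Γ H hcomm Xv x₀ h1 h2 h3 (a :: t).length (a :: t) le_rfl
        hwred a.1 (Or.inl rfl)
      rw [hG1, one_smul] at this
      exact hx₀ a.1 this
  · rw [← MonoidHom.range_eq_top, eq_top_iff, ← hgen, Subgroup.closure_le]
    rintro g hg
    simp only [Set.mem_iUnion, SetLike.mem_coe] at hg
    obtain ⟨i, hgi⟩ := hg
    exact ⟨QuotientGroup.mk (Monoid.CoprodI.of (⟨g, hgi⟩ : ↥(H i))), hφ i ⟨g, hgi⟩⟩
end
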